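/- arXiv:1911.10146 — 6 statements merged into one kernel-verified Lean document; each statement's English description precedes it below -/
import Mathlib

section
/- For integers n and k with 1 ≤ k ≤ n−1 and every integer t ≥ 0, the number of vectors y ∈ {0,1,…,t}^n with y_1 + ⋯ + y_n = k·t equals Σ_{j=0}^{k−1} (−1)^j · C(n,j) · C((k−j)t + n − 1 − j, n − 1), where C(a,b) denotes the binomial coefficient (the identity is an equality of integers). -/
open Finset Polynomial

/-- Number of lattice points of the `t`-th dilate of the hypersimplex `Δ_{k,n}`:
vectors `y ∈ {0,1,…,t}^n` with `y 0 + ⋯ + y (n-1) = k*t`. -/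
def latticeCount (n k t : ℕ) : ℕ :=
  ((Fintype.piFinset fun _ : Fin n => Finset.range (t + 1)).filter
    fun y => ∑ i, y i = k * t).card

/-- The weight of a linearly ordered block (given as a list): the number of its
entries that are strictly smaller than its first entry. -/
def blockWeight (b : List ℕ) : ℕ := b.countP fun x => decide (x < b.headI)

/-- `P` is a partition of `{1,…,n}` into `m` linearly ordered blocks: a set of `m`
nonempty duplicate-free lists, pairwise disjoint, whose entries cover `{1,…,n}`. -/
def IsLOPartition (n m : ℕ) (P : Finset (List ℕ)) : Prop :=
  P.card = m ∧
  (∀ b ∈ P, b ≠ [] ∧ b.Nodup) ∧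
  (∀ b ∈ P, ∀ c ∈ P, b ≠ c → ∀ x ∈ b, x ∉ c) ∧
  ∀ x : ℕ, (∃ b ∈ P, x ∈ b) ↔ x ∈ Finset.Icc 1 n

/-- The weight of a linearly ordered partition: sum of the weights of its blocks. -/
def partWeight (P : Finset (List ℕ)) : ℕ := ∑ b ∈ P, blockWeight b

/-- The Lah number `L(n,m)`: number of partitions of `{1,…,n}` into `m` linearly
ordered blocks. -/
noncomputable def lah (n m : ℕ) : ℕ := Nat.card {P : Finset (List ℕ) // IsLOPartition n m P}

/-- The weighted Lah number `W(ℓ,n,m)`: number of partitions of `{1,…,n}` into `m`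
linearly ordered blocks having weight `ℓ` (zero for negative `ℓ`). -/
noncomputable def weightedLah (ℓ : ℤ) (n m : ℕ) : ℕ :=
  Nat.card {P : Finset (List ℕ) // IsLOPartition n m P ∧ (partWeight P : ℤ) = ℓ}

/-- Unsigned Stirling number of the first kind `⟦a,b⟧`: number of permutations of a
set with `a` elements having exactly `b` cycles (fixed points count as cycles). -/
noncomputable def stirling1 (a b : ℕ) : ℕ :=
  Nat.card {σ : Equiv.Perm (Fin a) // σ.cycleType.card + (a - σ.support.card) = b}

/-- Unsigned Stirling number of the first kind with the convention that it vanishes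
on negative arguments. -/
noncomputable def stirlingZ (a b : ℤ) : ℤ :=
  if 0 ≤ a ∧ 0 ≤ b then stirling1 a.toNat b.toNat else 0

/-- Eulerian number `A(m,j)`: number of permutations of `{1,…,m}` with exactly `j`
descents, `A(0,0) = 1`. -/
def eulerian : ℕ → ℕ → ℕ
  | 0, 0 => 1
  | 0, _ + 1 => 0
  | _ + 1, 0 => 1
  | m + 1, j + 1 => (j + 2) * eulerian m (j + 1) + (m - j) * eulerian m j

/-- Katzman's formula: `E_{k,n}(t) = Σ_{j=0}^{k-1} (-1)^j C(n,j) binom((k-j)t+n-1-j, n-1)`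
as a polynomial in `t` over `ℚ`. -/
noncomputable def EhrhartHyp (k n : ℕ) : Polynomial ℚ :=
  (((n - 1).factorial : ℚ))⁻¹ • ∑ j ∈ Finset.range k,
    ((-1 : ℚ) ^ j * (n.choose j : ℚ)) •
      ∏ i ∈ Finset.Icc 1 (n - 1), (C ((k : ℚ) - (j : ℚ)) * X + C ((i : ℚ) - (j : ℚ)))

lemma fiber_card (n m i : ℕ) (hi : i < m + 1) :
    ((Finset.Nat.antidiagonalTuple (n+1) m).filter (fun y => y 0 = i)).card
      = (Finset.Nat.antidiagonalTuple n (m - i)).card := by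
  apply Finset.card_bij' (fun y _ => Fin.tail y) (fun z _ => Fin.cons i z)
  case hi =>
    intro y hy
    simp only [Finset.mem_filter, Finset.Nat.mem_antidiagonalTuple, Fin.sum_univ_succ] at hy
    rw [Finset.Nat.mem_antidiagonalTuple]
    simp only [Fin.tail]
    omega
  case hj =>
    intro z hz
    rw [Finset.Nat.mem_antidiagonalTuple] at hz
    simp only [Finset.mem_filter, Finset.Nat.mem_antidiagonalTuple, Fin.sum_univ_succ,
      Fin.cons_zero, Fin.cons_succ, and_true]
    omega
  case left_inv =>
    intro y hy
    simp only [Finset.mem_filter] at hy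
    rw [← hy.2]
    exact Fin.cons_self_tail y
  case right_inv =>
    intro z _
    simp [Fin.tail_cons]

lemma hockey (w m : ℕ) : ∑ j ∈ Finset.range (m+1), (w + j).choose w = (w + m + 1).choose (w+1) := by
  induction m with
  | zero => simp
  | succ s ih =>
    rw [Finset.sum_range_succ, ih]
    have h1 : w + (s+1) = (w + s + 1) := by omega
    rw [h1]
    conv_rhs => rw [Nat.choose_succ_succ]
    simp only [Nat.succ_eq_add_one]
    omega

lemma card_adt : ∀ (n m : ℕ), (Finset.Nat.antidiagonalTuple n m).card = (m + n - 1).choose m := by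
  intro n
  induction n with
  | zero =>
    intro m
    cases m with
    | zero => decide
    | succ s =>
      rw [Nat.choose_eq_zero_of_lt (by omega), Finset.card_eq_zero,
        Finset.eq_empty_iff_forall_notMem]
      intro x hx
      rw [Finset.Nat.mem_antidiagonalTuple] at hx
      simp at hx
  | succ n ih =>
    intro m
    have key : (Finset.Nat.antidiagonalTuple (n+1) m).card
        = ∑ i ∈ Finset.range (m + 1),
          ((Finset.Nat.antidiagonalTuple (n+1) m).filter (fun y => y 0 = i)).card := by
      apply Finset.card_eq_sum_card_fiberwise
      intro y hy
      rw [Finset.mem_coe, Finset.Nat.mem_antidiagonalTuple] at hy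
      simp only [Finset.mem_coe, Finset.mem_range]
      have := Finset.single_le_sum (f := y) (fun i _ => Nat.zero_le _) (Finset.mem_univ 0)
      omega
    rw [key]; clear key
    calc ∑ i ∈ Finset.range (m+1),
          ((Finset.Nat.antidiagonalTuple (n+1) m).filter (fun y => y 0 = i)).card
        = ∑ i ∈ Finset.range (m+1), (m - i + n - 1).choose (m - i) := by
          refine Finset.sum_congr rfl fun i hi => ?_
          rw [fiber_card n m i (Finset.mem_range.mp hi), ih]
      _ = ∑ j ∈ Finset.range (m+1), (j + n - 1).choose j := by
          rw [← Finset.sum_range_reflect (fun x => (x + n - 1).choose x) (m+1)]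
          refine Finset.sum_congr rfl fun j hj => ?_
          have hj' := Finset.mem_range.mp hj
          have : m + 1 - 1 - j = m - j := by omega
          rw [this]
      _ = (m + (n + 1) - 1).choose m := by
          cases n with
          | zero =>
            rw [Finset.sum_eq_single 0]
            · simp
            · intro j _ hj
              exact Nat.choose_eq_zero_of_lt (by omega)
            · simp
          | succ w =>
            have h3 : ∀ j ∈ Finset.range (m+1), (j + (w+1) - 1).choose j = (w + j).choose w := by
              intro j _
              have h1 : j + (w+1) - 1 = w + j := by omega
              rw [h1, Nat.add_comm w j, Nat.choose_symm_add]
            rw [Finset.sum_congr rfl h3, hockey]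
            have h6 : m + (w + 1 + 1) - 1 = w + m + 1 := by omega
            rw [h6]
            have h7 : w + m + 1 = (w + 1) + m := by omega
            rw [h7, Nat.choose_symm_add]


lemma cardB (n t m : ℕ) (S : Finset (Fin n)) :
    ((Finset.Nat.antidiagonalTuple n m).filter (fun y => ∀ i ∈ S, t + 1 ≤ y i)).card
      = if S.card * (t+1) ≤ m
          then (Finset.Nat.antidiagonalTuple n (m - S.card * (t+1))).card else 0 := by
  have hsum : ∑ i : Fin n, (if i ∈ S then t + 1 else 0) = S.card * (t+1) := by
    rw [Finset.sum_ite_mem, Finset.univ_inter, Finset.sum_const, smul_eq_mul]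
  split_ifs with hc
  · apply Finset.card_bij' (fun y _ => fun i => y i - (if i ∈ S then t + 1 else 0))
      (fun z _ => fun i => z i + (if i ∈ S then t + 1 else 0))
    case pos.hi =>
      intro y hy
      simp only [Finset.mem_filter, Finset.Nat.mem_antidiagonalTuple] at hy
      rw [Finset.Nat.mem_antidiagonalTuple]
      rw [Finset.sum_tsub_distrib _ (fun i _ => by
        split_ifs with h
        · exact hy.2 i h
        · exact Nat.zero_le _)]
      rw [hy.1, hsum]
    case pos.hj =>
      intro z hz
      rw [Finset.Nat.mem_antidiagonalTuple] at hz
      simp only [Finset.mem_filter, Finset.Nat.mem_antidiagonalTuple]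
      constructor
      · rw [Finset.sum_add_distrib, hz, hsum]
        omega
      · intro i hi
        simp [hi]
    case pos.left_inv =>
      intro y hy
      simp only [Finset.mem_filter, Finset.Nat.mem_antidiagonalTuple] at hy
      funext i
      by_cases h : i ∈ S
      · simp only [h, if_pos]
        exact Nat.sub_add_cancel (hy.2 i h)
      · simp [h]
    case pos.right_inv =>
      intro z _
      funext i
      by_cases h : i ∈ S <;> simp [h]
  · rw [Finset.card_eq_zero, Finset.eq_empty_iff_forall_notMem]
    intro y hy
    simp only [Finset.mem_filter, Finset.Nat.mem_antidiagonalTuple] at hy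
    apply hc
    rw [← hy.1, ← hsum]
    apply Finset.sum_le_sum
    intro i _
    split_ifs with h
    · exact hy.2 i h
    · exact Nat.zero_le _

lemma inner_IE (n t : ℕ) (y : Fin n → ℕ) :
    ∑ S ∈ (Finset.univ : Finset (Fin n)).powerset,
        (-1 : ℤ)^S.card * (if ∀ i ∈ S, t + 1 ≤ y i then 1 else 0)
      = if ∀ i, y i ≤ t then 1 else 0 := by
  classical
  set O : Finset (Fin n) := Finset.univ.filter (fun i => t < y i) with hO
  have h1 : ∀ S : Finset (Fin n), (∀ i ∈ S, t + 1 ≤ y i) ↔ S ⊆ O := by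
    intro S
    constructor
    · intro h i hi
      rw [hO, Finset.mem_filter]
      exact ⟨Finset.mem_univ i, by have := h i hi; omega⟩
    · intro h i hi
      have := h hi
      rw [hO, Finset.mem_filter] at this
      omega
  calc ∑ S ∈ (Finset.univ : Finset (Fin n)).powerset,
        (-1 : ℤ)^S.card * (if ∀ i ∈ S, t + 1 ≤ y i then 1 else 0)
      = ∑ S ∈ (Finset.univ : Finset (Fin n)).powerset,
          (if S ⊆ O then (-1 : ℤ)^S.card else 0) := by
        refine Finset.sum_congr rfl fun S _ => ?_
        rw [if_congr (h1 S) rfl rfl, mul_ite, mul_one, mul_zero]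
    _ = ∑ S ∈ (Finset.univ : Finset (Fin n)).powerset.filter (· ⊆ O), (-1 : ℤ)^S.card := by
        rw [Finset.sum_filter]
    _ = ∑ S ∈ O.powerset, (-1 : ℤ)^S.card := by
        congr 1
        ext S
        simp [Finset.mem_powerset, Finset.subset_univ]
    _ = if O = ∅ then 1 else 0 := Finset.sum_powerset_neg_one_pow_card
    _ = if ∀ i, y i ≤ t then 1 else 0 := by
        refine if_congr ?_ rfl rfl
        rw [Finset.filter_eq_empty_iff]
        constructor
        · intro h i
          have := h (Finset.mem_univ i)
          omega
        · intro h i _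
          have := h i
          omega

lemma IE (n t m : ℕ) :
    ((((Finset.Nat.antidiagonalTuple n m).filter (fun y => ∀ i, y i ≤ t)).card : ℤ))
      = ∑ S ∈ (Finset.univ : Finset (Fin n)).powerset,
          (-1 : ℤ)^S.card *
            (((Finset.Nat.antidiagonalTuple n m).filter (fun y => ∀ i ∈ S, t + 1 ≤ y i)).card : ℤ) := by
  classical
  have hcard : ∀ (p : (Fin n → ℕ) → Prop) [DecidablePred p],
      ((((Finset.Nat.antidiagonalTuple n m).filter p).card : ℤ))
        = ∑ y ∈ Finset.Nat.antidiagonalTuple n m, (if p y then (1 : ℤ) else 0) := by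
    intro p _
    rw [Finset.card_filter]
    push_cast
    rfl
  rw [hcard]
  have : ∀ S ∈ (Finset.univ : Finset (Fin n)).powerset,
      (-1 : ℤ)^S.card *
          (((Finset.Nat.antidiagonalTuple n m).filter (fun y => ∀ i ∈ S, t + 1 ≤ y i)).card : ℤ)
        = ∑ y ∈ Finset.Nat.antidiagonalTuple n m,
            (-1 : ℤ)^S.card * (if ∀ i ∈ S, t + 1 ≤ y i then 1 else 0) := by
    intro S _
    rw [hcard, Finset.mul_sum]
  rw [Finset.sum_congr rfl this, Finset.sum_comm]
  refine Finset.sum_congr rfl fun y _ => ?_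
  exact (inner_IE n t y).symm


lemma term_eq (n k t j : ℕ) (hk : 1 ≤ k) (hkn : k ≤ n - 1) (hj : j < k) :
    (if j * (t+1) ≤ k*t then ((k*t - j*(t+1) + n - 1).choose (k*t - j*(t+1))) else 0)
      = ((k-j)*t + n - 1 - j).choose (n-1) := by
  have hn : 2 ≤ n := by omega
  have hjt : j * t ≤ k * t := Nat.mul_le_mul_right _ (le_of_lt hj)
  have hkj : (k - j) * t = k*t - j*t := by rw [Nat.sub_mul]
  have hj1 : j * (t+1) = j*t + j := by ring
  split_ifs with h
  · have hb : k*t - j*(t+1) + n - 1 = (k-j)*t + n - 1 - j := by omega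
    rw [hb]
    have h2 : n - 1 ≤ (k-j)*t + n - 1 - j := by omega
    have h3 : k*t - j*(t+1) = ((k-j)*t + n - 1 - j) - (n-1) := by omega
    rw [h3, Nat.choose_symm h2]
  · symm
    apply Nat.choose_eq_zero_of_lt
    omega

/-- Katzman's formula for the number of lattice points of the `t`-th
dilate of the hypersimplex `Δ_{k,n}`. -/
theorem stmt_2 (n k : ℕ) (hk : 1 ≤ k) (hkn : k ≤ n - 1) (t : ℕ) :
    (latticeCount n k t : ℤ) =
      ∑ j ∈ Finset.range k, (-1 : ℤ) ^ j * (n.choose j : ℤ) *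
        ((((k - j) * t + n - 1 - j).choose (n - 1) : ℤ)) := by
  classical
  have hn : 2 ≤ n := by omega
  have h0 : latticeCount n k t
      = ((Finset.Nat.antidiagonalTuple n (k*t)).filter (fun y => ∀ i, y i ≤ t)).card := by
    unfold latticeCount
    congr 1
    ext y
    simp only [Finset.mem_filter, Fintype.mem_piFinset, Finset.mem_range,
      Nat.lt_succ_iff, Finset.Nat.mem_antidiagonalTuple]
    tauto
  rw [h0, IE n t (k*t)]
  clear h0
  calc ∑ S ∈ (Finset.univ : Finset (Fin n)).powerset, (-1 : ℤ)^S.card *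
          (((Finset.Nat.antidiagonalTuple n (k*t)).filter (fun y => ∀ i ∈ S, t+1 ≤ y i)).card : ℤ)
      = ∑ S ∈ (Finset.univ : Finset (Fin n)).powerset, (-1 : ℤ)^S.card *
          ((if S.card * (t+1) ≤ k*t
            then ((k*t - S.card*(t+1) + n - 1).choose (k*t - S.card*(t+1))) else 0 : ℕ) : ℤ) := by
        refine Finset.sum_congr rfl fun S _ => ?_
        rw [cardB]
        split_ifs with h
        · rw [card_adt]
        · rfl
    _ = ∑ j ∈ Finset.range (n+1), ∑ S ∈ Finset.powersetCard j (Finset.univ : Finset (Fin n)),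
          (-1 : ℤ)^S.card *
          ((if S.card * (t+1) ≤ k*t
            then ((k*t - S.card*(t+1) + n - 1).choose (k*t - S.card*(t+1))) else 0 : ℕ) : ℤ) := by
        rw [Finset.sum_powerset]
        congr 1
        rw [Finset.card_univ, Fintype.card_fin]
    _ = ∑ j ∈ Finset.range (n+1), (n.choose j : ℤ) * ((-1 : ℤ)^j *
          ((if j * (t+1) ≤ k*t
            then ((k*t - j*(t+1) + n - 1).choose (k*t - j*(t+1))) else 0 : ℕ) : ℤ)) := by
        refine Finset.sum_congr rfl fun j _ => ?_
        rw [Finset.sum_congr rfl (fun S hS => by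
          rw [(Finset.mem_powersetCard.mp hS).2]), Finset.sum_const,
          Finset.card_powersetCard, Finset.card_univ, Fintype.card_fin, nsmul_eq_mul]
    _ = ∑ j ∈ Finset.range k, (n.choose j : ℤ) * ((-1 : ℤ)^j *
          ((if j * (t+1) ≤ k*t
            then ((k*t - j*(t+1) + n - 1).choose (k*t - j*(t+1))) else 0 : ℕ) : ℤ)) := by
        symm
        apply Finset.sum_subset (Finset.range_subset_range.mpr (by omega))
        intro j _ hj
        rw [Finset.mem_range, not_lt] at hj
        have h1 : k * (t+1) ≤ j * (t+1) := Nat.mul_le_mul_right _ hj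
        have h2 : k * (t+1) = k*t + k := by ring
        rw [if_neg (by omega)]
        simp
    _ = ∑ j ∈ Finset.range k, (-1 : ℤ) ^ j * (n.choose j : ℤ) *
          ((((k - j) * t + n - 1 - j).choose (n - 1) : ℤ)) := by
        refine Finset.sum_congr rfl fun j hj => ?_
        rw [term_eq n k t j hk hkn (Finset.mem_range.mp hj)]
        ring
end

section
/- For integers n ≥ m ≥ 1 and every integer ℓ with ℓ > n − m, the weighted Lah number W(ℓ,n,m) equals 0; moreover W(n−m, n, m) > 0, i.e., W(ℓ,n,m) ≠ 0 exactly for 0 ≤ ℓ ≤ n − m. -/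
open Finset Polynomial

-- AUXILIARY LEMMAS
/-- All nodup lists with entries in `Icc 1 n`, as a finset. -/
def allLists (n : ℕ) : Finset (List ℕ) :=
  (Finset.Icc 1 n).powerset.biUnion fun s => (s.sort (· ≤ ·)).permutations.toFinset

lemma mem_allLists {n : ℕ} {l : List ℕ} (hnd : l.Nodup) (hsub : ∀ x ∈ l, x ∈ Finset.Icc 1 n) :
    l ∈ allLists n := by
  refine Finset.mem_biUnion.mpr ⟨l.toFinset, ?_, ?_⟩
  · exact Finset.mem_powerset.mpr fun x hx => hsub x (List.mem_toFinset.mp hx)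
  · refine List.mem_toFinset.mpr (List.mem_permutations.mpr ?_)
    exact List.perm_of_nodup_nodup_toFinset_eq hnd (Finset.sort_nodup _ _)
      (by rw [Finset.sort_toFinset])

lemma sum_lengths {n m : ℕ} {P : Finset (List ℕ)} (h : IsLOPartition n m P) :
    ∑ b ∈ P, b.length = n := by
  obtain ⟨hc, hne, hdisj, hcov⟩ := h
  have hbu : P.biUnion (fun b => b.toFinset) = Finset.Icc 1 n := by
    ext x
    simp only [Finset.mem_biUnion, List.mem_toFinset]
    exact hcov x
  have := Finset.card_biUnion (s := P) (t := fun b => b.toFinset) ?_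
  · rw [hbu, Nat.card_Icc] at this
    calc ∑ b ∈ P, b.length = ∑ b ∈ P, b.toFinset.card := by
          refine Finset.sum_congr rfl fun b hb => ?_
          rw [List.toFinset_card_of_nodup (hne b hb).2]
        _ = n := by omega
  · intro b hb c hc hbc
    simp only [Function.onFun]
    rw [Finset.disjoint_left]
    intro x hx
    rw [List.mem_toFinset] at *
    exact fun hxc => hdisj b hb c hc hbc x hx hxc

lemma blockWeight_succ_le {b : List ℕ} (hb : b ≠ []) : blockWeight b + 1 ≤ b.length := by
  cases b with
  | nil => exact absurd rfl hb
  | cons h t =>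
    have : blockWeight (h :: t) = t.countP fun x => decide (x < h) := by
      simp [blockWeight, List.countP_cons]
      rfl
    rw [this]
    have := List.countP_le_length (l := t) (p := fun x => decide (x < h))
    simp only [List.length_cons]
    omega

lemma partWeight_le {n m : ℕ} {P : Finset (List ℕ)} (h : IsLOPartition n m P) :
    partWeight P + m ≤ n := by
  have h1 := sum_lengths h
  have h2 : ∑ b ∈ P, (blockWeight b + 1) ≤ ∑ b ∈ P, b.length :=
    Finset.sum_le_sum fun b hb => blockWeight_succ_le (h.2.1 b hb).1
  rw [Finset.sum_add_distrib, Finset.sum_const, smul_eq_mul, mul_one, h.1] at h2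
  unfold partWeight
  omega

/-- The witness block `[k+1, 1, 2, …, k]`. -/
def wBlock (k : ℕ) : List ℕ := (k + 1) :: (List.range k).map (· + 1)

lemma mem_wBlock {k x : ℕ} : x ∈ wBlock k ↔ 1 ≤ x ∧ x ≤ k + 1 := by
  simp only [wBlock, List.mem_cons, List.mem_map, List.mem_range]
  constructor
  · rintro (rfl | ⟨i, hi, rfl⟩) <;> omega
  · intro ⟨h1, h2⟩
    rcases Nat.lt_or_ge x (k + 1) with h | h
    · exact Or.inr ⟨x - 1, by omega, by omega⟩
    · exact Or.inl (by omega)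

lemma wBlock_nodup (k : ℕ) : (wBlock k).Nodup := by
  refine List.nodup_cons.mpr ⟨?_, ?_⟩
  · simp only [List.mem_map, List.mem_range]
    rintro ⟨i, hi, h⟩; omega
  · exact (List.nodup_range).map (fun a b => by omega)

lemma blockWeight_wBlock (k : ℕ) : blockWeight (wBlock k) = k := by
  unfold blockWeight wBlock
  simp only [List.headI, List.countP_cons, decide_eq_true_eq]
  rw [List.countP_eq_length.mpr, List.length_map, List.length_range]
  · simp
  · intro a ha
    simp only [List.mem_map, List.mem_range] at ha
    obtain ⟨i, hi, rfl⟩ := ha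
    simp; omega

lemma blockWeight_singleton (x : ℕ) : blockWeight [x] = 0 := by
  simp [blockWeight]
open Finset

/-- The witness partition: `wBlock (n-m)` together with singletons `[x]` for
`x ∈ Icc (n-m+2) n`. -/
def wPart (n m : ℕ) : Finset (List ℕ) :=
  insert (wBlock (n - m)) ((Finset.Icc (n - m + 2) n).image fun x => [x])

lemma wBlock_not_mem_image (n m : ℕ) :
    wBlock (n - m) ∉ (Finset.Icc (n - m + 2) n).image fun x => [x] := by
  simp only [Finset.mem_image, Finset.mem_Icc]
  rintro ⟨x, hx, h⟩
  have : x ∈ wBlock (n - m) := by rw [← h]; simp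
  rw [mem_wBlock] at this
  omega

lemma wPart_isLOPartition (n m : ℕ) (hm : 1 ≤ m) (hmn : m ≤ n) :
    IsLOPartition n m (wPart n m) := by
  set k := n - m with hk
  have hinj : Function.Injective (fun x : ℕ => [x]) := by
    intro a b h; simpa using h
  refine ⟨?_, ?_, ?_, ?_⟩
  · rw [wPart, Finset.card_insert_of_notMem (wBlock_not_mem_image n m),
      Finset.card_image_of_injective _ hinj, Nat.card_Icc]
    omega
  · intro b hb
    rw [wPart, Finset.mem_insert] at hb
    rcases hb with rfl | hb
    · exact ⟨by simp [wBlock], wBlock_nodup k⟩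
    · obtain ⟨x, _, rfl⟩ := Finset.mem_image.mp hb
      exact ⟨by simp, List.nodup_singleton x⟩
  · intro b hb c hc hbc x hxb hxc
    rw [wPart, Finset.mem_insert] at hb hc
    rcases hb with rfl | hb <;> rcases hc with rfl | hc
    · exact hbc rfl
    · obtain ⟨y, hy, rfl⟩ := Finset.mem_image.mp hc
      rw [Finset.mem_Icc] at hy
      rw [mem_wBlock] at hxb
      simp only [List.mem_singleton] at hxc
      omega
    · obtain ⟨y, hy, rfl⟩ := Finset.mem_image.mp hb
      rw [Finset.mem_Icc] at hy
      rw [mem_wBlock] at hxc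
      simp only [List.mem_singleton] at hxb
      omega
    · obtain ⟨y, hy, rfl⟩ := Finset.mem_image.mp hb
      obtain ⟨z, hz, rfl⟩ := Finset.mem_image.mp hc
      simp only [List.mem_singleton] at hxb hxc
      exact hbc (by rw [hxb] at hxc; rw [hxc])
  · intro x
    simp only [wPart, Finset.mem_insert, Finset.mem_Icc]
    constructor
    · rintro ⟨b, hb, hxb⟩
      rcases hb with rfl | hb
      · rw [mem_wBlock] at hxb; omega
      · obtain ⟨y, hy, rfl⟩ := Finset.mem_image.mp hb
        rw [Finset.mem_Icc] at hy
        simp only [List.mem_singleton] at hxb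
        omega
    · intro hx
      rcases le_or_gt x (k + 1) with h | h
      · exact ⟨wBlock k, Or.inl rfl, mem_wBlock.mpr ⟨hx.1, h⟩⟩
      · refine ⟨[x], Or.inr (Finset.mem_image.mpr ⟨x, ?_, rfl⟩), by simp⟩
        rw [Finset.mem_Icc]; omega

lemma wPart_weight (n m : ℕ) : partWeight (wPart n m) = n - m := by
  rw [partWeight, wPart, Finset.sum_insert (wBlock_not_mem_image n m),
    blockWeight_wBlock]
  have : ∑ b ∈ (Finset.Icc (n - m + 2) n).image (fun x => [x]), blockWeight b = 0 := by
    refine Finset.sum_eq_zero fun b hb => ?_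
    obtain ⟨x, _, rfl⟩ := Finset.mem_image.mp hb
    exact blockWeight_singleton x
  omega

lemma finite_aux (n m : ℕ) (ℓ : ℤ) :
    Finite {P : Finset (List ℕ) // IsLOPartition n m P ∧ (partWeight P : ℤ) = ℓ} := by
  refine Finite.of_injective (β := (allLists n).powerset)
    (fun P => ⟨P.1, Finset.mem_powerset.mpr fun b hb => ?_⟩) ?_
  · obtain ⟨h, hw⟩ := P.2
    exact mem_allLists (h.2.1 b hb).2 fun x hx => (h.2.2.2 x).mp ⟨b, hb, hx⟩
  · intro P Q h
    exact Subtype.ext (by simpa using congrArg Subtype.val h)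


/-- `W(ℓ,n,m) = 0` for `ℓ > n - m`, and `W(n-m,n,m) > 0`. -/
theorem stmt_4 (n m : ℕ) (hm : 1 ≤ m) (hmn : m ≤ n) :
    (∀ ℓ : ℤ, (n : ℤ) - (m : ℤ) < ℓ → weightedLah ℓ n m = 0) ∧
      0 < weightedLah ((n : ℤ) - (m : ℤ)) n m := by
  constructor
  · intro ℓ hℓ
    have he : IsEmpty {P : Finset (List ℕ) // IsLOPartition n m P ∧ (partWeight P : ℤ) = ℓ} := by
      refine ⟨fun P => ?_⟩
      obtain ⟨h, hw⟩ := P.2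
      have h1 := partWeight_le h
      have h2 : (partWeight P.1 : ℤ) ≤ (n : ℤ) - (m : ℤ) := by omega
      omega
    exact Nat.card_of_isEmpty
  · have hfin := finite_aux n m ((n : ℤ) - (m : ℤ))
    have hne : Nonempty {P : Finset (List ℕ) //
        IsLOPartition n m P ∧ (partWeight P : ℤ) = (n : ℤ) - (m : ℤ)} := by
      refine ⟨⟨wPart n m, wPart_isLOPartition n m hm hmn, ?_⟩⟩
      rw [wPart_weight, Nat.cast_sub hmn]
    exact Nat.card_pos
end

section
/- For integers n ≥ m ≥ 1, the weighted Lah number W(0,n,m) equals the unsigned Stirling number of the first kind ⟦n, m⟧, the number of permutations of {1,…,n} with exactly m cycles. -/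
open Finset Polynomial

namespace Stmt5Aux
open Equiv Equiv.Perm Function Finset
variable {n : ℕ}


open Equiv Equiv.Perm Function Finset

variable {n : ℕ}

lemma mem_periodicPts_perm (σ : Perm (Fin n)) (x : Fin n) : x ∈ periodicPts ⇑σ := by
  refine ⟨orderOf σ, orderOf_pos σ, ?_⟩
  show σ^[orderOf σ] x = x
  rw [Equiv.Perm.iterate_eq_pow, pow_orderOf_eq_one]
  rfl

lemma mp_pos (σ : Perm (Fin n)) (x : Fin n) : 0 < minimalPeriod ⇑σ x :=
  minimalPeriod_pos_of_mem_periodicPts (mem_periodicPts_perm σ x)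

lemma sameCycle_iff_pow_lt {σ : Perm (Fin n)} {x y : Fin n} :
    σ.SameCycle x y ↔ ∃ i < minimalPeriod ⇑σ x, (σ ^ i) x = y := by
  constructor
  · intro h
    obtain ⟨i, -, rfl⟩ := h.exists_pow_eq'
    refine ⟨i % minimalPeriod ⇑σ x, Nat.mod_lt _ (mp_pos σ x), ?_⟩
    rw [← Equiv.Perm.iterate_eq_pow, ← Equiv.Perm.iterate_eq_pow,
      iterate_mod_minimalPeriod_eq]
  · rintro ⟨i, -, rfl⟩
    exact ⟨(i : ℤ), by rw [zpow_natCast]⟩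

def orbitF (σ : Perm (Fin n)) (x : Fin n) : Finset (Fin n) :=
  Finset.univ.filter fun y => σ.SameCycle x y

lemma mem_orbitF {σ : Perm (Fin n)} {x y : Fin n} : y ∈ orbitF σ x ↔ σ.SameCycle x y := by
  simp [orbitF]

lemma orbitF_nonempty (σ : Perm (Fin n)) (x : Fin n) : (orbitF σ x).Nonempty :=
  ⟨x, mem_orbitF.2 (Equiv.Perm.SameCycle.refl _ _)⟩

noncomputable def omin (σ : Perm (Fin n)) (x : Fin n) : Fin n :=
  (orbitF σ x).min' (orbitF_nonempty σ x)

lemma sameCycle_omin (σ : Perm (Fin n)) (x : Fin n) : σ.SameCycle x (omin σ x) :=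
  mem_orbitF.1 ((orbitF σ x).min'_mem _)

lemma omin_le {σ : Perm (Fin n)} {x y : Fin n} (h : σ.SameCycle x y) : omin σ x ≤ y :=
  Finset.min'_le _ _ (mem_orbitF.2 h)

lemma orbitF_congr {σ : Perm (Fin n)} {x y : Fin n} (h : σ.SameCycle x y) :
    orbitF σ x = orbitF σ y := by
  ext z
  simp only [mem_orbitF]
  exact ⟨fun hz => h.symm.trans hz, fun hz => h.trans hz⟩

lemma omin_congr {σ : Perm (Fin n)} {x y : Fin n} (h : σ.SameCycle x y) :
    omin σ x = omin σ y := by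
  unfold omin
  congr 1
  exact orbitF_congr h

noncomputable def blockOf (σ : Perm (Fin n)) (x : Fin n) : List ℕ :=
  (List.range (minimalPeriod ⇑σ (omin σ x))).map fun i => ((σ ^ i) (omin σ x) : ℕ) + 1

lemma blockOf_length (σ : Perm (Fin n)) (x : Fin n) :
    (blockOf σ x).length = minimalPeriod ⇑σ (omin σ x) := by
  simp [blockOf]

lemma blockOf_getElem (σ : Perm (Fin n)) (x : Fin n) (i : ℕ) (h : i < (blockOf σ x).length) :
    (blockOf σ x)[i] = ((σ ^ i) (omin σ x) : ℕ) + 1 := by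
  simp [blockOf]

lemma mem_blockOf {σ : Perm (Fin n)} {x : Fin n} {a : ℕ} :
    a ∈ blockOf σ x ↔ ∃ y : Fin n, σ.SameCycle x y ∧ a = (y : ℕ) + 1 := by
  simp only [blockOf, List.mem_map, List.mem_range]
  constructor
  · rintro ⟨i, hi, rfl⟩
    exact ⟨(σ ^ i) (omin σ x), (sameCycle_omin σ x).trans ⟨(i : ℤ), by rw [zpow_natCast]⟩, rfl⟩
  · rintro ⟨y, hy, rfl⟩
    have h2 : σ.SameCycle (omin σ x) y := (sameCycle_omin σ x).symm.trans hy
    obtain ⟨i, hi, rfl⟩ := sameCycle_iff_pow_lt.1 h2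
    exact ⟨i, hi, rfl⟩

lemma blockOf_headI (σ : Perm (Fin n)) (x : Fin n) :
    (blockOf σ x).headI = (omin σ x : ℕ) + 1 := by
  obtain ⟨k, hk⟩ := Nat.exists_eq_succ_of_ne_zero (mp_pos σ (omin σ x)).ne'
  simp [blockOf, hk, List.range_succ_eq_map]

lemma blockOf_ne_nil (σ : Perm (Fin n)) (x : Fin n) : blockOf σ x ≠ [] := by
  rw [← List.length_pos_iff, blockOf_length]
  exact mp_pos σ _

lemma blockOf_nodup (σ : Perm (Fin n)) (x : Fin n) : (blockOf σ x).Nodup := by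
  apply List.Nodup.map_on ?_ List.nodup_range
  intro i hi j hj hij
  simp only [List.mem_range] at hi hj
  have h1 : (σ ^ i) (omin σ x) = (σ ^ j) (omin σ x) := Fin.val_injective (by omega)
  have := iterate_injOn_Iio_minimalPeriod (f := ⇑σ) (x := omin σ x) hi hj
  rw [← Equiv.Perm.iterate_eq_pow, ← Equiv.Perm.iterate_eq_pow] at h1
  exact this h1

lemma blockOf_weight (σ : Perm (Fin n)) (x : Fin n) : blockWeight (blockOf σ x) = 0 := by
  rw [blockWeight, List.countP_eq_zero]
  intro a ha
  obtain ⟨y, hy, rfl⟩ := mem_blockOf.1 ha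
  rw [blockOf_headI]
  have := omin_le hy
  rw [Fin.le_def] at this
  simp only [decide_eq_true_eq]
  omega

lemma blockOf_congr {σ : Perm (Fin n)} {x y : Fin n} (h : σ.SameCycle x y) :
    blockOf σ x = blockOf σ y := by
  rw [blockOf, blockOf, omin_congr h]

lemma self_mem_blockOf (σ : Perm (Fin n)) (x : Fin n) : ((x : ℕ) + 1) ∈ blockOf σ x :=
  mem_blockOf.2 ⟨x, .refl _ _, rfl⟩

lemma blockOf_eq_iff {σ : Perm (Fin n)} {x y : Fin n} :
    blockOf σ x = blockOf σ y ↔ σ.SameCycle x y := by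
  constructor
  · intro h
    have hx : ((x : ℕ) + 1) ∈ blockOf σ y := h ▸ self_mem_blockOf σ x
    obtain ⟨z, hz, hz2⟩ := mem_blockOf.1 hx
    have hzx : z = x := Fin.val_injective (by omega)
    exact ((hzx ▸ hz)).symm
  · exact blockOf_congr



-- assume chunk1 (placeholders via axioms is not allowed; here just test names with sorries)
def nxt (b : List ℕ) (a : ℕ) : ℕ := b.getD ((b.idxOf a + 1) % b.length) 0

lemma indexOf_getElem' {l : List ℕ} (hl : l.Nodup) {i : ℕ} (h : i < l.length) :
    l.idxOf l[i] = i := by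
  have hmem : l[i] ∈ l := List.getElem_mem h
  have h1 : l.idxOf l[i] < l.length := List.idxOf_lt_length_iff.2 hmem
  have h2 := List.getElem_idxOf h1
  exact (List.Nodup.getElem_inj_iff hl).1 h2

lemma nxt_getElem {b : List ℕ} (hnd : b.Nodup) {i : ℕ} (h : i < b.length) :
    nxt b b[i] = b[(i + 1) % b.length]'(Nat.mod_lt _ (by omega)) := by
  rw [nxt, indexOf_getElem' hnd h, List.getD_eq_getElem]

lemma nxt_mem {b : List ℕ} (hnd : b.Nodup) {a : ℕ} (ha : a ∈ b) : nxt b a ∈ b := by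
  obtain ⟨i, hi, rfl⟩ := List.mem_iff_getElem.1 ha
  rw [nxt_getElem hnd hi]
  exact List.getElem_mem _

lemma mod_succ_inj {len i j : ℕ} (hi : i < len) (hj : j < len)
    (h : (i + 1) % len = (j + 1) % len) : i = j := by
  rcases Nat.lt_or_ge (i + 1) len with h1 | h1
  · rw [Nat.mod_eq_of_lt h1] at h
    rcases Nat.lt_or_ge (j + 1) len with h2 | h2
    · rw [Nat.mod_eq_of_lt h2] at h; omega
    · have hj1 : j + 1 = len := by omega
      rw [hj1, Nat.mod_self] at h; omega
  · have hi1 : i + 1 = len := by omega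
    rw [hi1, Nat.mod_self] at h
    rcases Nat.lt_or_ge (j + 1) len with h2 | h2
    · rw [Nat.mod_eq_of_lt h2] at h; omega
    · omega

lemma mod_succ_eq (i len : ℕ) : (i % len + 1) % len = (i + 1) % len := by
  conv_rhs => rw [Nat.add_mod i 1 len]
  conv_lhs => rw [Nat.add_mod (i % len) 1 len, Nat.mod_mod]



lemma nxt_blockOf (σ : Perm (Fin n)) (x : Fin n) :
    ((σ x : ℕ) + 1) = nxt (blockOf σ x) ((x : ℕ) + 1) := by
  obtain ⟨i, hik, hiz⟩ := sameCycle_iff_pow_lt.1 (sameCycle_omin σ x).symm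
  have hlen : (blockOf σ x).length = minimalPeriod ⇑σ (omin σ x) := blockOf_length σ x
  have hi' : i < (blockOf σ x).length := by omega
  have hx : (blockOf σ x)[i]'hi' = (x : ℕ) + 1 := by rw [blockOf_getElem, hiz]
  rw [← hx, nxt_getElem (blockOf_nodup σ x) hi', blockOf_getElem]
  have : (σ ^ ((i + 1) % (blockOf σ x).length)) (omin σ x) = σ x := by
    rw [hlen, ← Equiv.Perm.iterate_eq_pow, iterate_mod_minimalPeriod_eq,
      Equiv.Perm.iterate_eq_pow, pow_succ', Equiv.Perm.mul_apply, hiz]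
  rw [this]

lemma fixed_sameCycle {σ : Perm (Fin n)} {x y : Fin n} (hx : σ x = x)
    (h : σ.SameCycle x y) : y = x := by
  obtain ⟨i, rfl⟩ := h
  rw [Equiv.Perm.zpow_apply_eq_self_of_apply_eq_self hx]

lemma omin_of_fixed {σ : Perm (Fin n)} {x : Fin n} (hx : σ x = x) : omin σ x = x :=
  fixed_sameCycle hx (sameCycle_omin σ x)

lemma blockOf_of_fixed {σ : Perm (Fin n)} {x : Fin n} (hx : σ x = x) :
    blockOf σ x = [(x : ℕ) + 1] := by
  have h1 : omin σ x = x := omin_of_fixed hx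
  have h2 : minimalPeriod ⇑σ x = 1 := by
    rw [minimalPeriod_eq_one_iff_isFixedPt]
    exact hx
  simp [blockOf, h1, h2, List.range_succ]

lemma two_le_length_blockOf {σ : Perm (Fin n)} {x : Fin n} (hx : x ∈ σ.support) :
    2 ≤ (blockOf σ x).length := by
  rw [blockOf_length]
  have h1 : σ (omin σ x) ≠ omin σ x := by
    have h := (sameCycle_omin σ x).apply_eq_self_iff
    rw [Equiv.Perm.mem_support] at hx
    tauto
  have h2 := mp_pos σ (omin σ x)
  have h3 : minimalPeriod ⇑σ (omin σ x) ≠ 1 := fun h =>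
    h1 (minimalPeriod_eq_one_iff_isFixedPt.1 h)
  omega

lemma card_image_blockOf (σ : Perm (Fin n)) :
    (Finset.image (blockOf σ) Finset.univ).card
      = Multiset.card σ.cycleType + (n - σ.support.card) := by
  have himg : Finset.image (blockOf σ) Finset.univ
      = Finset.image (blockOf σ) σ.support ∪ Finset.image (blockOf σ) σ.supportᶜ := by
    rw [← Finset.image_union, Finset.union_compl]
  have hdisj : Disjoint (Finset.image (blockOf σ) σ.support)
      (Finset.image (blockOf σ) σ.supportᶜ) := by
    rw [Finset.disjoint_left]
    rintro b hb hb'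
    obtain ⟨x, hx, rfl⟩ := Finset.mem_image.1 hb
    obtain ⟨y, hy, heq⟩ := Finset.mem_image.1 hb'
    have h1 := two_le_length_blockOf hx
    rw [Finset.mem_compl, Equiv.Perm.notMem_support] at hy
    rw [← heq, blockOf_of_fixed hy] at h1
    simp at h1
  have hcompl : (Finset.image (blockOf σ) σ.supportᶜ).card = n - σ.support.card := by
    rw [Finset.card_image_of_injOn, Finset.card_compl, Fintype.card_fin]
    intro x hx y hy h
    rw [Finset.mem_coe, Finset.mem_compl, Equiv.Perm.notMem_support] at hx hy
    exact (fixed_sameCycle hx (blockOf_eq_iff.1 h)).symm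
  have hsupp : (Finset.image (blockOf σ) σ.support).card = Multiset.card σ.cycleType := by
    have hfac : Finset.image σ.cycleOf σ.support = σ.cycleFactorsFinset := by
      ext c
      simp only [Finset.mem_image]
      constructor
      · rintro ⟨x, hx, rfl⟩
        exact Equiv.Perm.cycleOf_mem_cycleFactorsFinset_iff.2 hx
      · intro hc
        obtain ⟨x, hcx, -⟩ := (Equiv.Perm.mem_cycleFactorsFinset_iff.1 hc).1
        have hxc : x ∈ c.support := Equiv.Perm.mem_support.2 hcx
        have hxs : x ∈ σ.support := Equiv.Perm.mem_cycleFactorsFinset_support_le hc hxc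
        exact ⟨x, hxs, (Equiv.Perm.cycle_is_cycleOf hxc hc).symm⟩
    -- two-sided image trick
    have key1 : Finset.image σ.cycleOf σ.support
        = Finset.image (fun b : List ℕ => if h : b.headI - 1 < n then σ.cycleOf ⟨b.headI - 1, h⟩ else 1)
            (Finset.image (blockOf σ) σ.support) := by
      rw [Finset.image_image]
      apply Finset.image_congr
      intro x hx
      simp only [Function.comp_apply, blockOf_headI, Nat.add_sub_cancel]
      rw [dif_pos (omin σ x).isLt]
      have : (⟨(omin σ x : ℕ), (omin σ x).isLt⟩ : Fin n) = omin σ x := rfl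
      rw [this]
      exact (sameCycle_omin σ x).cycleOf_eq
    have key2 : Finset.image (blockOf σ) σ.support
        = Finset.image (fun c : Perm (Fin n) =>
            if h : c.support.Nonempty then blockOf σ (c.support.min' h) else [])
            (Finset.image σ.cycleOf σ.support) := by
      rw [Finset.image_image]
      apply Finset.image_congr
      intro x hx
      rw [Finset.mem_coe] at hx
      simp only [Function.comp_apply]
      have hne : (σ.cycleOf x).support.Nonempty := by
        refine ⟨x, ?_⟩
        rw [Equiv.Perm.mem_support_cycleOf_iff]
        exact ⟨Equiv.Perm.SameCycle.refl _ _, hx⟩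
      rw [dif_pos hne]
      have hmin := (σ.cycleOf x).support.min'_mem hne
      rw [Equiv.Perm.mem_support_cycleOf_iff] at hmin
      exact blockOf_congr hmin.1
    have h1 : (Finset.image (blockOf σ) σ.support).card ≤ (Finset.image σ.cycleOf σ.support).card := by
      rw [key2]; exact Finset.card_image_le
    have h2 : (Finset.image σ.cycleOf σ.support).card ≤ (Finset.image (blockOf σ) σ.support).card := by
      rw [key1]; exact Finset.card_image_le
    have h3 : (Finset.image (blockOf σ) σ.support).card = σ.cycleFactorsFinset.card := by
      rw [← hfac]; omega
    rw [h3, Equiv.Perm.cycleType_def, Multiset.card_map]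
    rfl
  rw [himg, Finset.card_union_of_disjoint hdisj, hcompl, hsupp]


lemma isLOP_image (σ : Perm (Fin n)) :
    IsLOPartition n ((Finset.image (blockOf σ) Finset.univ).card)
      (Finset.image (blockOf σ) Finset.univ) ∧
    partWeight (Finset.image (blockOf σ) Finset.univ) = 0 := by
  refine ⟨⟨rfl, ?_, ?_, ?_⟩, ?_⟩
  · intro b hb
    obtain ⟨x, -, rfl⟩ := Finset.mem_image.1 hb
    exact ⟨blockOf_ne_nil σ x, blockOf_nodup σ x⟩
  · intro b hb c hc hbc a hab hac
    obtain ⟨x, -, rfl⟩ := Finset.mem_image.1 hb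
    obtain ⟨y, -, rfl⟩ := Finset.mem_image.1 hc
    obtain ⟨z, hz, rfl⟩ := mem_blockOf.1 hab
    obtain ⟨w, hw, hweq⟩ := mem_blockOf.1 hac
    have hzw : w = z := Fin.val_injective (by omega)
    exact hbc (blockOf_eq_iff.2 (hz.trans (hzw ▸ hw).symm))
  · intro a
    constructor
    · rintro ⟨b, hb, hab⟩
      obtain ⟨x, -, rfl⟩ := Finset.mem_image.1 hb
      obtain ⟨y, -, rfl⟩ := mem_blockOf.1 hab
      have := y.isLt
      simp only [Finset.mem_Icc]
      omega
    · intro ha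
      simp only [Finset.mem_Icc] at ha
      set y : Fin n := ⟨a - 1, by omega⟩
      refine ⟨blockOf σ y, Finset.mem_image_of_mem _ (Finset.mem_univ y), ?_⟩
      have : a = (y : ℕ) + 1 := by simp [y]; omega
      rw [this]
      exact self_mem_blockOf σ y
  · rw [partWeight]
    apply Finset.sum_eq_zero
    intro b hb
    obtain ⟨x, -, rfl⟩ := Finset.mem_image.1 hb
    exact blockOf_weight σ x

lemma blockOf_injective :
    Function.Injective (fun σ : Perm (Fin n) => Finset.image (blockOf σ) Finset.univ) := by
  intro σ τ h
  simp only at h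
  have key : ∀ x, blockOf σ x = blockOf τ x := by
    intro x
    have h1 : blockOf σ x ∈ Finset.image (blockOf τ) Finset.univ := by
      rw [← h]
      exact Finset.mem_image_of_mem _ (Finset.mem_univ x)
    obtain ⟨y, -, hy⟩ := Finset.mem_image.1 h1
    have h2 : ((x : ℕ) + 1) ∈ blockOf τ y := by
      rw [hy]
      exact self_mem_blockOf σ x
    obtain ⟨z, hz, hz2⟩ := mem_blockOf.1 h2
    have hzx : z = x := Fin.val_injective (by omega)
    rw [← hy, blockOf_eq_iff.2 (hzx ▸ hz)]
  apply Equiv.ext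
  intro x
  have h1 := nxt_blockOf σ x
  have h2 := nxt_blockOf τ x
  rw [key x] at h1
  exact Fin.val_injective (by omega)

lemma surj_aux {m : ℕ} {P : Finset (List ℕ)} (hP : IsLOPartition n m P)
    (hw : partWeight P = 0) :
    ∃ σ : Perm (Fin n), Finset.image (blockOf σ) Finset.univ = P := by
  obtain ⟨hcard, hblocks, hdisjP, hcover⟩ := hP
  have huniq : ∀ a : ℕ, a ∈ Finset.Icc 1 n → ∃! b, b ∈ P ∧ a ∈ b := by
    intro a ha
    obtain ⟨b, hb, hab⟩ := (hcover a).2 ha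
    refine ⟨b, ⟨hb, hab⟩, ?_⟩
    rintro c ⟨hc, hac⟩
    by_contra hne
    exact hdisjP c hc b hb hne a hac hab
  have hmem_icc : ∀ x : Fin n, (x : ℕ) + 1 ∈ Finset.Icc 1 n := by
    intro x
    have := x.isLt
    simp only [Finset.mem_Icc]
    omega
  set blk : Fin n → List ℕ :=
    fun x => P.choose (fun b => (x : ℕ) + 1 ∈ b) (huniq _ (hmem_icc x)) with hblk
  have hblkP : ∀ x, blk x ∈ P := fun x => P.choose_mem _ _
  have hblkmem : ∀ x, (x : ℕ) + 1 ∈ blk x := fun x => P.choose_property _ _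
  have hblk_eq : ∀ (x : Fin n) (b), b ∈ P → (x : ℕ) + 1 ∈ b → blk x = b := by
    intro x b hb hx
    obtain ⟨c, -, hu⟩ := huniq _ (hmem_icc x)
    rw [hu _ ⟨hblkP x, hblkmem x⟩, hu b ⟨hb, hx⟩]
  have helem : ∀ b ∈ P, ∀ a ∈ b, 1 ≤ a ∧ a ≤ n := by
    intro b hb a ha
    have := (hcover a).1 ⟨b, hb, ha⟩
    simpa [Finset.mem_Icc] using this
  have hbw : ∀ b ∈ P, blockWeight b = 0 := by
    intro b hb
    exact (Finset.sum_eq_zero_iff.1 hw) b hb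
  have hheadle : ∀ b ∈ P, ∀ a ∈ b, b.headI ≤ a := by
    intro b hb a ha
    have h0 := hbw b hb
    rw [blockWeight, List.countP_eq_zero] at h0
    have := h0 a ha
    simp only [decide_eq_true_eq] at this
    omega
  have hhead_get : ∀ b ∈ P, ∀ h : 0 < b.length, b.headI = b[0] := by
    intro b hb h
    cases b with
    | nil => simp at h
    | cons hd tl => rfl
  have hnxt_mem : ∀ b ∈ P, ∀ a ∈ b, nxt b a ∈ b := fun b hb a ha =>
    nxt_mem (hblocks b hb).2 ha
  have hnxt_pos_le : ∀ x : Fin n, 1 ≤ nxt (blk x) ((x : ℕ) + 1)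
      ∧ nxt (blk x) ((x : ℕ) + 1) ≤ n := fun x =>
    helem _ (hblkP x) _ (hnxt_mem _ (hblkP x) _ (hblkmem x))
  set f : Fin n → Fin n :=
    fun x => ⟨nxt (blk x) ((x : ℕ) + 1) - 1, by have := hnxt_pos_le x; omega⟩ with hf
  have hf1 : ∀ x : Fin n, (f x : ℕ) + 1 = nxt (blk x) ((x : ℕ) + 1) := by
    intro x
    have := hnxt_pos_le x
    simp only [hf]
    omega
  have hfinj : Function.Injective f := by
    intro x y hxy
    have hval : nxt (blk x) ((x : ℕ) + 1) = nxt (blk y) ((y : ℕ) + 1) := by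
      rw [← hf1 x, ← hf1 y, hxy]
    have hmx := hnxt_mem _ (hblkP x) _ (hblkmem x)
    have hmy := hnxt_mem _ (hblkP y) _ (hblkmem y)
    have hbxy : blk x = blk y := by
      by_contra hne
      exact hdisjP _ (hblkP x) _ (hblkP y) hne _ hmx (hval ▸ hmy)
    rw [hbxy] at hval hmx
    set b := blk y
    have hnd := (hblocks b (hblkP y)).2
    obtain ⟨i, hi, hig⟩ := List.mem_iff_getElem.1 (hbxy ▸ hblkmem x)
    obtain ⟨j, hj, hjg⟩ := List.mem_iff_getElem.1 (hblkmem y)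
    rw [← hig, ← hjg, nxt_getElem hnd hi, nxt_getElem hnd hj] at hval
    have hij : i = j :=
      mod_succ_inj hi hj ((List.Nodup.getElem_inj_iff hnd).1 hval)
    subst hij
    apply Fin.val_injective
    have hfin := hig.symm.trans hjg
    omega
  set σ : Perm (Fin n) := Equiv.ofBijective f ((Finite.injective_iff_bijective).1 hfinj)
    with hσ
  have hσf : ∀ x, σ x = f x := fun x => rfl
  -- per-block analysis
  have hblock_eq : ∀ b ∈ P, ∀ x : Fin n, (x : ℕ) + 1 ∈ b → blockOf σ x = b := by
    intro b hb x hxb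
    have hnd := (hblocks b hb).2
    have hnil := (hblocks b hb).1
    have hlpos : 0 < b.length := List.length_pos_iff.2 hnil
    have hhead := hhead_get b hb hlpos
    have hheadmem : b.headI ∈ b := by
      rw [hhead]
      exact List.getElem_mem hlpos
    have hheadIcc := helem b hb _ hheadmem
    set e0 : Fin n := ⟨b.headI - 1, by omega⟩ with he0
    have he01 : (e0 : ℕ) + 1 = b.headI := by simp [he0]; omega
    -- iteration formula
    have iter : ∀ i : ℕ, ((σ ^ i) e0 : ℕ) + 1 = b.getD (i % b.length) 0 := by
      intro i
      induction i with
      | zero =>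
        simp only [pow_zero, Equiv.Perm.one_apply, Nat.zero_mod]
        rw [List.getD_eq_getElem b 0 hlpos, he01, hhead]
      | succ i ih =>
        have hmlt : i % b.length < b.length := Nat.mod_lt _ hlpos
        rw [List.getD_eq_getElem b 0 hmlt] at ih
        have hmemi : b[i % b.length]'hmlt ∈ b := List.getElem_mem _
        have hblki : blk ((σ ^ i) e0) = b := hblk_eq _ b hb (ih ▸ hmemi)
        have hstep : (σ ^ (i + 1)) e0 = f ((σ ^ i) e0) := by
          rw [pow_succ', Equiv.Perm.mul_apply, hσf]
        rw [hstep, hf1, hblki, ih, nxt_getElem hnd hmlt,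
          ← List.getD_eq_getElem b 0 (Nat.mod_lt _ hlpos), mod_succ_eq]
    -- same cycle from e0 to anything in b
    have hsc : ∀ y : Fin n, (y : ℕ) + 1 ∈ b → σ.SameCycle e0 y := by
      intro y hy
      obtain ⟨j, hj, hjg⟩ := List.mem_iff_getElem.1 hy
      refine ⟨(j : ℤ), ?_⟩
      rw [zpow_natCast]
      apply Fin.val_injective
      have h3 := iter j
      rw [Nat.mod_eq_of_lt hj, List.getD_eq_getElem b 0 hj] at h3
      omega
    have horb : ∀ y : Fin n, σ.SameCycle e0 y → (y : ℕ) + 1 ∈ b := by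
      intro y hy
      obtain ⟨i, -, rfl⟩ := hy.exists_pow_eq'
      have hmlt : i % b.length < b.length := Nat.mod_lt _ hlpos
      have h3 := iter i
      rw [List.getD_eq_getElem b 0 hmlt] at h3
      rw [h3]
      exact List.getElem_mem _
    have hsx : σ.SameCycle e0 x := hsc x hxb
    have horbx : ∀ y : Fin n, σ.SameCycle x y ↔ (y : ℕ) + 1 ∈ b :=
      fun y => ⟨fun h => horb y (hsx.trans h), fun h => hsx.symm.trans (hsc y h)⟩
    -- omin = e0
    have homin : omin σ x = e0 := by
      apply le_antisymm
      · refine omin_le ((horbx e0).2 ?_)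
        rw [he01]
        exact hheadmem
      · have hm := sameCycle_omin σ x
        have hmb := (horbx _).1 hm
        have hle := hheadle b hb _ hmb
        rw [Fin.le_def]
        simp only [he0]
        omega
    -- minimalPeriod = length
    have hper : Function.IsPeriodicPt ⇑σ b.length e0 := by
      show σ^[b.length] e0 = e0
      rw [Equiv.Perm.iterate_eq_pow]
      apply Fin.val_injective
      have h3 := iter b.length
      rw [Nat.mod_self, List.getD_eq_getElem b 0 hlpos] at h3
      rw [← hhead] at h3
      omega
    have hmp : minimalPeriod ⇑σ e0 = b.length := by
      have hle := Function.IsPeriodicPt.minimalPeriod_le hlpos hper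
      have hpos := mp_pos σ e0
      by_contra hne
      have hlt : minimalPeriod ⇑σ e0 < b.length := by omega
      have hfix : σ^[minimalPeriod ⇑σ e0] e0 = e0 :=
        Function.isPeriodicPt_minimalPeriod ⇑σ e0
      rw [Equiv.Perm.iterate_eq_pow] at hfix
      have h1 := iter (minimalPeriod ⇑σ e0)
      rw [Nat.mod_eq_of_lt hlt, hfix, List.getD_eq_getElem b 0 hlt] at h1
      have h2 : b[minimalPeriod ⇑σ e0]'hlt = b[0]'hlpos := by
        rw [← hhead, ← he01]
        omega
      have := (List.Nodup.getElem_inj_iff hnd).1 h2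
      omega
    -- conclude blockOf = b
    rw [blockOf, homin, hmp]
    apply List.ext_getElem
    · simp
    · intro i h1 h2
      simp only [List.getElem_map, List.getElem_range]
      have h3 := iter i
      have h2' : i < b.length := h2
      rw [Nat.mod_eq_of_lt h2', List.getD_eq_getElem b 0 h2'] at h3
      omega
  refine ⟨σ, ?_⟩
  apply Finset.ext
  intro b
  constructor
  · intro hb
    obtain ⟨x, -, rfl⟩ := Finset.mem_image.1 hb
    rw [hblock_eq (blk x) (hblkP x) x (hblkmem x)]
    exact hblkP x
  · intro hb
    have hnil := (hblocks b hb).1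
    obtain ⟨a, ha⟩ := List.exists_mem_of_ne_nil b hnil
    have haIcc := helem b hb a ha
    set x : Fin n := ⟨a - 1, by omega⟩ with hx
    have hax : (x : ℕ) + 1 = a := by simp [hx]; omega
    rw [← hblock_eq b hb x (hax ▸ ha)]
    exact Finset.mem_image_of_mem _ (Finset.mem_univ x)

end Stmt5Aux

open Stmt5Aux in
/-- `W(0,n,m)` equals the unsigned Stirling number of the first kind. -/
theorem stmt_5 (n m : ℕ) (hm : 1 ≤ m) (hmn : m ≤ n) :
    weightedLah 0 n m = stirling1 n m := by
  rw [weightedLah, stirling1]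
  symm
  apply Nat.card_congr
  have hwd : ∀ σp : {σ : Equiv.Perm (Fin n) //
        Multiset.card σ.cycleType + (n - σ.support.card) = m},
      IsLOPartition n m (Finset.image (blockOf σp.1) Finset.univ) ∧
        ((partWeight (Finset.image (blockOf σp.1) Finset.univ) : ℤ) = 0) := by
    rintro ⟨σ, hσ⟩
    obtain ⟨h1, h2⟩ := isLOP_image σ
    rw [card_image_blockOf σ, hσ] at h1
    exact ⟨h1, by rw [h2]; rfl⟩
  refine Equiv.ofBijective
    (fun σp => ⟨Finset.image (blockOf σp.1) Finset.univ, hwd σp⟩) ⟨?_, ?_⟩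
  · intro σ τ h
    have h2 := congrArg Subtype.val h
    exact Subtype.ext (blockOf_injective h2)
  · rintro ⟨P, hP, hPw⟩
    have hw0 : partWeight P = 0 := by exact_mod_cast hPw
    obtain ⟨σ, hσ⟩ := surj_aux hP hw0
    have hcount : Multiset.card σ.cycleType + (n - σ.support.card) = m := by
      rw [← card_image_blockOf σ, hσ, hP.1]
    exact ⟨⟨σ, hcount⟩, Subtype.ext hσ⟩
end

section
/- For integers n ≥ 2, m ≥ 2 and ℓ ≥ 0, the weighted Lah numbers satisfy the recurrence W(ℓ, n, m) = (n−1) · W(ℓ−1, n−1, m) + Σ_{j=0}^{n−1} C(n−1, j) · j! · W(ℓ, n−1−j, m−1), where C denotes the binomial coefficient and by convention W(ℓ', n', m') = 0 whenever ℓ' < 0, or m' > n', or n' = 0 with m' ≥ 1. -/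
open Finset Polynomial

def PartOn (S : Finset ℕ) (m : ℕ) (P : Finset (List ℕ)) : Prop :=
  P.card = m ∧
  (∀ b ∈ P, b ≠ [] ∧ b.Nodup) ∧
  (∀ b ∈ P, ∀ c ∈ P, b ≠ c → ∀ x ∈ b, x ∉ c) ∧
  ∀ x : ℕ, (∃ b ∈ P, x ∈ b) ↔ x ∈ S

noncomputable def WOn (ℓ : ℤ) (S : Finset ℕ) (m : ℕ) : ℕ :=
  Nat.card {P : Finset (List ℕ) // PartOn S m P ∧ (partWeight P : ℤ) = ℓ}

-- finset of all nodup lists with entries in S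
noncomputable def nodupLists (S : Finset ℕ) : Finset (List ℕ) :=
  ((Finset.range (S.card + 1)).biUnion fun k =>
    (Fintype.piFinset fun _ : Fin k => S).image List.ofFn).filter
    fun l => l.Nodup ∧ ∀ x ∈ l, x ∈ S

lemma mem_nodupLists {S : Finset ℕ} {l : List ℕ} :
    l ∈ nodupLists S ↔ l.Nodup ∧ ∀ x ∈ l, x ∈ S := by
  classical
  constructor
  · intro h
    exact (Finset.mem_filter.mp h).2
  · intro ⟨hnd, hsub⟩
    refine Finset.mem_filter.mpr ⟨?_, hnd, hsub⟩
    refine Finset.mem_biUnion.mpr ⟨l.length, ?_, ?_⟩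
    · have h1 : l.toFinset ⊆ S := fun x hx => hsub x (List.mem_toFinset.mp hx)
      have := Finset.card_le_card h1
      rw [List.toFinset_card_of_nodup hnd] at this
      simpa using Nat.lt_succ_of_le this
    · refine Finset.mem_image.mpr ⟨l.get, ?_, List.ofFn_get l⟩
      exact Fintype.mem_piFinset.mpr fun i => hsub _ (l.get_mem _)

lemma length_lt_of_mem_nodupLists {S : Finset ℕ} {l : List ℕ} (h : l ∈ nodupLists S) :
    l.length ≤ S.card := by
  obtain ⟨hnd, hsub⟩ := mem_nodupLists.mp h
  have h1 : l.toFinset ⊆ S := fun x hx => hsub x (List.mem_toFinset.mp hx)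
  have := Finset.card_le_card h1
  rwa [List.toFinset_card_of_nodup hnd] at this

lemma finite_partOn (S : Finset ℕ) (m : ℕ) (p : Finset (List ℕ) → Prop) :
    Finite {P : Finset (List ℕ) // PartOn S m P ∧ p P} := by
  classical
  refine Finite.of_injective
    (fun P => (⟨P.1, ?_⟩ : {Q // Q ∈ (nodupLists S).powerset})) ?_
  · rcases P with ⟨P, ⟨-, hbl, -, hcov⟩, -⟩
    refine Finset.mem_powerset.mpr fun b hb => mem_nodupLists.mpr
      ⟨(hbl b hb).2, fun x hx => (hcov x).mp ⟨b, hb, hx⟩⟩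
  · intro P Q h
    simpa [Subtype.ext_iff] using h

lemma nat_card_sigma {ι : Type*} [Fintype ι] (Y : ι → Type*) [∀ i, Finite (Y i)] :
    Nat.card (Σ i, Y i) = ∑ i, Nat.card (Y i) := by
  letI : ∀ i, Fintype (Y i) := fun i => Fintype.ofFinite _
  simp [Nat.card_eq_fintype_card, Fintype.card_sigma]

lemma headI_mem {l : List ℕ} (h : l ≠ []) : l.headI ∈ l := by
  cases l with
  | nil => exact absurd rfl h
  | cons x t => simp

lemma idxOf_insertIdx : ∀ (l : List ℕ) (a : ℕ), a ∉ l → ∀ k, k ≤ l.length →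
    (l.insertIdx k a).idxOf a = k
  | l, a, ha, 0, hk => by simp
  | [], a, ha, k+1, hk => by simp at hk
  | x :: xs, a, ha, k+1, hk => by
    have hxa : x ≠ a := fun h => ha (h ▸ List.mem_cons_self)
    rw [List.insertIdx_succ_cons, List.idxOf_cons_ne _ hxa,
      idxOf_insertIdx xs a (fun h => ha (List.mem_cons_of_mem _ h)) k
        (Nat.le_of_succ_le_succ hk)]

lemma erase_insertIdx {l : List ℕ} {a : ℕ} (h : a ∉ l) {k : ℕ} (hk : k ≤ l.length) :
    (l.insertIdx k a).erase a = l := by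
  rw [← List.eraseIdx_idxOf_eq_erase, idxOf_insertIdx l a h k hk, List.eraseIdx_insertIdx_self]

lemma reinsert : ∀ (l : List ℕ) (a : ℕ), l.Nodup → a ∈ l → l.headI ≠ a →
    (l.erase a).insertIdx ((l.erase a).idxOf (l.getD (l.idxOf a - 1) 0) + 1) a = l
  | [], a, _, ha, _ => absurd ha List.not_mem_nil
  | x :: xs, a, hnd, ha, hh => by
    have hxa : x ≠ a := by simpa using hh
    have haxs : a ∈ xs := by
      rcases List.mem_cons.mp ha with h | h
      · exact absurd h.symm hxa
      · exact h
    have herase : (x :: xs).erase a = x :: xs.erase a :=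
      List.erase_cons_tail (by simpa using hxa)
    rw [List.idxOf_cons_ne _ hxa, herase]
    cases hixs : xs.idxOf a with
    | zero =>
      obtain ⟨t, rfl⟩ : ∃ t, xs = a :: t := by
        cases xs with
        | nil => simp at haxs
        | cons z t =>
          have hz : z = a := by
            by_contra hz
            rw [List.idxOf_cons_ne _ hz] at hixs
            simp at hixs
          exact ⟨t, by rw [hz]⟩
      simp
    | succ j =>
      have hxnd : xs.Nodup := (List.nodup_cons.mp hnd).2
      have hxnm : x ∉ xs := (List.nodup_cons.mp hnd).1
      have hhx : xs.headI ≠ a := by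
        cases xs with
        | nil => simp at haxs
        | cons z t =>
          intro h
          rw [List.headI_cons] at h
          rw [h, List.idxOf_cons_self] at hixs
          simp at hixs
      have ih := reinsert xs a hxnd haxs hhx
      have hjlt : j < xs.length := by
        have := List.idxOf_lt_length_iff.mpr haxs
        omega
      have hymem : xs.getD j 0 ∈ xs := by
        rw [List.getD_eq_getElem _ _ hjlt]
        exact List.getElem_mem _
      have hyx : xs.getD j 0 ≠ x := fun h => hxnm (h ▸ hymem)
      simp only [Nat.succ_sub_one, List.getD_cons_succ]
      rw [List.idxOf_cons_ne _ (Ne.symm hyx), List.insertIdx_succ_cons]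
      congr 1
      simpa [hixs] using ih

lemma blockWeight_insertIdx {c : List ℕ} (hc : c ≠ []) (hh : 1 < c.headI) {i : ℕ}
    (hi : i + 1 ≤ c.length) : blockWeight (c.insertIdx (i+1) 1) = blockWeight c + 1 := by
  obtain ⟨x, t, rfl⟩ : ∃ x t, c = x :: t := by
    cases c with
    | nil => exact absurd rfl hc
    | cons x t => exact ⟨x, t, rfl⟩
  have hperm := List.perm_insertIdx 1 (x::t) hi
  unfold blockWeight
  have hhead : ((x::t).insertIdx (i+1) 1).headI = x := by
    rw [List.insertIdx_succ_cons, List.headI_cons]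
  rw [hhead, List.headI_cons] at *
  rw [hperm.countP_eq, List.countP_cons]
  simp [hh]

lemma blockWeight_erase {b : List ℕ} (h1 : (1:ℕ) ∈ b) (hhgt : 1 < b.headI) :
    blockWeight b = blockWeight (b.erase 1) + 1 := by
  obtain ⟨x, t, rfl⟩ : ∃ x t, b = x :: t := by
    cases b with
    | nil => simp at h1
    | cons x t => exact ⟨x, t, rfl⟩
  rw [List.headI_cons] at hhgt
  have hxa : x ≠ 1 := by omega
  have herase : (x::t).erase 1 = x :: t.erase 1 := List.erase_cons_tail (by simpa using hxa)
  have hperm : List.Perm (x::t) (1 :: (x::t).erase 1) := List.perm_cons_erase h1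
  unfold blockWeight
  rw [herase, List.headI_cons, List.headI_cons, hperm.countP_eq, herase, List.countP_cons]
  simp [hhgt]

section Relabel
variable {S T : Finset ℕ} {f g : ℕ → ℕ}

lemma lt_iff_of_relabel (hgf : ∀ x ∈ S, g (f x) = x)
    (hmono : ∀ x ∈ S, ∀ y ∈ S, x < y → f x < f y) {x y : ℕ} (hx : x ∈ S) (hy : y ∈ S) :
    f x < f y ↔ x < y := by
  constructor
  · intro h
    rcases lt_trichotomy x y with h' | h' | h'
    · exact h'
    · subst h'; exact absurd h (lt_irrefl _)
    · exact absurd (hmono y hy x hx h') (by omega)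
  · exact hmono x hx y hy

lemma map_map_back (hgf : ∀ x ∈ S, g (f x) = x) {b : List ℕ} (hb : ∀ x ∈ b, x ∈ S) :
    (b.map f).map g = b := by
  rw [List.map_map]
  have h : ∀ x ∈ b, (g ∘ f) x = x := fun x hx => hgf x (hb x hx)
  rw [List.map_congr_left h]
  simp

lemma image_map_back {m : ℕ} (hgf : ∀ x ∈ S, g (f x) = x) {P : Finset (List ℕ)}
    (hP : PartOn S m P) : (P.image (List.map f)).image (List.map g) = P := by
  classical
  have hS : ∀ b ∈ P, ∀ x ∈ b, x ∈ S := fun b hb x hx => (hP.2.2.2 x).mp ⟨b, hb, hx⟩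
  rw [Finset.image_image]
  calc P.image (List.map g ∘ List.map f) = P.image id :=
        Finset.image_congr (fun b hb => by
          simp only [Function.comp_apply, id_eq]
          exact map_map_back hgf (hS b (by simpa using hb)))
    _ = P := Finset.image_id

lemma partOn_image {m : ℕ} (hfT : ∀ x ∈ S, f x ∈ T) (hgS : ∀ y ∈ T, g y ∈ S)
    (hgf : ∀ x ∈ S, g (f x) = x) (hfg : ∀ y ∈ T, f (g y) = y)
    (hmono : ∀ x ∈ S, ∀ y ∈ S, x < y → f x < f y)
    {P : Finset (List ℕ)} (hP : PartOn S m P) :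
    PartOn T m (P.image (List.map f)) ∧ partWeight (P.image (List.map f)) = partWeight P := by
  classical
  obtain ⟨hcard, hbl, hdisj, hcov⟩ := hP
  have hS : ∀ b ∈ P, ∀ x ∈ b, x ∈ S := fun b hb x hx => (hcov x).mp ⟨b, hb, hx⟩
  have hginv : ∀ b ∈ P, ∀ x ∈ b, g (f x) = x := fun b hb x hx => hgf x (hS b hb x hx)
  have hmapinj : ∀ b ∈ P, ∀ c ∈ P, b.map f = c.map f → b = c := by
    intro b hb c hc h
    have h2 : (b.map f).map g = (c.map f).map g := by rw [h]
    rwa [map_map_back hgf (hS b hb), map_map_back hgf (hS c hc)] at h2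
  refine ⟨⟨?_, ?_, ?_, ?_⟩, ?_⟩
  · rw [Finset.card_image_of_injOn (fun b hb c hc h => hmapinj b hb c hc h), hcard]
  · intro b' hb'
    obtain ⟨b, hb, rfl⟩ := Finset.mem_image.mp hb'
    refine ⟨fun h => (hbl b hb).1 (by simpa using h), ?_⟩
    exact ((hbl b hb).2).map_on (fun x hx y hy h => by
      have := congrArg g h
      rwa [hginv b hb x hx, hginv b hb y hy] at this)
  · intro b' hb' c' hc' hne x hxb' hxc'
    obtain ⟨b, hb, rfl⟩ := Finset.mem_image.mp hb'
    obtain ⟨c, hc, rfl⟩ := Finset.mem_image.mp hc'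
    obtain ⟨u, hu, rfl⟩ := List.mem_map.mp hxb'
    obtain ⟨v, hv, hvu⟩ := List.mem_map.mp hxc'
    have hbc : b ≠ c := fun h => hne (by rw [h])
    have huv : v = u := by
      have := congrArg g hvu
      rwa [hgf v (hS c hc v hv), hgf u (hS b hb u hu)] at this
    exact hdisj b hb c hc hbc u hu (huv ▸ hv)
  · intro y
    constructor
    · rintro ⟨b', hb', hy⟩
      obtain ⟨b, hb, rfl⟩ := Finset.mem_image.mp hb'
      obtain ⟨u, hu, rfl⟩ := List.mem_map.mp hy
      exact hfT u (hS b hb u hu)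
    · intro hyT
      obtain ⟨b, hb, hgyb⟩ := (hcov (g y)).mpr (hgS y hyT)
      exact ⟨b.map f, Finset.mem_image_of_mem _ hb,
        by rw [← hfg y hyT]; exact List.mem_map_of_mem hgyb⟩
  · unfold partWeight
    rw [Finset.sum_image (fun b hb c hc h => hmapinj b hb c hc h)]
    refine Finset.sum_congr rfl fun b hb => ?_
    cases b with
    | nil => simp
    | cons x t =>
      have hh : ((x :: t).map f).headI = f x := by simp
      unfold blockWeight
      rw [hh, List.headI_cons, List.countP_map]
      refine List.countP_congr fun z hz => ?_
      simp only [Function.comp_apply, decide_eq_true_eq]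
      exact lt_iff_of_relabel hgf hmono (hS _ hb z hz) (hS _ hb x (List.mem_cons_self))

lemma WOn_relabel (hfT : ∀ x ∈ S, f x ∈ T) (hgS : ∀ y ∈ T, g y ∈ S)
    (hgf : ∀ x ∈ S, g (f x) = x) (hfg : ∀ y ∈ T, f (g y) = y)
    (hmono : ∀ x ∈ S, ∀ y ∈ S, x < y → f x < f y) (ℓ : ℤ) (m : ℕ) :
    WOn ℓ S m = WOn ℓ T m := by
  classical
  have hgmono : ∀ x ∈ T, ∀ y ∈ T, x < y → g x < g y := by
    intro x hx y hy hxy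
    rcases lt_trichotomy (g x) (g y) with h | h | h
    · exact h
    · exfalso
      have : f (g x) = f (g y) := by rw [h]
      rw [hfg x hx, hfg y hy] at this
      omega
    · exfalso
      have h2 := hmono _ (hgS y hy) _ (hgS x hx) h
      rw [hfg x hx, hfg y hy] at h2
      omega
  apply Nat.card_congr
  exact {
    toFun := fun P => ⟨P.1.image (List.map f), (partOn_image hfT hgS hgf hfg hmono P.2.1).1,
      by rw [(partOn_image hfT hgS hgf hfg hmono P.2.1).2]; exact P.2.2⟩
    invFun := fun Q => ⟨Q.1.image (List.map g), (partOn_image hgS hfT hfg hgf hgmono Q.2.1).1,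
      by rw [(partOn_image hgS hfT hfg hgf hgmono Q.2.1).2]; exact Q.2.2⟩
    left_inv := fun P => Subtype.ext (image_map_back hgf P.2.1)
    right_inv := fun Q => Subtype.ext (image_map_back hfg Q.2.1) }

end Relabel

lemma WOn_card (ℓ : ℤ) (m : ℕ) (S : Finset ℕ) :
    WOn ℓ S m = WOn ℓ (Finset.Icc 1 S.card) m := by
  classical
  set e := S.orderIsoOfFin rfl with he
  refine WOn_relabel (f := fun x => if h : x ∈ S then (e.symm ⟨x, h⟩ : Fin S.card) + 1 else 0)
    (g := fun y => if h : y - 1 < S.card then (e ⟨y - 1, h⟩ : ℕ) else 0) ?_ ?_ ?_ ?_ ?_ ℓ m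
  · intro x hx
    rw [dif_pos hx]
    have := (e.symm ⟨x, hx⟩).isLt
    rw [Finset.mem_Icc]
    omega
  · intro y hy
    rw [Finset.mem_Icc] at hy
    have hlt : y - 1 < S.card := by omega
    rw [dif_pos hlt]
    exact (e ⟨y - 1, hlt⟩).2
  · intro x hx
    rw [dif_pos hx]
    have hlt : (e.symm ⟨x, hx⟩ : Fin S.card) + 1 - 1 < S.card := by
      have := (e.symm ⟨x, hx⟩).isLt
      omega
    rw [dif_pos hlt]
    have : (⟨(e.symm ⟨x, hx⟩ : Fin S.card) + 1 - 1, hlt⟩ : Fin S.card) = e.symm ⟨x, hx⟩ := by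
      apply Fin.ext
      simp
    rw [this]
    simp [he]
  · intro y hy
    rw [Finset.mem_Icc] at hy
    have hlt : y - 1 < S.card := by omega
    rw [dif_pos hlt]
    rw [dif_pos (e ⟨y - 1, hlt⟩).2]
    have : (⟨(e ⟨y - 1, hlt⟩ : ℕ), (e ⟨y - 1, hlt⟩).2⟩ : {x // x ∈ S}) = e ⟨y - 1, hlt⟩ :=
      Subtype.ext rfl
    rw [this]
    simp
    omega
  · intro x hx y hy hxy
    rw [dif_pos hx, dif_pos hy]
    have h1 : (⟨x, hx⟩ : {a // a ∈ S}) < ⟨y, hy⟩ := by exact_mod_cast hxy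
    have h2 := e.symm.lt_iff_lt.mpr h1
    have h3 : (e.symm ⟨x, hx⟩ : Fin S.card) < e.symm ⟨y, hy⟩ := h2
    omega

lemma existsUnique_block {S : Finset ℕ} {m : ℕ} {P : Finset (List ℕ)} (hP : PartOn S m P)
    {x : ℕ} (hx : x ∈ S) : ∃! b, b ∈ P ∧ x ∈ b := by
  obtain ⟨b, hb, hxb⟩ := (hP.2.2.2 x).mpr hx
  refine ⟨b, ⟨hb, hxb⟩, ?_⟩
  rintro c ⟨hc, hxc⟩
  by_contra hne
  exact hP.2.2.1 c hc b hb hne x hxc hxb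

lemma phiA {n m : ℕ} (hn : 2 ≤ n) {P : Finset (List ℕ)} (hP : PartOn (Finset.Icc 1 n) m P)
    {b₀ : List ℕ} (hb₀ : b₀ ∈ P) (h1 : (1:ℕ) ∈ b₀) (hh : b₀.headI ≠ 1) :
    PartOn (Finset.Icc 2 n) m (insert (b₀.erase 1) (P.erase b₀)) ∧
    partWeight P = partWeight (insert (b₀.erase 1) (P.erase b₀)) + 1 ∧
    b₀.getD (b₀.idxOf 1 - 1) 0 ∈ Finset.Icc 2 n ∧
    b₀.getD (b₀.idxOf 1 - 1) 0 ∈ b₀.erase 1 ∧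
    (b₀.erase 1) ∉ P.erase b₀ := by
  classical
  obtain ⟨hcard, hbl, hdisj, hcov⟩ := hP
  have hS : ∀ b ∈ P, ∀ x ∈ b, x ∈ Finset.Icc 1 n := fun b hb x hx => (hcov x).mp ⟨b, hb, hx⟩
  have hb₀nd : b₀.Nodup := (hbl b₀ hb₀).2
  have hb₀ne : b₀ ≠ [] := (hbl b₀ hb₀).1
  have hhead : b₀.headI ∈ b₀ := headI_mem hb₀ne
  have hhgt : 1 < b₀.headI := by
    have := Finset.mem_Icc.mp (hS b₀ hb₀ _ hhead)
    omega
  have hi : b₀.idxOf 1 < b₀.length := List.idxOf_lt_length_iff.mpr h1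
  have hipos : 0 < b₀.idxOf 1 := by
    rcases Nat.eq_zero_or_pos (b₀.idxOf 1) with h0 | h0
    · exfalso
      cases b₀ with
      | nil => simp at h1
      | cons x t =>
        rcases eq_or_ne x 1 with hx1 | hx1
        · exact hh (by simp [hx1])
        · rw [List.idxOf_cons_ne _ hx1] at h0
          simp at h0
    · exact h0
  have hylt : b₀.idxOf 1 - 1 < b₀.length := by omega
  set y := b₀.getD (b₀.idxOf 1 - 1) 0 with hy
  have hy_get : y = b₀[b₀.idxOf 1 - 1] := List.getD_eq_getElem _ _ hylt
  have hy_mem : y ∈ b₀ := hy_get ▸ List.getElem_mem _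
  have hy1 : y ≠ 1 := by
    intro hcontra
    have h2 : b₀[b₀.idxOf 1] = 1 := List.getElem_idxOf hi
    have : b₀.idxOf 1 - 1 = b₀.idxOf 1 :=
      (hb₀nd.getElem_inj_iff).mp (by rw [← hy_get, h2, hcontra])
    omega
  have hyer : y ∈ b₀.erase 1 := hb₀nd.mem_erase_iff.mpr ⟨hy1, hy_mem⟩
  have he_not : b₀.erase 1 ∉ P.erase b₀ := by
    intro hmem
    have heP : b₀.erase 1 ∈ P := Finset.mem_of_mem_erase hmem
    have hene : b₀.erase 1 ≠ b₀ := Finset.ne_of_mem_erase hmem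
    exact hdisj _ heP b₀ hb₀ hene y hyer hy_mem
  have hyIcc : y ∈ Finset.Icc 2 n := by
    have := Finset.mem_Icc.mp (hS b₀ hb₀ y hy_mem)
    rw [Finset.mem_Icc]
    omega
  have hm1 : 1 ≤ m := by
    rw [← hcard]
    exact Finset.card_pos.mpr ⟨b₀, hb₀⟩
  refine ⟨⟨?_, ?_, ?_, ?_⟩, ?_, hyIcc, hyer, he_not⟩
  · rw [Finset.card_insert_of_notMem he_not, Finset.card_erase_of_mem hb₀, hcard]
    omega
  · intro b hb
    rcases Finset.mem_insert.mp hb with rfl | hb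
    · exact ⟨List.ne_nil_of_mem hyer, hb₀nd.erase 1⟩
    · exact hbl b (Finset.mem_of_mem_erase hb)
  · intro b hb c hc hne x hxb hxc
    rcases Finset.mem_insert.mp hb with rfl | hbold
    · rcases Finset.mem_insert.mp hc with rfl | hcold
      · exact absurd rfl hne
      · have hxb₀ : x ∈ b₀ := List.mem_of_mem_erase hxb
        have hcne : b₀ ≠ c := fun h => (Finset.ne_of_mem_erase hcold) h.symm
        exact hdisj b₀ hb₀ c (Finset.mem_of_mem_erase hcold) hcne x hxb₀ hxc
    · rcases Finset.mem_insert.mp hc with rfl | hcold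
      · have hxb₀ : x ∈ b₀ := List.mem_of_mem_erase hxc
        exact hdisj b (Finset.mem_of_mem_erase hbold) b₀ hb₀
          (Finset.ne_of_mem_erase hbold) x hxb hxb₀
      · exact hdisj b (Finset.mem_of_mem_erase hbold) c (Finset.mem_of_mem_erase hcold)
          hne x hxb hxc
  · intro x
    constructor
    · rintro ⟨b, hb, hxb⟩
      rcases Finset.mem_insert.mp hb with rfl | hbold
      · have hxb₀ : x ∈ b₀ := List.mem_of_mem_erase hxb
        have hx1 : x ≠ 1 := (hb₀nd.mem_erase_iff.mp hxb).1
        have := Finset.mem_Icc.mp (hS b₀ hb₀ x hxb₀)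
        rw [Finset.mem_Icc]
        omega
      · have hbP := Finset.mem_of_mem_erase hbold
        have hx1 : x ≠ 1 := by
          intro h
          exact hdisj b hbP b₀ hb₀ (Finset.ne_of_mem_erase hbold) x hxb (h ▸ h1)
        have := Finset.mem_Icc.mp (hS b hbP x hxb)
        rw [Finset.mem_Icc]
        omega
    · intro hx2
      have hx2' := Finset.mem_Icc.mp hx2
      have hx1n : x ∈ Finset.Icc 1 n := Finset.mem_Icc.mpr (by omega)
      obtain ⟨b, hb, hxb⟩ := (hcov x).mpr hx1n
      by_cases hbb : b = b₀
      · subst hbb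
        exact ⟨b.erase 1, Finset.mem_insert_self _ _,
          hb₀nd.mem_erase_iff.mpr ⟨by omega, hxb⟩⟩
      · exact ⟨b, Finset.mem_insert_of_mem (Finset.mem_erase.mpr ⟨hbb, hb⟩), hxb⟩
  · have hsum : partWeight (insert (b₀.erase 1) (P.erase b₀)) =
        blockWeight (b₀.erase 1) + ∑ b ∈ P.erase b₀, blockWeight b :=
      Finset.sum_insert he_not
    have hsum2 : blockWeight b₀ + ∑ b ∈ P.erase b₀, blockWeight b = partWeight P :=
      Finset.add_sum_erase P blockWeight hb₀
    have hbw := blockWeight_erase h1 hhgt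
    unfold partWeight at *
    omega

lemma psiA {n m : ℕ} (hn : 2 ≤ n) {Q : Finset (List ℕ)} (hQ : PartOn (Finset.Icc 2 n) m Q)
    {c : List ℕ} (hc : c ∈ Q) {y : ℕ} (hyc : y ∈ c) :
    PartOn (Finset.Icc 1 n) m
      (insert (c.insertIdx (c.idxOf y + 1) 1) (Q.erase c)) ∧
    partWeight (insert (c.insertIdx (c.idxOf y + 1) 1) (Q.erase c)) = partWeight Q + 1 ∧
    (c.insertIdx (c.idxOf y + 1) 1) ∉ Q.erase c ∧
    (1:ℕ) ∈ c.insertIdx (c.idxOf y + 1) 1 ∧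
    (c.insertIdx (c.idxOf y + 1) 1).headI ≠ 1 ∧
    (c.insertIdx (c.idxOf y + 1) 1).erase 1 = c ∧
    (c.insertIdx (c.idxOf y + 1) 1).getD
      ((c.insertIdx (c.idxOf y + 1) 1).idxOf 1 - 1) 0 = y := by
  classical
  obtain ⟨hcard, hbl, hdisj, hcov⟩ := hQ
  have hS : ∀ b ∈ Q, ∀ x ∈ b, x ∈ Finset.Icc 2 n := fun b hb x hx => (hcov x).mp ⟨b, hb, hx⟩
  have hcnd : c.Nodup := (hbl c hc).2
  have hcne : c ≠ [] := (hbl c hc).1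
  have h1c : (1:ℕ) ∉ c := fun h => by
    have := Finset.mem_Icc.mp (hS c hc 1 h)
    omega
  have hi : c.idxOf y < c.length := List.idxOf_lt_length_iff.mpr hyc
  have hi1 : c.idxOf y + 1 ≤ c.length := hi
  set c' := c.insertIdx (c.idxOf y + 1) 1 with hc'
  have hmemc' : ∀ x : ℕ, x ∈ c' ↔ x = 1 ∨ x ∈ c := fun x => List.mem_insertIdx hi1
  have h1c' : (1:ℕ) ∈ c' := (hmemc' 1).mpr (Or.inl rfl)
  have hc'nd : c'.Nodup := by
    have hperm := List.perm_insertIdx 1 c hi1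
    exact hperm.nodup_iff.mpr (List.nodup_cons.mpr ⟨h1c, hcnd⟩)
  have hheadgt : 1 < c.headI := by
    have := Finset.mem_Icc.mp (hS c hc _ (headI_mem hcne))
    omega
  have hhead : c'.headI = c.headI := by
    obtain ⟨x, t, rfl⟩ : ∃ x t, c = x :: t := by
      cases c with
      | nil => exact absurd rfl hcne
      | cons x t => exact ⟨x, t, rfl⟩
    rw [hc', List.insertIdx_succ_cons, List.headI_cons, List.headI_cons]
  have hheadne : c'.headI ≠ 1 := by rw [hhead]; omega
  have herase : c'.erase 1 = c := erase_insertIdx h1c hi1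
  have hidx : c'.idxOf 1 = c.idxOf y + 1 := idxOf_insertIdx c 1 h1c _ hi1
  have hlen : c'.length = c.length + 1 := List.length_insertIdx_of_le_length hi1 _
  have hgetD : c'.getD (c'.idxOf 1 - 1) 0 = y := by
    rw [hidx]
    simp only [Nat.add_sub_cancel]
    have hlt : c.idxOf y < c'.length := by omega
    rw [List.getD_eq_getElem _ _ hlt]
    rw [List.getElem_insertIdx_of_lt (Nat.lt_succ_self _) (by omega)]
    exact List.getElem_idxOf hi
  have hbw : blockWeight c' = blockWeight c + 1 := blockWeight_insertIdx hcne hheadgt hi1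
  have hnotold : ∀ b ∈ Q, (1:ℕ) ∉ b := fun b hb h => by
    have := Finset.mem_Icc.mp (hS b hb 1 h)
    omega
  have hc'Q : c' ∉ Q.erase c := fun h =>
    hnotold c' (Finset.mem_of_mem_erase h) h1c'
  have hm1 : 1 ≤ m := by
    rw [← hcard]
    exact Finset.card_pos.mpr ⟨c, hc⟩
  refine ⟨⟨?_, ?_, ?_, ?_⟩, ?_, hc'Q, h1c', hheadne, herase, hgetD⟩
  · rw [Finset.card_insert_of_notMem hc'Q, Finset.card_erase_of_mem hc, hcard]
    omega
  · intro b hb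
    rcases Finset.mem_insert.mp hb with rfl | hb
    · exact ⟨List.ne_nil_of_mem h1c', hc'nd⟩
    · exact hbl b (Finset.mem_of_mem_erase hb)
  · intro b hb d hd hne x hxb hxd
    rcases Finset.mem_insert.mp hb with rfl | hbold
    · rcases Finset.mem_insert.mp hd with rfl | hdold
      · exact absurd rfl hne
      · have hdQ := Finset.mem_of_mem_erase hdold
        rcases (hmemc' x).mp hxb with rfl | hxc
        · exact hnotold d hdQ hxd
        · have hcd : c ≠ d := fun h => (Finset.ne_of_mem_erase hdold) h.symm
          exact hdisj c hc d hdQ hcd x hxc hxd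
    · rcases Finset.mem_insert.mp hd with rfl | hdold
      · have hbQ := Finset.mem_of_mem_erase hbold
        rcases (hmemc' x).mp hxd with rfl | hxc
        · exact hnotold b hbQ hxb
        · exact hdisj b hbQ c hc (Finset.ne_of_mem_erase hbold) x hxb hxc
      · exact hdisj b (Finset.mem_of_mem_erase hbold) d (Finset.mem_of_mem_erase hdold)
          hne x hxb hxd
  · intro x
    constructor
    · rintro ⟨b, hb, hxb⟩
      rcases Finset.mem_insert.mp hb with rfl | hbold
      · rcases (hmemc' x).mp hxb with rfl | hxc
        · exact Finset.mem_Icc.mpr (by omega)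
        · have := Finset.mem_Icc.mp (hS c hc x hxc)
          exact Finset.mem_Icc.mpr (by omega)
      · have := Finset.mem_Icc.mp (hS b (Finset.mem_of_mem_erase hbold) x hxb)
        exact Finset.mem_Icc.mpr (by omega)
    · intro hx
      have hx' := Finset.mem_Icc.mp hx
      rcases eq_or_ne x 1 with rfl | hx1
      · exact ⟨c', Finset.mem_insert_self _ _, h1c'⟩
      · have hx2 : x ∈ Finset.Icc 2 n := Finset.mem_Icc.mpr (by omega)
        obtain ⟨b, hb, hxb⟩ := (hcov x).mpr hx2
        by_cases hbb : b = c
        · subst hbb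
          exact ⟨c', Finset.mem_insert_self _ _, (hmemc' x).mpr (Or.inr hxb)⟩
        · exact ⟨b, Finset.mem_insert_of_mem (Finset.mem_erase.mpr ⟨hbb, hb⟩), hxb⟩
  · have hsum : partWeight (insert c' (Q.erase c)) =
        blockWeight c' + ∑ b ∈ Q.erase c, blockWeight b := Finset.sum_insert hc'Q
    have hsum2 : blockWeight c + ∑ b ∈ Q.erase c, blockWeight b = partWeight Q :=
      Finset.add_sum_erase Q blockWeight hc
    unfold partWeight at *
    omega

lemma phiB {n m : ℕ} (hn : 2 ≤ n) {P : Finset (List ℕ)} (hP : PartOn (Finset.Icc 1 n) m P)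
    {b₀ : List ℕ} (hb₀ : b₀ ∈ P) (hh : b₀.headI = 1) (hb₀ne : b₀ ≠ []) :
    b₀ = 1 :: b₀.tail ∧ b₀.tail.Nodup ∧ (∀ x ∈ b₀.tail, x ∈ Finset.Icc 2 n) ∧
    PartOn (Finset.Icc 2 n \ b₀.tail.toFinset) (m-1) (P.erase b₀) ∧
    partWeight P = partWeight (P.erase b₀) := by
  classical
  obtain ⟨hcard, hbl, hdisj, hcov⟩ := hP
  have hS : ∀ b ∈ P, ∀ x ∈ b, x ∈ Finset.Icc 1 n := fun b hb x hx => (hcov x).mp ⟨b, hb, hx⟩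
  obtain ⟨x₀, t, rfl⟩ : ∃ x₀ t, b₀ = x₀ :: t := by
    cases b₀ with
    | nil => exact absurd rfl hb₀ne
    | cons x t => exact ⟨x, t, rfl⟩
  rw [List.headI_cons] at hh
  subst hh
  have hnd := (hbl _ hb₀).2
  have h1t : (1:ℕ) ∉ t := (List.nodup_cons.mp hnd).1
  have htnd : t.Nodup := (List.nodup_cons.mp hnd).2
  have htS : ∀ x ∈ t, x ∈ Finset.Icc 2 n := by
    intro x hx
    have h1 := Finset.mem_Icc.mp (hS _ hb₀ x (List.mem_cons_of_mem _ hx))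
    have : x ≠ 1 := fun h => h1t (h ▸ hx)
    exact Finset.mem_Icc.mpr (by omega)
  have hbw : blockWeight (1 :: t) = 0 := by
    unfold blockWeight
    rw [List.headI_cons]
    rw [List.countP_eq_zero]
    intro a ha
    simp only [decide_eq_true_eq]
    have := Finset.mem_Icc.mp (hS _ hb₀ a ha)
    omega
  refine ⟨by simp, htnd, htS, ⟨?_, ?_, ?_, ?_⟩, ?_⟩
  · rw [Finset.card_erase_of_mem hb₀, hcard]
  · intro b hb
    exact hbl b (Finset.mem_of_mem_erase hb)
  · intro b hb c hc hne x hxb hxc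
    exact hdisj b (Finset.mem_of_mem_erase hb) c (Finset.mem_of_mem_erase hc) hne x hxb hxc
  · intro x
    constructor
    · rintro ⟨b, hb, hxb⟩
      have hbP := Finset.mem_of_mem_erase hb
      have hxb₀ : x ∉ (1 :: t) := hdisj b hbP _ hb₀ (Finset.ne_of_mem_erase hb) x hxb
      have hx1 : x ≠ 1 := fun h => hxb₀ (h ▸ List.mem_cons_self)
      have hxt : x ∉ t := fun h => hxb₀ (List.mem_cons_of_mem _ h)
      have := Finset.mem_Icc.mp (hS b hbP x hxb)
      rw [Finset.mem_sdiff, Finset.mem_Icc, List.mem_toFinset]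
      exact ⟨⟨by omega, by omega⟩, hxt⟩
    · intro hx
      rw [Finset.mem_sdiff, Finset.mem_Icc, List.mem_toFinset] at hx
      obtain ⟨⟨hx2, hxn⟩, hxt⟩ := hx
      obtain ⟨b, hb, hxb⟩ := (hcov x).mpr (Finset.mem_Icc.mpr (by omega))
      have hbne : b ≠ 1 :: t := by
        intro h
        subst h
        rcases List.mem_cons.mp hxb with h | h
        · omega
        · exact hxt h
      exact ⟨b, Finset.mem_erase.mpr ⟨hbne, hb⟩, hxb⟩
  · have := Finset.add_sum_erase P blockWeight hb₀
    unfold partWeight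
    omega

lemma psiB {n m : ℕ} (hn : 2 ≤ n) (hm : 1 ≤ m) {r : List ℕ} (hrnd : r.Nodup)
    (hrS : ∀ x ∈ r, x ∈ Finset.Icc 2 n) {Q : Finset (List ℕ)}
    (hQ : PartOn (Finset.Icc 2 n \ r.toFinset) (m-1) Q) :
    PartOn (Finset.Icc 1 n) m (insert (1 :: r) Q) ∧
    partWeight (insert (1 :: r) Q) = partWeight Q ∧ (1 :: r) ∉ Q := by
  classical
  obtain ⟨hcard, hbl, hdisj, hcov⟩ := hQ
  have hS : ∀ b ∈ Q, ∀ x ∈ b, x ∈ Finset.Icc 2 n \ r.toFinset :=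
    fun b hb x hx => (hcov x).mp ⟨b, hb, hx⟩
  have h1r : (1:ℕ) ∉ r := fun h => by
    have := Finset.mem_Icc.mp (hrS 1 h)
    omega
  have hnotQ : (1 :: r) ∉ Q := fun h => by
    have := Finset.mem_sdiff.mp (hS _ h 1 (List.mem_cons_self))
    have := Finset.mem_Icc.mp this.1
    omega
  have h1nb : ∀ b ∈ Q, (1:ℕ) ∉ b := fun b hb h => by
    have := Finset.mem_sdiff.mp (hS b hb 1 h)
    have := Finset.mem_Icc.mp this.1
    omega
  have hbw : blockWeight (1 :: r) = 0 := by
    unfold blockWeight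
    rw [List.headI_cons, List.countP_eq_zero]
    intro a ha
    simp only [decide_eq_true_eq]
    rcases List.mem_cons.mp ha with rfl | h
    · omega
    · have := Finset.mem_Icc.mp (hrS a h)
      omega
  refine ⟨⟨?_, ?_, ?_, ?_⟩, ?_, hnotQ⟩
  · rw [Finset.card_insert_of_notMem hnotQ, hcard]
    omega
  · intro b hb
    rcases Finset.mem_insert.mp hb with rfl | hb
    · exact ⟨List.cons_ne_nil _ _, List.nodup_cons.mpr ⟨h1r, hrnd⟩⟩
    · exact hbl b hb
  · intro b hb c hc hne x hxb hxc
    rcases Finset.mem_insert.mp hb with rfl | hbold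
    · rcases Finset.mem_insert.mp hc with rfl | hcold
      · exact absurd rfl hne
      · rcases List.mem_cons.mp hxb with rfl | hxr
        · exact h1nb c hcold hxc
        · have := Finset.mem_sdiff.mp (hS c hcold x hxc)
          exact this.2 (List.mem_toFinset.mpr hxr)
    · rcases Finset.mem_insert.mp hc with rfl | hcold
      · rcases List.mem_cons.mp hxc with rfl | hxr
        · exact h1nb b hbold hxb
        · have := Finset.mem_sdiff.mp (hS b hbold x hxb)
          exact this.2 (List.mem_toFinset.mpr hxr)
      · exact hdisj b hbold c hcold hne x hxb hxc
  · intro x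
    constructor
    · rintro ⟨b, hb, hxb⟩
      rcases Finset.mem_insert.mp hb with rfl | hbold
      · rcases List.mem_cons.mp hxb with rfl | hxr
        · exact Finset.mem_Icc.mpr (by omega)
        · have := Finset.mem_Icc.mp (hrS x hxr)
          exact Finset.mem_Icc.mpr (by omega)
      · have := Finset.mem_Icc.mp (Finset.mem_sdiff.mp (hS b hbold x hxb)).1
        exact Finset.mem_Icc.mpr (by omega)
    · intro hx
      have hx' := Finset.mem_Icc.mp hx
      rcases eq_or_ne x 1 with rfl | hx1
      · exact ⟨1 :: r, Finset.mem_insert_self _ _, List.mem_cons_self⟩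
      · by_cases hxr : x ∈ r
        · exact ⟨1 :: r, Finset.mem_insert_self _ _, List.mem_cons_of_mem _ hxr⟩
        · have hxs : x ∈ Finset.Icc 2 n \ r.toFinset := by
            rw [Finset.mem_sdiff, Finset.mem_Icc, List.mem_toFinset]
            exact ⟨⟨by omega, by omega⟩, hxr⟩
          obtain ⟨b, hb, hxb⟩ := (hcov x).mpr hxs
          exact ⟨b, Finset.mem_insert_of_mem hb, hxb⟩
  · rw [partWeight, Finset.sum_insert hnotQ, hbw]
    rw [Nat.zero_add]
    rfl

set_option maxHeartbeats 2000000 in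
lemma card_split (n m : ℕ) (hn : 2 ≤ n) (hm : 2 ≤ m) (ℓ : ℤ) :
    Nat.card {P : Finset (List ℕ) // PartOn (Finset.Icc 1 n) m P ∧ (partWeight P : ℤ) = ℓ} =
    Nat.card ({P : Finset (List ℕ) // PartOn (Finset.Icc 2 n) m P ∧
        (partWeight P : ℤ) = ℓ - 1} × {y : ℕ // y ∈ Finset.Icc 2 n}) +
    Nat.card {q : List ℕ × Finset (List ℕ) //
        (q.1.Nodup ∧ ∀ x ∈ q.1, x ∈ Finset.Icc 2 n) ∧
        PartOn (Finset.Icc 2 n \ q.1.toFinset) (m-1) q.2 ∧ (partWeight q.2 : ℤ) = ℓ} := by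
  classical
  have h1Icc : (1:ℕ) ∈ Finset.Icc 1 n := Finset.mem_Icc.mpr ⟨le_rfl, by omega⟩
  haveI hF1 : Finite {P : Finset (List ℕ) // PartOn (Finset.Icc 2 n) m P ∧
      (partWeight P : ℤ) = ℓ - 1} := finite_partOn _ _ _
  haveI hF2 : Finite {q : List ℕ × Finset (List ℕ) //
      (q.1.Nodup ∧ ∀ x ∈ q.1, x ∈ Finset.Icc 2 n) ∧
      PartOn (Finset.Icc 2 n \ q.1.toFinset) (m-1) q.2 ∧ (partWeight q.2 : ℤ) = ℓ} := by
    refine Finite.of_injective (fun q =>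
      ((⟨q.1.1, ?_⟩ : {r // r ∈ nodupLists (Finset.Icc 2 n)}),
       (⟨q.1.2, ?_⟩ : {Q // Q ∈ (nodupLists (Finset.Icc 2 n)).powerset}))) ?_
    · exact mem_nodupLists.mpr q.2.1
    · refine Finset.mem_powerset.mpr fun b hb => mem_nodupLists.mpr
        ⟨(q.2.2.1.2.1 b hb).2, fun x hx => ?_⟩
      have := (q.2.2.1.2.2.2 x).mp ⟨b, hb, hx⟩
      exact (Finset.mem_sdiff.mp this).1
    · intro q q' h
      apply Subtype.ext
      have h1 := congrArg (fun z => z.1.1) h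
      have h2 := congrArg (fun z => z.2.1) h
      exact Prod.ext h1 h2
  rw [← Nat.card_sum]
  apply Nat.card_congr
  refine
    { toFun := fun x =>
        let b₀ := x.1.choose (fun b => (1:ℕ) ∈ b) (existsUnique_block x.2.1 h1Icc)
        have hb₀m : b₀ ∈ x.1 := x.1.choose_mem _ _
        have hb₀1 : (1:ℕ) ∈ b₀ := x.1.choose_property _ _
        if hh : b₀.headI = 1 then
          Sum.inr ⟨(b₀.tail, x.1.erase b₀),
            have hB := phiB hn x.2.1 hb₀m hh (x.2.1.2.1 b₀ hb₀m).1
            ⟨⟨hB.2.1, hB.2.2.1⟩, hB.2.2.2.1, by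
              have := hB.2.2.2.2
              have hw := x.2.2
              push_cast at *
              omega⟩⟩
        else
          Sum.inl ⟨⟨insert (b₀.erase 1) (x.1.erase b₀),
            (phiA hn x.2.1 hb₀m hb₀1 hh).1, by
              have := (phiA hn x.2.1 hb₀m hb₀1 hh).2.1
              have hw := x.2.2
              push_cast at *
              omega⟩,
            ⟨b₀.getD (b₀.idxOf 1 - 1) 0, (phiA hn x.2.1 hb₀m hb₀1 hh).2.2.1⟩⟩
      invFun := fun s =>
        match s with
        | Sum.inl ⟨⟨Q, hQ, hw⟩, ⟨y, hy⟩⟩ =>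
          let c := Q.choose (fun b => y ∈ b) (existsUnique_block hQ hy)
          have hcm : c ∈ Q := Q.choose_mem _ _
          have hcy : y ∈ c := Q.choose_property _ _
          ⟨insert (c.insertIdx (c.idxOf y + 1) 1) (Q.erase c),
            (psiA hn ⟨hQ.1, hQ.2.1, hQ.2.2.1, hQ.2.2.2⟩ hcm hcy).1, by
              have := (psiA hn ⟨hQ.1, hQ.2.1, hQ.2.2.1, hQ.2.2.2⟩ hcm hcy).2.1
              push_cast at *
              omega⟩
        | Sum.inr ⟨(r, Q), ⟨hr, hQ, hw⟩⟩ =>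
          ⟨insert (1 :: r) Q, (psiB hn (by omega) hr.1 hr.2 hQ).1, by
            have := (psiB hn (by omega) hr.1 hr.2 hQ).2.1
            push_cast at *
            omega⟩
      left_inv := by
        rintro ⟨P, hP, hw⟩
        dsimp only
        set b₀ := P.choose (fun b => (1:ℕ) ∈ b)
          (existsUnique_block hP h1Icc) with hb₀def
        have hb₀m : b₀ ∈ P := P.choose_mem _ _
        have hb₀1 : (1:ℕ) ∈ b₀ := P.choose_property _ _
        by_cases hh : b₀.headI = 1
        · rw [dif_pos hh]
          apply Subtype.ext
          dsimp only
          have hB := phiB hn hP hb₀m hh (hP.2.1 b₀ hb₀m).1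
          rw [← hB.1, Finset.insert_erase hb₀m]
        · rw [dif_neg hh]
          apply Subtype.ext
          dsimp only
          have hA := phiA hn hP hb₀m hb₀1 hh
          set y := b₀.getD (b₀.idxOf 1 - 1) 0 with hydef
          set P' := insert (b₀.erase 1) (P.erase b₀) with hP'def
          have hQ' : PartOn (Finset.Icc 2 n) m P' := hA.1
          have hyer : y ∈ b₀.erase 1 := hA.2.2.2.1
          have he_not : b₀.erase 1 ∉ P.erase b₀ := hA.2.2.2.2
          have hcc : P'.choose (fun b => y ∈ b) (existsUnique_block hQ' hA.2.2.1) =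
              b₀.erase 1 := by
            refine (existsUnique_block hQ' hA.2.2.1).unique
              ⟨P'.choose_mem _ _, P'.choose_property _ _⟩
              ⟨Finset.mem_insert_self _ _, hyer⟩
          rw [hcc]
          have hre : (b₀.erase 1).insertIdx ((b₀.erase 1).idxOf y + 1) 1 = b₀ :=
            reinsert b₀ 1 (hP.2.1 b₀ hb₀m).2 hb₀1 hh
          rw [hre, Finset.erase_insert he_not, Finset.insert_erase hb₀m]
      right_inv := by
        rintro (⟨⟨Q, hQ, hw⟩, ⟨y, hy⟩⟩ | ⟨⟨r, Q⟩, ⟨hr, hQ, hw⟩⟩)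
        · dsimp only
          set c := Q.choose (fun b => y ∈ b) (existsUnique_block hQ hy) with hcdef
          have hcm : c ∈ Q := Q.choose_mem _ _
          have hcy : y ∈ c := Q.choose_property _ _
          have hA := psiA hn hQ hcm hcy
          set c' := c.insertIdx (c.idxOf y + 1) 1 with hc'def
          set P := insert c' (Q.erase c) with hPdef
          have hPart : PartOn (Finset.Icc 1 n) m P := hA.1
          have hb0 : P.choose (fun b => (1:ℕ) ∈ b) (existsUnique_block hPart h1Icc) = c' := by
            refine (existsUnique_block hPart h1Icc).unique
              ⟨P.choose_mem _ _, P.choose_property _ _⟩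
              ⟨Finset.mem_insert_self _ _, hA.2.2.2.1⟩
          have hcond : ¬((P.choose (fun b => (1:ℕ) ∈ b)
              (existsUnique_block hPart h1Icc)).headI = 1) := by
            rw [hb0]
            exact hA.2.2.2.2.1
          rw [dif_neg hcond]
          refine congrArg Sum.inl (Prod.ext (Subtype.ext ?_) (Subtype.ext ?_))
          · dsimp only
            rw [hb0, hA.2.2.2.2.2.1, Finset.erase_insert hA.2.2.1, Finset.insert_erase hcm]
          · dsimp only
            rw [hb0]
            exact hA.2.2.2.2.2.2
        · dsimp only
          have hB := psiB hn (by omega : 1 ≤ m) hr.1 hr.2 hQ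
          set P := insert (1 :: r) Q with hPdef
          have hPart : PartOn (Finset.Icc 1 n) m P := hB.1
          have hb0 : P.choose (fun b => (1:ℕ) ∈ b) (existsUnique_block hPart h1Icc) =
              1 :: r := by
            refine (existsUnique_block hPart h1Icc).unique
              ⟨P.choose_mem _ _, P.choose_property _ _⟩
              ⟨Finset.mem_insert_self _ _, List.mem_cons_self⟩
          have hcond : (P.choose (fun b => (1:ℕ) ∈ b)
              (existsUnique_block hPart h1Icc)).headI = 1 := by
            rw [hb0]
            rfl
          rw [dif_pos hcond]
          refine congrArg Sum.inr (Subtype.ext (Prod.ext ?_ ?_))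
          · dsimp only
            rw [hb0]
            rfl
          · dsimp only
            rw [hb0]
            exact Finset.erase_insert hB.2.2
           }

set_option maxHeartbeats 1000000 in
lemma card_nodup_lists (n j : ℕ) :
    ((nodupLists (Finset.Icc 2 n)).filter fun r => r.length = j).card =
      (n - 1).choose j * j.factorial := by
  classical
  have hcard : Fintype.card ↥(Finset.Icc 2 n) = n - 1 := by
    rw [Fintype.card_coe, Nat.card_Icc]
    omega
  have E : ↥((nodupLists (Finset.Icc 2 n)).filter fun r => r.length = j) ≃
      (Fin j ↪ ↥(Finset.Icc 2 n)) := by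
    refine
      { toFun := fun r =>
          have hmem := Finset.mem_filter.mp r.2
          have hnl := mem_nodupLists.mp hmem.1
          have hlen : r.1.length = j := hmem.2
          ⟨fun i => ⟨r.1.get (Fin.cast hlen.symm i),
            hnl.2 _ (r.1.get_mem _)⟩, ?_⟩
        invFun := fun f =>
          ⟨List.ofFn (fun i => (f i : ℕ)), ?_⟩
        left_inv := ?_
        right_inv := ?_ }
    · intro i₁ i₂ h
      have hmem := Finset.mem_filter.mp r.2
      have hnl := mem_nodupLists.mp hmem.1
      have h2 : r.1.get (Fin.cast hmem.2.symm i₁) = r.1.get (Fin.cast hmem.2.symm i₂) := by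
        simpa [Subtype.ext_iff] using h
      have h3 := (hnl.1.get_inj_iff).mp h2
      simpa [Fin.ext_iff] using h3
    · refine Finset.mem_filter.mpr ⟨mem_nodupLists.mpr ⟨?_, ?_⟩, by simp⟩
      · rw [List.nodup_ofFn]
        intro i₁ i₂ h
        exact f.injective (Subtype.ext h)
      · intro x hx
        obtain ⟨i, hi⟩ := List.mem_ofFn.mp hx
        rw [← hi]
        exact (f i).2
    · intro r
      apply Subtype.ext
      dsimp only
      apply List.ext_getElem
      · simp [(Finset.mem_filter.mp r.2).2]
      · intro i h1 h2
        simp [List.getElem_ofFn]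
    · intro f
      apply DFunLike.ext
      intro i
      apply Subtype.ext
      dsimp only
      simp [List.get_ofFn]
  rw [← Fintype.card_coe, Fintype.card_congr E, Fintype.card_embedding_eq, hcard,
    Fintype.card_fin, Nat.descFactorial_eq_factorial_mul_choose, mul_comm]

lemma weightedLah_eq_WOn (ℓ : ℤ) (n m : ℕ) : weightedLah ℓ n m = WOn ℓ (Finset.Icc 1 n) m := rfl

lemma cardTA (n m : ℕ) (hn : 2 ≤ n) (ℓ : ℤ) :
    Nat.card ({P : Finset (List ℕ) // PartOn (Finset.Icc 2 n) m P ∧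
        (partWeight P : ℤ) = ℓ - 1} × {y : ℕ // y ∈ Finset.Icc 2 n}) =
      (n - 1) * weightedLah (ℓ - 1) (n - 1) m := by
  classical
  rw [Nat.card_prod]
  have h1 : Nat.card {y : ℕ // y ∈ Finset.Icc 2 n} = n - 1 := by
    rw [Nat.card_eq_fintype_card, Fintype.card_coe, Nat.card_Icc]
    omega
  have h2 : Nat.card {P : Finset (List ℕ) // PartOn (Finset.Icc 2 n) m P ∧
      (partWeight P : ℤ) = ℓ - 1} = weightedLah (ℓ - 1) (n - 1) m := by
    have h3 : WOn (ℓ-1) (Finset.Icc 2 n) m = weightedLah (ℓ - 1) (n - 1) m := by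
      rw [WOn_card]
      have hc : (Finset.Icc 2 n).card = n - 1 := by
        rw [Nat.card_Icc]
        omega
      rw [hc, weightedLah_eq_WOn]
    exact h3
  rw [h1, h2, mul_comm]

lemma cardTB (n m : ℕ) (hn : 2 ≤ n) (ℓ : ℤ) :
    Nat.card {q : List ℕ × Finset (List ℕ) //
        (q.1.Nodup ∧ ∀ x ∈ q.1, x ∈ Finset.Icc 2 n) ∧
        PartOn (Finset.Icc 2 n \ q.1.toFinset) (m-1) q.2 ∧ (partWeight q.2 : ℤ) = ℓ} =
      ∑ j ∈ Finset.range n,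
        (n - 1).choose j * j.factorial * weightedLah ℓ (n - 1 - j) (m - 1) := by
  classical
  have e1 : {q : List ℕ × Finset (List ℕ) //
        (q.1.Nodup ∧ ∀ x ∈ q.1, x ∈ Finset.Icc 2 n) ∧
        PartOn (Finset.Icc 2 n \ q.1.toFinset) (m-1) q.2 ∧ (partWeight q.2 : ℤ) = ℓ} ≃
      Σ r : ↥(nodupLists (Finset.Icc 2 n)),
        {Q : Finset (List ℕ) // PartOn (Finset.Icc 2 n \ (r : List ℕ).toFinset) (m-1) Q ∧
          (partWeight Q : ℤ) = ℓ} :=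
    { toFun := fun q => ⟨⟨q.1.1, mem_nodupLists.mpr q.2.1⟩, ⟨q.1.2, q.2.2.1, q.2.2.2⟩⟩
      invFun := fun s => ⟨(s.1.1, s.2.1), mem_nodupLists.mp s.1.2, s.2.2.1, s.2.2.2⟩
      left_inv := fun q => rfl
      right_inv := fun s => rfl }
  rw [Nat.card_congr e1]
  haveI : ∀ r : ↥(nodupLists (Finset.Icc 2 n)),
      Finite {Q : Finset (List ℕ) // PartOn (Finset.Icc 2 n \ (r : List ℕ).toFinset) (m-1) Q ∧
        (partWeight Q : ℤ) = ℓ} := fun r => finite_partOn _ _ _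
  rw [nat_card_sigma]
  have hterm : ∀ r : ↥(nodupLists (Finset.Icc 2 n)),
      Nat.card {Q : Finset (List ℕ) //
          PartOn (Finset.Icc 2 n \ (r : List ℕ).toFinset) (m-1) Q ∧ (partWeight Q : ℤ) = ℓ} =
        weightedLah ℓ (n - 1 - (r : List ℕ).length) (m-1) := by
    intro r
    obtain ⟨hnd, hsub⟩ := mem_nodupLists.mp r.2
    have hsubF : (r : List ℕ).toFinset ⊆ Finset.Icc 2 n := fun x hx =>
      hsub x (List.mem_toFinset.mp hx)
    have hc : (Finset.Icc 2 n \ (r : List ℕ).toFinset).card = n - 1 - (r : List ℕ).length := by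
      rw [Finset.card_sdiff_of_subset hsubF, Nat.card_Icc, List.toFinset_card_of_nodup hnd]
      omega
    have h3 : WOn ℓ (Finset.Icc 2 n \ (r : List ℕ).toFinset) (m-1) =
        weightedLah ℓ (n - 1 - (r : List ℕ).length) (m-1) := by
      rw [WOn_card, hc, weightedLah_eq_WOn]
    exact h3
  simp only [hterm]
  rw [Finset.sum_coe_sort (nodupLists (Finset.Icc 2 n))
    (fun r => weightedLah ℓ (n - 1 - r.length) (m-1))]
  have hmap : ∀ r ∈ nodupLists (Finset.Icc 2 n), r.length ∈ Finset.range n := by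
    intro r hr
    have h1 := length_lt_of_mem_nodupLists hr
    rw [Nat.card_Icc] at h1
    exact Finset.mem_range.mpr (by omega)
  rw [← Finset.sum_fiberwise_of_maps_to hmap
    (fun r => weightedLah ℓ (n - 1 - r.length) (m-1))]
  refine Finset.sum_congr rfl fun j hj => ?_
  rw [Finset.sum_congr rfl (fun r hr => by rw [(Finset.mem_filter.mp hr).2]),
    Finset.sum_const, smul_eq_mul, card_nodup_lists]

/-- the recurrence
`W(ℓ,n,m) = (n-1)·W(ℓ-1,n-1,m) + Σ_{j=0}^{n-1} C(n-1,j)·j!·W(ℓ,n-1-j,m-1)`. -/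
theorem stmt_7 (n m : ℕ) (hn : 2 ≤ n) (hm : 2 ≤ m) (ℓ : ℤ) (hℓ : 0 ≤ ℓ) :
    weightedLah ℓ n m =
      (n - 1) * weightedLah (ℓ - 1) (n - 1) m +
        ∑ j ∈ Finset.range n,
          (n - 1).choose j * j.factorial * weightedLah ℓ (n - 1 - j) (m - 1) := by
  have h := card_split n m hn hm ℓ
  rw [weightedLah_eq_WOn]
  unfold WOn
  rw [h, cardTA n m hn ℓ, cardTB n m hn ℓ]
end

section
/- For integers n ≥ m ≥ 1 and ℓ ≥ 0, one has m! · W(ℓ, n, m) = Σ_{(b_1,…,b_m)} (n! / (b_1 · b_2 ⋯ b_m)) · #{(j_1,…,j_m) ∈ ℤ^m : j_1 + ⋯ + j_m = ℓ and 0 ≤ j_i ≤ b_i − 1 for all i}, where the outer sum runs over all m-tuples (b_1,…,b_m) of positive integers with b_1 + ⋯ + b_m = n. -/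
open Finset Polynomial

section Aux

/-- orderings of a finset as lists -/
def ords (s : Finset ℕ) : Finset (List ℕ) := (s.sort (· ≤ ·)).permutations.toFinset

lemma mem_ords {s : Finset ℕ} {l : List ℕ} : l ∈ ords s ↔ l.Nodup ∧ l.toFinset = s := by
  rw [ords, List.mem_toFinset, List.mem_permutations]
  constructor
  · intro hp
    exact ⟨hp.nodup_iff.2 (s.sort_nodup _), by
      rw [List.toFinset_eq_of_perm _ _ hp, Finset.sort_toFinset]⟩
  · rintro ⟨h1, h2⟩
    rw [← Multiset.coe_eq_coe]
    apply Multiset.Nodup.toFinset_inj (Multiset.coe_nodup.2 h1)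
      (Multiset.coe_nodup.2 (s.sort_nodup _))
    show l.toFinset = (s.sort (· ≤ ·)).toFinset
    rw [h2, Finset.sort_toFinset]

lemma card_ords (s : Finset ℕ) : (ords s).card = (s.card).factorial := by
  rw [ords, List.toFinset_card_of_nodup (List.nodup_permutations _ (s.sort_nodup _)),
    List.length_permutations, Finset.length_sort]

lemma blockWeight_lt_length {l : List ℕ} (h : l ≠ []) : blockWeight l < l.length := by
  obtain ⟨a, t, rfl⟩ := List.exists_cons_of_ne_nil h
  have h1 : blockWeight (a::t) = t.countP (fun x => decide (x < a)) := by
    simp [blockWeight, List.countP_cons]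
    rfl
  rw [h1, List.length_cons]
  exact Nat.lt_succ_of_le List.countP_le_length

lemma blockWeight_eq_card {l : List ℕ} (h : l.Nodup) :
    blockWeight l = (l.toFinset.filter (fun x => x < l.headI)).card := by
  rw [blockWeight, List.countP_eq_length_filter, ← List.toFinset_card_of_nodup (h.filter _),
    List.toFinset_filter]
  simp

end Aux

section Rank
lemma rank_orderEmb (s : Finset ℕ) (k : Fin s.card) :
    (s.filter (fun x => x < s.orderEmbOfFin rfl k)).card = k := by
  have hst : StrictMono (s.orderEmbOfFin rfl) := (s.orderEmbOfFin rfl).strictMono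
  have himg : s.filter (fun x => x < s.orderEmbOfFin rfl k) =
      (Finset.Iio k).image (fun i => s.orderEmbOfFin rfl i) := by
    ext x
    simp only [Finset.mem_filter, Finset.mem_image, Finset.mem_Iio]
    constructor
    · rintro ⟨hx, hlt⟩
      have : x ∈ Set.range (s.orderEmbOfFin rfl) := by
        rw [Finset.range_orderEmbOfFin]; exact hx
      obtain ⟨i, rfl⟩ := this
      exact ⟨i, hst.lt_iff_lt.1 hlt, rfl⟩
    · rintro ⟨i, hik, rfl⟩
      exact ⟨Finset.orderEmbOfFin_mem _ _ _, hst hik⟩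
  rw [himg, Finset.card_image_of_injective _ hst.injective, Fin.card_Iio]

lemma rank_unique {s : Finset ℕ} {a : ℕ} (ha : a ∈ s) {j : ℕ} (hj : j < s.card)
    (h : (s.filter (fun x => x < a)).card = j) : a = s.orderEmbOfFin rfl ⟨j, hj⟩ := by
  have : a ∈ Set.range (s.orderEmbOfFin rfl) := by
    rw [Finset.range_orderEmbOfFin]; exact ha
  obtain ⟨i, rfl⟩ := this
  congr 1
  rw [rank_orderEmb] at h
  exact Fin.ext h

lemma card_ords_filter_weight (s : Finset ℕ) {j : ℕ} (hj : j < s.card) :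
    ((ords s).filter fun l => blockWeight l = j).card = (s.card - 1).factorial := by
  classical
  set a0 : ℕ := s.orderEmbOfFin rfl ⟨j, hj⟩ with ha0
  have ha0s : a0 ∈ s := Finset.orderEmbOfFin_mem _ _ _
  have key : ((ords s).filter fun l => blockWeight l = j) =
      (ords (s.erase a0)).image (fun t => a0 :: t) := by
    ext l
    simp only [Finset.mem_filter, Finset.mem_image, mem_ords]
    constructor
    · rintro ⟨⟨hnd, hfs⟩, hw⟩
      have hne : l ≠ [] := by
        rintro rfl
        simp at hfs
        rw [← hfs] at hj; simp at hj
      obtain ⟨a, t, rfl⟩ := List.exists_cons_of_ne_nil hne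
      have hwc : (s.filter (fun x => x < a)).card = j := by
        rw [blockWeight_eq_card hnd] at hw
        rwa [hfs, List.headI_cons] at hw
      have has : a ∈ s := by rw [← hfs]; simp
      have : a = a0 := rank_unique has hj hwc
      subst this
      refine ⟨t, ⟨(List.nodup_cons.1 hnd).2, ?_⟩, rfl⟩
      have hat : a0 ∉ t := (List.nodup_cons.1 hnd).1
      rw [List.toFinset_cons] at hfs
      rw [← hfs, Finset.erase_insert (by simpa using hat)]
    · rintro ⟨t, ⟨hnd, hfs⟩, rfl⟩
      have hat : a0 ∉ t := by
        rw [← List.mem_toFinset, hfs]; exact Finset.notMem_erase _ _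
      have hnd' : (a0 :: t).Nodup := List.nodup_cons.2 ⟨hat, hnd⟩
      have hfs' : (a0 :: t).toFinset = s := by
        rw [List.toFinset_cons, hfs, Finset.insert_erase ha0s]
      refine ⟨⟨hnd', hfs'⟩, ?_⟩
      rw [blockWeight_eq_card hnd', hfs', List.headI_cons, ha0]
      exact rank_orderEmb s ⟨j, hj⟩
  rw [key, Finset.card_image_of_injective _ (fun t t' h => by simpa using h),
    card_ords, Finset.card_erase_of_mem ha0s]
end Rank

section SP
open Classical in
noncomputable def SP (m : ℕ) (s : Finset ℕ) (b : Fin m → ℕ) : Finset (Fin m → Finset ℕ) :=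
  (Fintype.piFinset fun _ : Fin m => s.powerset).filter fun g =>
    (∀ i, (g i).card = b i) ∧ (∀ i i', i ≠ i' → ∀ x ∈ g i, x ∉ g i') ∧
    ∀ x, x ∈ s ↔ ∃ i, x ∈ g i

lemma mem_SP {m : ℕ} {s : Finset ℕ} {b : Fin m → ℕ} {g : Fin m → Finset ℕ} :
    g ∈ SP m s b ↔ (∀ i, g i ⊆ s) ∧ (∀ i, (g i).card = b i) ∧
      (∀ i i', i ≠ i' → ∀ x ∈ g i, x ∉ g i') ∧ ∀ x, x ∈ s ↔ ∃ i, x ∈ g i := by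
  simp only [SP, Finset.mem_filter, Fintype.mem_piFinset, Finset.mem_powerset, and_assoc]

lemma SP_card (m : ℕ) : ∀ (s : Finset ℕ) (b : Fin m → ℕ), (∑ i, b i) = s.card →
    (∏ i, (b i).factorial) * (SP m s b).card = (s.card).factorial := by
  induction m with
  | zero =>
    intro s b hsum
    classical
    rw [Finset.univ_eq_empty, Finset.sum_empty] at hsum
    have hSP : SP 0 s b = Fintype.piFinset fun _ : Fin 0 => s.powerset := by
      apply Finset.filter_true_of_mem
      intro g _
      refine ⟨fun i => i.elim0, fun i => i.elim0, fun x => ?_⟩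
      constructor
      · intro hx
        exact absurd (Finset.card_pos.2 ⟨x, hx⟩) (by omega)
      · rintro ⟨i, -⟩; exact i.elim0
    rw [hSP, Finset.univ_eq_empty, Finset.prod_empty, one_mul, Fintype.card_piFinset]
    simp [← hsum]
  | succ m ih =>
    intro s b hsum
    classical
    have hlast_le : b (Fin.last m) ≤ s.card := by
      rw [← hsum, Fin.sum_univ_castSucc]; omega
    have hkey : ∀ g ∈ SP (m+1) s b, g (Fin.last m) ∈ s.powersetCard (b (Fin.last m)) := by
      intro g hg
      obtain ⟨h1, h2, _, _⟩ := mem_SP.1 hg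
      exact Finset.mem_powersetCard.2 ⟨h1 _, h2 _⟩
    have hcard := Finset.card_eq_sum_card_fiberwise hkey
    have hfib : ∀ t ∈ s.powersetCard (b (Fin.last m)),
        ((SP (m+1) s b).filter fun g => g (Fin.last m) = t).card
          = (SP m (s \ t) (fun i => b i.castSucc)).card := by
      intro t ht
      obtain ⟨hts, htc⟩ := Finset.mem_powersetCard.1 ht
      apply Finset.card_bij (fun g _ => fun i : Fin m => g i.castSucc)
      · rintro g hg
        obtain ⟨hg', hgt⟩ := Finset.mem_filter.1 hg
        obtain ⟨h1, h2, h3, h4⟩ := mem_SP.1 hg'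
        refine mem_SP.2 ⟨fun i => ?_, fun i => h2 _, fun i i' hne x hx => ?_, fun x => ?_⟩
        · intro x hx
          rw [Finset.mem_sdiff]
          refine ⟨h1 _ hx, ?_⟩
          rw [← hgt]
          exact h3 _ _ (Fin.ne_last_of_lt (Fin.castSucc_lt_last i)) x hx
        · exact h3 _ _ (by simpa [Fin.castSucc_inj] using hne) x hx
        · rw [Finset.mem_sdiff]
          constructor
          · rintro ⟨hxs, hxt⟩
            obtain ⟨i, hi⟩ := (h4 x).1 hxs
            have : i ≠ Fin.last m := by
              rintro rfl; rw [hgt] at hi; exact hxt hi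
            obtain ⟨i', rfl⟩ := Fin.exists_castSucc_eq.2 this
            exact ⟨i', hi⟩
          · rintro ⟨i, hi⟩
            refine ⟨h1 _ hi, fun hxt => ?_⟩
            rw [← hgt] at hxt
            exact h3 _ _ (Fin.ne_last_of_lt (Fin.castSucc_lt_last i)) x hi hxt
      · rintro g hg g' hg' hee
        obtain ⟨hg1, hgt⟩ := Finset.mem_filter.1 hg
        obtain ⟨hg1', hgt'⟩ := Finset.mem_filter.1 hg'
        funext i
        induction i using Fin.lastCases with
        | last => rw [hgt, hgt']
        | cast i => exact congrFun hee i
      · rintro h hh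
        obtain ⟨h1, h2, h3, h4⟩ := mem_SP.1 hh
        refine ⟨Fin.snoc h t, Finset.mem_filter.2 ⟨mem_SP.2 ⟨?_, ?_, ?_, ?_⟩, by simp⟩, by
          funext i; simp⟩
        · intro i
          induction i using Fin.lastCases with
          | last => simpa using hts
          | cast i => simpa using (show h i ⊆ s from fun x hx => (Finset.mem_sdiff.1 (h1 i hx)).1)
        · intro i
          induction i using Fin.lastCases with
          | last => simpa using htc
          | cast i => simpa using h2 i
        · intro i i' hne x hx hx'
          induction i using Fin.lastCases with
          | last =>
            induction i' using Fin.lastCases with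
            | last => exact hne rfl
            | cast i' =>
              simp only [Fin.snoc_last] at hx
              simp only [Fin.snoc_castSucc] at hx'
              exact (Finset.mem_sdiff.1 (h1 i' hx')).2 hx
          | cast i =>
            induction i' using Fin.lastCases with
            | last =>
              simp only [Fin.snoc_last] at hx'
              simp only [Fin.snoc_castSucc] at hx
              exact (Finset.mem_sdiff.1 (h1 i hx)).2 hx'
            | cast i' =>
              simp only [Fin.snoc_castSucc] at hx hx'
              exact h3 i i' (by simpa [Fin.castSucc_inj] using hne) x hx hx'
        · intro x
          constructor
          · intro hxs
            by_cases hxt : x ∈ t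
            · exact ⟨Fin.last m, by simpa using hxt⟩
            · obtain ⟨i, hi⟩ := (h4 x).1 (Finset.mem_sdiff.2 ⟨hxs, hxt⟩)
              exact ⟨i.castSucc, by simpa using hi⟩
          · rintro ⟨i, hi⟩
            induction i using Fin.lastCases with
            | last => exact hts (by simpa using hi)
            | cast i =>
              simp only [Fin.snoc_castSucc] at hi
              exact (Finset.mem_sdiff.1 (h1 i hi)).1
    have hsub : ∀ t ∈ s.powersetCard (b (Fin.last m)),
        (∏ i : Fin m, (b i.castSucc).factorial) *
          (SP m (s \ t) (fun i => b i.castSucc)).card = (s.card - b (Fin.last m)).factorial := by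
      intro t ht
      obtain ⟨hts, htc⟩ := Finset.mem_powersetCard.1 ht
      have hc : (s \ t).card = s.card - b (Fin.last m) := by
        rw [Finset.card_sdiff_of_subset hts, htc]
      have hs2 : ∑ i : Fin m, b i.castSucc = s.card - b (Fin.last m) := by
        have h3 := hsum
        rw [Fin.sum_univ_castSucc] at h3
        exact Nat.eq_sub_of_add_eq h3
      rw [← hc]
      apply ih
      rw [hc]
      exact hs2
    calc (∏ i : Fin (m+1), (b i).factorial) * (SP (m+1) s b).card
        = (b (Fin.last m)).factorial * ∑ t ∈ s.powersetCard (b (Fin.last m)),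
            ((∏ i : Fin m, (b i.castSucc).factorial) *
              ((SP (m+1) s b).filter fun g => g (Fin.last m) = t).card) := by
          rw [Fin.prod_univ_castSucc, hcard, Finset.mul_sum, Finset.mul_sum]
          apply Finset.sum_congr rfl
          intro t _
          ring
      _ = (b (Fin.last m)).factorial * ∑ t ∈ s.powersetCard (b (Fin.last m)),
            (s.card - b (Fin.last m)).factorial := by
          congr 1
          apply Finset.sum_congr rfl
          intro t ht
          rw [hfib t ht]
          exact hsub t ht
      _ = (s.card).factorial := by
          rw [Finset.sum_const, Finset.card_powersetCard, smul_eq_mul]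
          rw [show (b (Fin.last m)).factorial * (s.card.choose (b (Fin.last m)) *
            (s.card - b (Fin.last m)).factorial) = s.card.choose (b (Fin.last m)) *
            (b (Fin.last m)).factorial * (s.card - b (Fin.last m)).factorial by ring]
          exact Nat.choose_mul_factorial_mul_factorial hlast_le
end SP

section OTdef

def allB (n : ℕ) : Finset (List ℕ) := (Finset.Icc 1 n).powerset.biUnion ords

lemma mem_allB {n : ℕ} {l : List ℕ} : l ∈ allB n ↔ l.Nodup ∧ l.toFinset ⊆ Finset.Icc 1 n := by
  simp only [allB, Finset.mem_biUnion, Finset.mem_powerset, mem_ords]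
  constructor
  · rintro ⟨t, hts, hnd, rfl⟩; exact ⟨hnd, hts⟩
  · rintro ⟨hnd, hsub⟩; exact ⟨l.toFinset, hsub, hnd, rfl⟩

def GoodT (n m ℓ : ℕ) (f : Fin m → List ℕ) : Prop :=
  (∀ i, f i ≠ [] ∧ (f i).Nodup) ∧
  (∀ i i', i ≠ i' → ∀ x ∈ f i, x ∉ f i') ∧
  (∀ x : ℕ, (∃ i, x ∈ f i) ↔ x ∈ Finset.Icc 1 n) ∧
  ∑ i, blockWeight (f i) = ℓ

open Classical in
noncomputable def OT (n m ℓ : ℕ) : Finset (Fin m → List ℕ) :=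
  (Fintype.piFinset fun _ : Fin m => allB n).filter (GoodT n m ℓ)

lemma mem_OT {n m ℓ : ℕ} {f : Fin m → List ℕ} :
    f ∈ OT n m ℓ ↔ (∀ i, f i ∈ allB n) ∧ GoodT n m ℓ f := by
  simp [OT, Fintype.mem_piFinset]

def Sset (n m : ℕ) : Finset (Fin m → ℕ) :=
  (Fintype.piFinset fun _ : Fin m => Finset.Icc 1 n).filter (fun b => ∑ i, b i = n)

def Tset (n m ℓ : ℕ) : Finset (Fin m → ℕ) :=
  (Fintype.piFinset fun _ : Fin m => Finset.range n).filter (fun j => ∑ i, j i = ℓ)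

def keyOT {m : ℕ} (f : Fin m → List ℕ) : (Fin m → ℕ) × (Fin m → ℕ) :=
  (fun i => (f i).length, fun i => blockWeight (f i))

lemma length_eq_of_OT {n m ℓ : ℕ} {f : Fin m → List ℕ} (hf : f ∈ OT n m ℓ) (i : Fin m) :
    (f i).length = (f i).toFinset.card := by
  obtain ⟨hB, hG⟩ := mem_OT.1 hf
  exact (List.toFinset_card_of_nodup (hG.1 i).2).symm

lemma biUnion_eq_of_OT {n m ℓ : ℕ} {f : Fin m → List ℕ} (hf : f ∈ OT n m ℓ) :
    Finset.univ.biUnion (fun i => (f i).toFinset) = Finset.Icc 1 n := by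
  obtain ⟨hB, hG⟩ := mem_OT.1 hf
  ext x
  simp only [Finset.mem_biUnion, Finset.mem_univ, true_and, List.mem_toFinset]
  exact hG.2.2.1 x

lemma keyOT_mem {n m ℓ : ℕ} : ∀ f ∈ OT n m ℓ, keyOT f ∈ (Sset n m) ×ˢ (Tset n m ℓ) := by
  intro f hf
  obtain ⟨hB, hG⟩ := mem_OT.1 hf
  have hlen : ∀ i, 1 ≤ (f i).length ∧ (f i).length ≤ n := by
    intro i
    constructor
    · exact List.length_pos_iff.2 (hG.1 i).1
    · rw [length_eq_of_OT hf i]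
      calc (f i).toFinset.card ≤ (Finset.Icc 1 n).card :=
            Finset.card_le_card ((mem_allB.1 (hB i)).2)
        _ = n := by rw [Nat.card_Icc]; omega
  have hsum : ∑ i, (f i).length = n := by
    have hdisj : ∀ i ∈ Finset.univ, ∀ i' ∈ Finset.univ, i ≠ i' →
        Disjoint ((f i).toFinset) ((f i').toFinset) := by
      intro i _ i' _ hne
      rw [Finset.disjoint_left]
      intro x hx hx'
      exact hG.2.1 i i' hne x (List.mem_toFinset.1 hx) (List.mem_toFinset.1 hx')
    calc ∑ i, (f i).length = ∑ i, (f i).toFinset.card := by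
          exact Finset.sum_congr rfl fun i _ => length_eq_of_OT hf i
      _ = (Finset.univ.biUnion (fun i => (f i).toFinset)).card :=
          (Finset.card_biUnion hdisj).symm
      _ = n := by rw [biUnion_eq_of_OT hf, Nat.card_Icc]; omega
  refine Finset.mem_product.2 ⟨?_, ?_⟩
  · refine Finset.mem_filter.2 ⟨Fintype.mem_piFinset.2 fun i => ?_, hsum⟩
    exact Finset.mem_Icc.2 ⟨(hlen i).1, (hlen i).2⟩
  · refine Finset.mem_filter.2 ⟨Fintype.mem_piFinset.2 fun i => ?_, hG.2.2.2⟩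
    refine Finset.mem_range.2 (lt_of_lt_of_le (blockWeight_lt_length (hG.1 i).1) (hlen i).2)

lemma OT_card_sum {n m ℓ : ℕ} :
    (OT n m ℓ).card = ∑ p ∈ (Sset n m) ×ˢ (Tset n m ℓ),
      ((OT n m ℓ).filter (fun f => keyOT f = p)).card := by
  classical
  exact Finset.card_eq_sum_card_fiberwise keyOT_mem

lemma fib_empty {n m ℓ : ℕ} {b j : Fin m → ℕ} (h : ¬ ∀ i, j i < b i) :
    ((OT n m ℓ).filter (fun f => keyOT f = (b, j))).card = 0 := by
  classical
  rw [Finset.card_eq_zero]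
  apply Finset.eq_empty_of_forall_notMem
  intro f hf
  obtain ⟨hfO, hkey⟩ := Finset.mem_filter.1 hf
  obtain ⟨hB, hG⟩ := mem_OT.1 hfO
  apply h
  intro i
  have h1 : (f i).length = b i := congrFun (congrArg Prod.fst hkey) i
  have h2 : blockWeight (f i) = j i := congrFun (congrArg Prod.snd hkey) i
  rw [← h1, ← h2]
  exact blockWeight_lt_length (hG.1 i).1

lemma fib_card {n m ℓ : ℕ} {b j : Fin m → ℕ} (hb : b ∈ Sset n m) (hj : ∑ i, j i = ℓ)
    (hjb : ∀ i, j i < b i) :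
    ((OT n m ℓ).filter (fun f => keyOT f = (b, j))).card
      = (SP m (Finset.Icc 1 n) b).card * ∏ i, (b i - 1).factorial := by
  classical
  obtain ⟨hbp, hbs⟩ := Finset.mem_filter.1 hb
  have hb1 : ∀ i, 1 ≤ b i := fun i => (Finset.mem_Icc.1 (Fintype.mem_piFinset.1 hbp i)).1
  have hmap : ∀ f ∈ (OT n m ℓ).filter (fun f => keyOT f = (b, j)),
      (fun i => (f i).toFinset) ∈ SP m (Finset.Icc 1 n) b := by
    intro f hf
    obtain ⟨hfO, hkey⟩ := Finset.mem_filter.1 hf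
    obtain ⟨hB, hG⟩ := mem_OT.1 hfO
    refine mem_SP.2 ⟨fun i => (mem_allB.1 (hB i)).2, fun i => ?_, fun i i' hne x hx hx' => ?_,
      fun x => ?_⟩
    · rw [← length_eq_of_OT hfO i]
      exact congrFun (congrArg Prod.fst hkey) i
    · exact hG.2.1 i i' hne x (List.mem_toFinset.1 hx) (List.mem_toFinset.1 hx')
    · rw [← hG.2.2.1 x]
      simp [List.mem_toFinset]
  rw [Finset.card_eq_sum_card_fiberwise hmap]
  have hinner : ∀ g ∈ SP m (Finset.Icc 1 n) b,
      (((OT n m ℓ).filter (fun f => keyOT f = (b, j))).filter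
          (fun f => (fun i => (f i).toFinset) = g))
        = Fintype.piFinset (fun i => (ords (g i)).filter (fun l => blockWeight l = j i)) := by
    intro g hg
    obtain ⟨hgsub, hgcard, hgdis, hgcov⟩ := mem_SP.1 hg
    ext f
    simp only [Finset.mem_filter, Fintype.mem_piFinset, mem_ords]
    constructor
    · rintro ⟨⟨hfO, hkey⟩, hfg⟩
      intro i
      obtain ⟨hB, hG⟩ := mem_OT.1 hfO
      exact ⟨⟨(hG.1 i).2, congrFun hfg i⟩, congrFun (congrArg Prod.snd hkey) i⟩
    · intro h
      have hnd : ∀ i, (f i).Nodup := fun i => (h i).1.1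
      have htf : ∀ i, (f i).toFinset = g i := fun i => (h i).1.2
      have hw : ∀ i, blockWeight (f i) = j i := fun i => (h i).2
      have hne : ∀ i, f i ≠ [] := by
        intro i hnil
        have := htf i
        rw [hnil] at this
        have hc := hgcard i
        rw [← this] at hc
        simp at hc
        have := hb1 i
        omega
      have hlen : ∀ i, (f i).length = b i := by
        intro i
        rw [← List.toFinset_card_of_nodup (hnd i), htf i, hgcard i]
      refine ⟨⟨mem_OT.2 ⟨fun i => mem_allB.2 ⟨hnd i, (htf i) ▸ hgsub i⟩,
        ⟨fun i => ⟨hne i, hnd i⟩, fun i i' hne' x hx hx' => ?_, fun x => ?_, ?_⟩⟩, ?_⟩, ?_⟩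
      · exact hgdis i i' hne' x ((htf i) ▸ List.mem_toFinset.2 hx)
          ((htf i') ▸ List.mem_toFinset.2 hx')
      · rw [hgcov x]
        constructor
        · rintro ⟨i, hi⟩
          exact ⟨i, (htf i) ▸ List.mem_toFinset.2 hi⟩
        · rintro ⟨i, hi⟩
          exact ⟨i, List.mem_toFinset.1 ((htf i).symm ▸ hi)⟩
      · rw [Finset.sum_congr rfl (fun i _ => hw i)]
        exact hj
      · rw [keyOT, Prod.mk.injEq]
        exact ⟨funext hlen, funext hw⟩
      · exact funext htf
  calc ∑ g ∈ SP m (Finset.Icc 1 n) b,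
        (((OT n m ℓ).filter (fun f => keyOT f = (b, j))).filter
          (fun f => (fun i => (f i).toFinset) = g)).card
      = ∑ _g ∈ SP m (Finset.Icc 1 n) b, ∏ i, (b i - 1).factorial := by
        apply Finset.sum_congr rfl
        intro g hg
        rw [hinner g hg, Fintype.card_piFinset]
        apply Finset.prod_congr rfl
        intro i _
        obtain ⟨hgsub, hgcard, hgdis, hgcov⟩ := mem_SP.1 hg
        rw [card_ords_filter_weight _ (by rw [hgcard i]; exact hjb i), hgcard i]
    _ = (SP m (Finset.Icc 1 n) b).card * ∏ i, (b i - 1).factorial := by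
        rw [Finset.sum_const, smul_eq_mul]

end OTdef

section StepA

noncomputable def Wfin (n m ℓ : ℕ) : Finset (Finset (List ℕ)) :=
  (OT n m ℓ).image (fun f => Finset.univ.image f)

lemma OT_injective {n m ℓ : ℕ} {f : Fin m → List ℕ} (hf : f ∈ OT n m ℓ) :
    Function.Injective f := by
  obtain ⟨hB, hG⟩ := mem_OT.1 hf
  intro i i' hii
  by_contra hne
  obtain ⟨x, hx⟩ := List.exists_mem_of_ne_nil _ (hG.1 i).1
  exact hG.2.1 i i' hne x hx (hii ▸ hx)

lemma sum_blockWeight_image {m : ℕ} {f : Fin m → List ℕ} (hf : Function.Injective f) :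
    ∑ b ∈ Finset.univ.image f, blockWeight b = ∑ i, blockWeight (f i) :=
  Finset.sum_image (fun i _ i' _ h => hf h)

lemma mem_Wfin {n m ℓ : ℕ} {P : Finset (List ℕ)} :
    P ∈ Wfin n m ℓ ↔ IsLOPartition n m P ∧ partWeight P = ℓ := by
  constructor
  · intro hP
    obtain ⟨f, hfO, rfl⟩ := Finset.mem_image.1 hP
    obtain ⟨hB, hG⟩ := mem_OT.1 hfO
    have hinj := OT_injective hfO
    refine ⟨⟨?_, ?_, ?_, ?_⟩, ?_⟩
    · rw [Finset.card_image_of_injective _ hinj, Finset.card_univ, Fintype.card_fin]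
    · intro b hb
      obtain ⟨i, _, rfl⟩ := Finset.mem_image.1 hb
      exact hG.1 i
    · intro b hb c hc hbc x hxb
      obtain ⟨i, _, rfl⟩ := Finset.mem_image.1 hb
      obtain ⟨i', _, rfl⟩ := Finset.mem_image.1 hc
      exact hG.2.1 i i' (fun h => hbc (by rw [h])) x hxb
    · intro x
      rw [← hG.2.2.1 x]
      constructor
      · rintro ⟨b, hb, hxb⟩
        obtain ⟨i, _, rfl⟩ := Finset.mem_image.1 hb
        exact ⟨i, hxb⟩
      · rintro ⟨i, hxi⟩
        exact ⟨f i, Finset.mem_image_of_mem f (Finset.mem_univ i), hxi⟩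
    · rw [partWeight, sum_blockWeight_image hinj]
      exact hG.2.2.2
  · rintro ⟨⟨hcard, hblocks, hdisj, hcov⟩, hweight⟩
    have hcardP : Fintype.card {l // l ∈ P} = m := by
      rw [Fintype.card_coe]; exact hcard
    have e : Fin m ≃ {l // l ∈ P} := Fintype.equivOfCardEq (by rw [Fintype.card_fin, hcardP])
    have hmemIcc : ∀ b ∈ P, ∀ x ∈ b, x ∈ Finset.Icc 1 n := by
      intro b hb x hx
      exact (hcov x).1 ⟨b, hb, hx⟩
    have hval_inj : Function.Injective (fun i => (e i).1) :=
      fun i i' h => e.injective (Subtype.ext h)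
    have himg : Finset.univ.image (fun i => (e i).1) = P := by
      ext b
      simp only [Finset.mem_image, Finset.mem_univ, true_and]
      constructor
      · rintro ⟨i, rfl⟩; exact (e i).2
      · intro hb; exact ⟨e.symm ⟨b, hb⟩, by simp⟩
    refine Finset.mem_image.2 ⟨fun i => (e i).1, mem_OT.2 ⟨fun i => mem_allB.2
      ⟨(hblocks _ (e i).2).2, fun x hx => hmemIcc _ (e i).2 x (List.mem_toFinset.1 hx)⟩,
      ⟨fun i => hblocks _ (e i).2, fun i i' hne x hx =>
        hdisj _ (e i).2 _ (e i').2 (fun h => hne (hval_inj h)) x hx, fun x => ?_, ?_⟩⟩, himg⟩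
    · rw [← hcov x]
      constructor
      · rintro ⟨i, hi⟩; exact ⟨(e i).1, (e i).2, hi⟩
      · rintro ⟨b, hb, hxb⟩; exact ⟨e.symm ⟨b, hb⟩, by simpa using hxb⟩
    · rw [← sum_blockWeight_image hval_inj, himg]
      exact hweight

lemma Wfiber_card {n m ℓ : ℕ} {P : Finset (List ℕ)} (hP : P ∈ Wfin n m ℓ) :
    ((OT n m ℓ).filter (fun f => Finset.univ.image f = P)).card = m.factorial := by
  classical
  obtain ⟨⟨hcard, hblocks, hdisj, hcov⟩, hweight⟩ := mem_Wfin.1 hP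
  have hmemIcc : ∀ b ∈ P, ∀ x ∈ b, x ∈ Finset.Icc 1 n := fun b hb x hx => (hcov x).1 ⟨b, hb, hx⟩
  set F := (Fintype.piFinset fun _ : Fin m => P).filter
    (fun f => Finset.univ.image f = P) with hF
  have hinj' : ∀ f : Fin m → List ℕ, Finset.univ.image f = P → Function.Injective f := by
    intro f himg
    have : Set.InjOn f ↑(Finset.univ : Finset (Fin m)) := by
      rw [← Finset.card_image_iff, himg, hcard, Finset.card_univ, Fintype.card_fin]
    rw [Finset.coe_univ] at this
    exact fun a b h => this (Set.mem_univ a) (Set.mem_univ b) h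
  have hfil : (OT n m ℓ).filter (fun f => Finset.univ.image f = P) = F := by
    ext f
    rw [hF, Finset.mem_filter, Finset.mem_filter, Fintype.mem_piFinset]
    constructor
    · rintro ⟨hfO, himg⟩
      exact ⟨fun i => himg ▸ Finset.mem_image_of_mem f (Finset.mem_univ i), himg⟩
    · rintro ⟨hfP, himg⟩
      have hinj := hinj' f himg
      refine ⟨mem_OT.2 ⟨fun i => mem_allB.2 ⟨(hblocks _ (hfP i)).2,
        fun x hx => hmemIcc _ (hfP i) x (List.mem_toFinset.1 hx)⟩,
        ⟨fun i => hblocks _ (hfP i), fun i i' hne x hx =>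
          hdisj _ (hfP i) _ (hfP i') (fun h => hne (hinj h)) x hx, fun x => ?_, ?_⟩⟩, himg⟩
      · rw [← hcov x]
        constructor
        · rintro ⟨i, hi⟩; exact ⟨f i, hfP i, hi⟩
        · rintro ⟨b, hb, hxb⟩
          rw [← himg] at hb
          obtain ⟨i, _, rfl⟩ := Finset.mem_image.1 hb
          exact ⟨i, hxb⟩
      · rw [← sum_blockWeight_image hinj, himg]
        exact hweight
  rw [hfil]
  have hcardP : Fintype.card {l // l ∈ P} = m := by rw [Fintype.card_coe]; exact hcard
  have hmemF : ∀ f ∈ F, ∀ i, f i ∈ P := by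
    intro f hf i
    exact Fintype.mem_piFinset.1 (Finset.mem_filter.1 hf).1 i
  have hbij : ∀ f (hf : f ∈ F),
      Function.Bijective (fun i => (⟨f i, hmemF f hf i⟩ : {l // l ∈ P})) := by
    intro f hf
    have hinj := hinj' f (Finset.mem_filter.1 hf).2
    refine (Fintype.bijective_iff_injective_and_card _).2
      ⟨fun a b h => hinj (congrArg Subtype.val h), by rw [Fintype.card_fin, hcardP]⟩
  have hcongr : F.card = Fintype.card (Fin m ≃ {l // l ∈ P}) := by
    rw [← Fintype.card_coe F]
    refine Fintype.card_congr
      { toFun := fun fp => Equiv.ofBijective _ (hbij fp.1 fp.2)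
        invFun := fun e => ⟨fun i => (e i).1, ?_⟩
        left_inv := fun fp => Subtype.ext (funext fun i => rfl)
        right_inv := fun e => Equiv.ext fun i => Subtype.ext rfl }
    refine Finset.mem_filter.2 ⟨Fintype.mem_piFinset.2 fun i => (e i).2, ?_⟩
    ext b
    simp only [Finset.mem_image, Finset.mem_univ, true_and]
    constructor
    · rintro ⟨i, rfl⟩; exact (e i).2
    · intro hb; exact ⟨e.symm ⟨b, hb⟩, by simp⟩
  rw [hcongr, Fintype.card_equiv (Fintype.equivOfCardEq (by rw [Fintype.card_fin, hcardP])),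
    Fintype.card_fin]

lemma weightedLah_eq {n m : ℕ} (ℓ : ℕ) : weightedLah (ℓ : ℤ) n m = (Wfin n m ℓ).card := by
  have hiff : ∀ P : Finset (List ℕ),
      (IsLOPartition n m P ∧ (partWeight P : ℤ) = (ℓ : ℤ)) ↔ P ∈ Wfin n m ℓ := by
    intro P
    rw [mem_Wfin]
    constructor
    · rintro ⟨h1, h2⟩; exact ⟨h1, by exact_mod_cast h2⟩
    · rintro ⟨h1, h2⟩; exact ⟨h1, by exact_mod_cast h2⟩
  rw [weightedLah, Nat.card_congr (Equiv.subtypeEquivRight hiff), Nat.card_eq_fintype_card,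
    Fintype.card_coe]

lemma OT_card_A {n m ℓ : ℕ} : (OT n m ℓ).card = (Wfin n m ℓ).card * m.factorial := by
  classical
  have hmaps : ∀ f ∈ OT n m ℓ, Finset.univ.image f ∈ Wfin n m ℓ := fun f hf =>
    Finset.mem_image_of_mem _ hf
  rw [Finset.card_eq_sum_card_fiberwise hmaps]
  rw [Finset.sum_congr rfl (fun P hP => Wfiber_card hP), Finset.sum_const, smul_eq_mul]

end StepA


/-- `m!·W(ℓ,n,m)` as a sum over compositions `(b 0,…,b (m-1))` of `n`
into `m` positive parts of `(n!/(b 0 ⋯ b (m-1)))` times the number of integer tuples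
`(j 0,…,j (m-1))` with `Σ j i = ℓ` and `0 ≤ j i ≤ b i - 1`. -/
theorem stmt_10 (n m ℓ : ℕ) (hm : 1 ≤ m) (hmn : m ≤ n) :
    (m.factorial : ℚ) * (weightedLah (ℓ : ℤ) n m : ℚ) =
      ∑ b ∈ (Fintype.piFinset fun _ : Fin m => Finset.Icc 1 n).filter
          (fun b => ∑ i, b i = n),
        ((n.factorial : ℚ) / ∏ i, (b i : ℚ)) *
          (((Fintype.piFinset fun i => Finset.range (b i)).filter
            (fun j => ∑ i, j i = ℓ)).card : ℚ) := by
  classical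
  have h1 : (m.factorial : ℚ) * (weightedLah (ℓ : ℤ) n m : ℚ) = ((OT n m ℓ).card : ℚ) := by
    rw [weightedLah_eq ℓ, OT_card_A]
    push_cast
    ring
  rw [h1, OT_card_sum]
  push_cast
  rw [Finset.sum_product]
  apply Finset.sum_congr rfl
  intro b hb
  have hb' : b ∈ Sset n m := hb
  obtain ⟨hbp, hbs⟩ := Finset.mem_filter.1 hb'
  have hb1 : ∀ i, 1 ≤ b i := fun i => (Finset.mem_Icc.1 (Fintype.mem_piFinset.1 hbp i)).1
  have hb2 : ∀ i, b i ≤ n := fun i => (Finset.mem_Icc.1 (Fintype.mem_piFinset.1 hbp i)).2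
  have hSP : (∏ i, (b i).factorial) * (SP m (Finset.Icc 1 n) b).card = n.factorial := by
    have := SP_card m (Finset.Icc 1 n) b (by rw [Nat.card_Icc]; omega)
    rwa [Nat.card_Icc, show n + 1 - 1 = n by omega] at this
  set N := (SP m (Finset.Icc 1 n) b).card with hN
  have hfilterJ : (Tset n m ℓ).filter (fun j => ∀ i, j i < b i)
      = (Fintype.piFinset fun i => Finset.range (b i)).filter (fun j => ∑ i, j i = ℓ) := by
    ext j
    simp only [Tset, Finset.mem_filter, Fintype.mem_piFinset, Finset.mem_range]
    constructor
    · rintro ⟨⟨hr, hs⟩, hlt⟩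
      exact ⟨hlt, hs⟩
    · rintro ⟨hlt, hs⟩
      exact ⟨⟨fun i => lt_of_lt_of_le (hlt i) (hb2 i), hs⟩, hlt⟩
  have hsplit : ∑ j ∈ Tset n m ℓ,
      ((((OT n m ℓ).filter (fun f => keyOT f = (b, j))).card : ℚ))
      = (((Tset n m ℓ).filter (fun j => ∀ i, j i < b i)).card : ℚ) *
          ((N : ℚ) * ∏ i, ((b i - 1).factorial : ℚ)) := by
    rw [← Finset.sum_filter_add_sum_filter_not (Tset n m ℓ) (fun j => ∀ i, j i < b i)]
    have hz : ∑ j ∈ (Tset n m ℓ).filter (fun j => ¬ ∀ i, j i < b i),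
        ((((OT n m ℓ).filter (fun f => keyOT f = (b, j))).card : ℚ)) = 0 := by
      apply Finset.sum_eq_zero
      intro j hj
      obtain ⟨-, hnot⟩ := Finset.mem_filter.1 hj
      rw [fib_empty hnot]
      norm_num
    rw [hz, add_zero]
    rw [Finset.sum_congr rfl (fun j hj => ?_), Finset.sum_const, nsmul_eq_mul]
    obtain ⟨hjT, hjlt⟩ := Finset.mem_filter.1 hj
    obtain ⟨-, hjs⟩ := Finset.mem_filter.1 hjT
    rw [fib_card hb' hjs hjlt]
    push_cast
    ring
  rw [hsplit, hfilterJ]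
  have hprod : (∏ i, ((b i).factorial : ℚ))
      = (∏ i, (b i : ℚ)) * ∏ i, ((b i - 1).factorial : ℚ) := by
    rw [← Finset.prod_mul_distrib]
    apply Finset.prod_congr rfl
    intro i _
    have h := Nat.mul_factorial_pred (show b i ≠ 0 by have := hb1 i; omega)
    exact_mod_cast h.symm
  have hSPQ : (∏ i, ((b i).factorial : ℚ)) * (N : ℚ) = (n.factorial : ℚ) := by
    exact_mod_cast congrArg (Nat.cast : ℕ → ℚ) hSP
  have hbne : (∏ i, (b i : ℚ)) ≠ 0 := by
    apply Finset.prod_ne_zero_iff.2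
    intro i _
    have := hb1 i
    have hne : b i ≠ 0 := by omega
    exact_mod_cast hne
  have hkey : (N : ℚ) * ∏ i, ((b i - 1).factorial : ℚ) = (n.factorial : ℚ) / ∏ i, (b i : ℚ) := by
    rw [eq_div_iff hbne]
    linear_combination hSPQ - (N : ℚ) * hprod
  rw [hkey]
  ring
end

section
/- For integers n ≥ 1, 0 ≤ m ≤ n−1 and 0 ≤ j ≤ n−1, the (n−1−m)-th elementary symmetric function of the n−1 consecutive integers 1−j, 2−j, …, n−1−j (i.e., Σ over all (n−1−m)-element subsets of {1−j,…,n−1−j} of the product of their elements) equals Σ_{i=0}^{n−m−1} (−1)^i · ⟦j, j−i⟧ · ⟦n−j, m+1+i−j⟧, an equality of integers. -/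
open Finset Polynomial

section AuxStirling
open Equiv Equiv.Perm

variable {α : Type*} [Fintype α] [DecidableEq α]

/-- number of cycles (incl. fixed points) -/
def cyc (σ : Perm α) : ℕ := Multiset.card σ.cycleType + (Fintype.card α - σ.support.card)

lemma cyc_one : cyc (1 : Perm α) = Fintype.card α := by
  simp [cyc]

lemma cyc_ne_zero (σ : Perm α) (h : 0 < Fintype.card α) : cyc σ ≠ 0 := by
  rcases eq_or_ne σ 1 with rfl | hσ
  · simp only [cyc, Equiv.Perm.cycleType_one, Multiset.card_zero, Equiv.Perm.support_one,
      Finset.card_empty, Nat.sub_zero, zero_add]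
    omega
  · have : 0 < Multiset.card σ.cycleType := Equiv.Perm.card_cycleType_pos.mpr hσ
    unfold cyc; omega

lemma cyc_swap_mul (σ : Perm α) (a b : α) (ha : σ a = a) (hab : b ≠ a) :
    cyc (Equiv.swap a b * σ) + 1 = cyc σ := by
  have hanm : a ∉ σ.support := by simp [ha]
  by_cases hb : σ b = b
  · -- b is a fixed point: new 2-cycle
    have hbnm : b ∉ σ.support := by simp [hb]
    have hd : (Equiv.swap a b).Disjoint σ := by
      intro x
      by_cases hx : x = a
      · right; rw [hx]; exact ha
      by_cases hx' : x = b
      · right; rw [hx']; exact hb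
      · left; exact Equiv.swap_apply_of_ne_of_ne hx hx'
    have hsupp : (Equiv.swap a b * σ).support = (Equiv.swap a b).support ∪ σ.support :=
      hd.support_mul
    have hss : (Equiv.swap a b).support = {a, b} := Equiv.Perm.support_swap (Ne.symm hab)
    have hcard : (Equiv.swap a b * σ).support.card = 2 + σ.support.card := by
      have hdisj : _root_.Disjoint ({a, b} : Finset α) σ.support := by
        simp only [Finset.disjoint_left, Finset.mem_insert, Finset.mem_singleton]
        rintro x (rfl | rfl) <;> assumption
      rw [hsupp, hss, Finset.card_union_of_disjoint hdisj,
        Finset.card_insert_of_notMem (by simp [Ne.symm hab]), Finset.card_singleton]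
    have hct : (Equiv.swap a b * σ).cycleType = (Equiv.swap a b).cycleType + σ.cycleType :=
      hd.cycleType_mul
    have hcts : (Equiv.swap a b).cycleType = {2} := by
      have := (Equiv.Perm.isCycle_swap (Ne.symm hab)).cycleType
      rw [this, hss]
      simp [Finset.card_insert_of_notMem (by simp [Ne.symm hab] : a ∉ ({b} : Finset α))]
    have hle : (Equiv.swap a b * σ).support.card ≤ Fintype.card α := Finset.card_le_univ _
    unfold cyc
    rw [hct, hcts, hcard] at *
    simp only [Multiset.card_add, Multiset.card_singleton]
    omega
  · -- b moved: merge a into b's cycle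
    have hbmem : b ∈ σ.support := Equiv.Perm.mem_support.2 hb
    set c := σ.cycleOf b with hc
    have hccyc : c.IsCycle := Equiv.Perm.isCycle_cycleOf σ hb
    have hcmem : c ∈ σ.cycleFactorsFinset :=
      Equiv.Perm.cycleOf_mem_cycleFactorsFinset_iff.mpr hbmem
    set r := σ * c⁻¹ with hr
    have hdisj : r.Disjoint c := Equiv.Perm.disjoint_mul_inv_of_mem_cycleFactorsFinset hcmem
    have hσeq : r * c = σ := inv_mul_cancel_right σ c
    have hform : (σ.toList b).formPerm = c := Equiv.Perm.formPerm_toList σ b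
    have hnd : (σ.toList b).Nodup := Equiv.Perm.nodup_toList σ b
    have hlen : 2 ≤ (σ.toList b).length :=
      Equiv.Perm.two_le_length_toList_iff_mem_support.mpr hbmem
    have hal : a ∉ σ.toList b := by
      intro hmem
      rw [Equiv.Perm.mem_toList_iff] at hmem
      exact hanm (hmem.1.mem_support_iff.mp hbmem)
    obtain ⟨t, ht⟩ : ∃ t, σ.toList b = b :: t := by
      have hne : σ.toList b ≠ [] := by
        intro h; rw [h] at hlen; simp at hlen
      refine ⟨(σ.toList b).tail, ?_⟩
      conv_lhs => rw [← List.cons_head_tail hne]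
      congr 1
      have h0 := Equiv.Perm.toList_getElem_zero σ b hbmem
      rwa [List.head_eq_getElem]
    have hmerge : Equiv.swap a b * c = (a :: σ.toList b).formPerm := by
      rw [ht, List.formPerm_cons_cons, ← ht, hform]
    have hndal : (a :: σ.toList b).Nodup := List.nodup_cons.mpr ⟨hal, hnd⟩
    have hlen2 : 2 ≤ (a :: σ.toList b).length := by
      rw [List.length_cons]; omega
    have hmc : (Equiv.swap a b * c).IsCycle := by
      rw [hmerge]; exact List.isCycle_formPerm hndal hlen2
    have hsc : c.support = (σ.toList b).toFinset := by
      rw [← hform]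
      exact List.support_formPerm_of_nodup _ hnd
        (fun x hx => by rw [hx] at hlen; simp at hlen)
    have hms : (Equiv.swap a b * c).support = insert a c.support := by
      rw [hmerge, List.support_formPerm_of_nodup _ hndal
        (fun x hx => by rw [hx] at hlen2; simp at hlen2), List.toFinset_cons, hsc]
    have hbc : b ∈ c.support := by
      rw [hc, Equiv.Perm.mem_support_cycleOf_iff]
      exact ⟨Equiv.Perm.SameCycle.refl σ b, hbmem⟩
    have hsups : σ.support = r.support ∪ c.support := by
      rw [← hσeq]; exact hdisj.support_mul
    have hsdisj : _root_.Disjoint r.support c.support :=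
      Equiv.Perm.disjoint_iff_disjoint_support.mp hdisj
    have har : a ∉ r.support := fun h => hanm (hsups ▸ Finset.mem_union_left _ h)
    have hbr : b ∉ r.support := fun h => (Finset.disjoint_left.mp hsdisj h) hbc
    have hdsr : (Equiv.swap a b).Disjoint r := by
      intro x
      by_cases hx : x = a
      · right; subst hx; exact Equiv.Perm.notMem_support.mp har
      by_cases hx' : x = b
      · right; subst hx'; exact Equiv.Perm.notMem_support.mp hbr
      · left; exact Equiv.swap_apply_of_ne_of_ne hx hx'
    have hprod : Equiv.swap a b * σ = r * (Equiv.swap a b * c) :=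
      calc Equiv.swap a b * σ = Equiv.swap a b * r * c := by rw [← hσeq, ← mul_assoc]
        _ = r * Equiv.swap a b * c := by rw [hdsr.commute.eq]
        _ = r * (Equiv.swap a b * c) := mul_assoc _ _ _
    have hdisj2 : r.Disjoint (Equiv.swap a b * c) := by
      rw [Equiv.Perm.disjoint_iff_disjoint_support, hms, Finset.disjoint_insert_right]
      exact ⟨har, hsdisj⟩
    have hct2 : (Equiv.swap a b * σ).cycleType
        = r.cycleType + (Equiv.swap a b * c).cycleType := by
      rw [hprod]; exact hdisj2.cycleType_mul
    have hctσ : σ.cycleType = r.cycleType + c.cycleType := by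
      rw [← hσeq]; exact hdisj.cycleType_mul
    have hsupp2 : (Equiv.swap a b * σ).support = insert a σ.support := by
      rw [hprod, hdisj2.support_mul, hms, hsups, Finset.union_insert]
    have hcard2 : (Equiv.swap a b * σ).support.card = σ.support.card + 1 := by
      rw [hsupp2, Finset.card_insert_of_notMem hanm]
    have hle : (Equiv.swap a b * σ).support.card ≤ Fintype.card α := Finset.card_le_univ _
    unfold cyc
    rw [hct2, hmc.cycleType, hctσ, hccyc.cycleType, hcard2]
    simp only [Multiset.card_add, Multiset.coe_card, List.length_singleton, Multiset.card_singleton]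
    omega


/-- embedding Fin a into the nonzero elements of Fin (a+1) -/
def subEquiv (a : ℕ) : Fin a ≃ {x : Fin (a + 1) // x ≠ 0} where
  toFun i := ⟨i.succ, Fin.succ_ne_zero i⟩
  invFun x := (x : Fin (a + 1)).pred x.2
  left_inv i := by simp
  right_inv x := by simp

lemma decomposeFin_zero {a : ℕ} (e : Perm (Fin a)) :
    Equiv.Perm.decomposeFin.symm (0, e) = e.extendDomain (subEquiv a) := by
  ext x
  refine Fin.cases ?_ ?_ x
  · rw [Equiv.Perm.decomposeFin_symm_apply_zero,
      Equiv.Perm.extendDomain_apply_not_subtype]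
    simp
  · intro i
    rw [Equiv.Perm.decomposeFin_symm_apply_succ]
    have : (i.succ : Fin (a + 1)) = ((subEquiv a i : {x : Fin (a+1) // x ≠ 0}) : Fin (a + 1)) := rfl
    rw [this, Equiv.Perm.extendDomain_apply_image]
    simp [subEquiv]

lemma cyc_decomposeFin_zero {a : ℕ} (e : Perm (Fin a)) :
    cyc (Equiv.Perm.decomposeFin.symm (0, e)) = cyc e + 1 := by
  rw [decomposeFin_zero]
  have h1 : (e.extendDomain (subEquiv a)).cycleType = e.cycleType :=
    Equiv.Perm.cycleType_extendDomain _
  have h2 : (e.extendDomain (subEquiv a)).support.card = e.support.card :=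
    Equiv.Perm.card_support_extend_domain _
  have h3 : e.support.card ≤ Fintype.card (Fin a) := Finset.card_le_univ _
  unfold cyc
  rw [h1, h2]
  simp only [Fintype.card_fin] at *
  omega

lemma decomposeFin_swap {a : ℕ} (x : Fin (a + 1)) (e : Perm (Fin a)) :
    Equiv.Perm.decomposeFin.symm (x, e)
      = Equiv.swap 0 x * Equiv.Perm.decomposeFin.symm (0, e) := by
  ext y
  refine Fin.cases ?_ ?_ y
  · simp [Equiv.Perm.decomposeFin_symm_apply_zero]
  · intro i
    simp [Equiv.Perm.decomposeFin_symm_apply_succ]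

lemma cyc_decomposeFin {a : ℕ} (x : Fin (a + 1)) (e : Perm (Fin a)) :
    cyc (Equiv.Perm.decomposeFin.symm (x, e)) = cyc e + (if x = 0 then 1 else 0) := by
  by_cases hx : x = 0
  · rw [hx, cyc_decomposeFin_zero]; simp
  · rw [decomposeFin_swap]
    have hfix : (Equiv.Perm.decomposeFin.symm (0, e)) 0 = 0 :=
      Equiv.Perm.decomposeFin_symm_apply_zero 0 e
    have := cyc_swap_mul (Equiv.Perm.decomposeFin.symm (0, e)) 0 x hfix hx
    rw [cyc_decomposeFin_zero] at this
    rw [if_neg hx]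
    omega

lemma stirling1_eq_card (a b : ℕ) :
    stirling1 a b = Nat.card {σ : Equiv.Perm (Fin a) // cyc σ = b} := by
  apply Nat.card_congr
  exact Equiv.subtypeEquivRight (fun σ => by simp [cyc])

lemma stirling1_zero (b : ℕ) : stirling1 0 b = if b = 0 then 1 else 0 := by
  rw [stirling1_eq_card]
  rcases b with _ | b
  · simp only [if_pos rfl]
    have : ∀ σ : Equiv.Perm (Fin 0), cyc σ = 0 := by
      intro σ
      have : σ = 1 := Subsingleton.elim _ _
      rw [this, cyc_one]; simp
    haveI : Unique {σ : Equiv.Perm (Fin 0) // cyc σ = 0} :=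
      { default := ⟨1, this 1⟩, uniq := fun x => Subtype.ext (Subsingleton.elim _ _) }
    exact Nat.card_unique
  · simp only [Nat.succ_ne_zero, if_false]
    have : IsEmpty {σ : Equiv.Perm (Fin 0) // cyc σ = b + 1} := by
      constructor
      rintro ⟨σ, hσ⟩
      have : σ = 1 := Subsingleton.elim _ _
      rw [this, cyc_one] at hσ
      simp at hσ
    exact Nat.card_of_isEmpty

lemma stirling1_succ_zero (a : ℕ) : stirling1 (a + 1) 0 = 0 := by
  rw [stirling1_eq_card]
  have : IsEmpty {σ : Equiv.Perm (Fin (a + 1)) // cyc σ = 0} := by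
    constructor
    rintro ⟨σ, hσ⟩
    exact cyc_ne_zero σ (by simp) hσ
  exact Nat.card_of_isEmpty

lemma card_sigma' {A : Type*} [Fintype A] (f : A → Type*) [∀ a, Fintype (f a)] :
    Nat.card (Σ a, f a) = ∑ a, Nat.card (f a) := by
  simp [Nat.card_eq_fintype_card, Fintype.card_sigma]

lemma stirling1_succ (a b : ℕ) :
    stirling1 (a + 1) (b + 1) = stirling1 a b + a * stirling1 a (b + 1) := by
  classical
  rw [stirling1_eq_card]
  have e1 : {σ : Equiv.Perm (Fin (a+1)) // cyc σ = b + 1}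
      ≃ {p : Fin (a+1) × Equiv.Perm (Fin a) // cyc (Equiv.Perm.decomposeFin.symm p) = b + 1} :=
    (Equiv.subtypeEquiv Equiv.Perm.decomposeFin.symm (fun p => Iff.rfl)).symm
  have e2 : {p : Fin (a+1) × Equiv.Perm (Fin a) // cyc (Equiv.Perm.decomposeFin.symm p) = b + 1}
      ≃ Σ x : Fin (a+1), {e : Equiv.Perm (Fin a) //
          cyc (Equiv.Perm.decomposeFin.symm (x, e)) = b + 1} :=
    Equiv.subtypeProdEquivSigmaSubtype
      (fun x e => cyc (Equiv.Perm.decomposeFin.symm (x, e)) = b + 1)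
  rw [Nat.card_congr (e1.trans e2), card_sigma', Fin.sum_univ_succ]
  have h0 : Nat.card {e : Equiv.Perm (Fin a) //
      cyc (Equiv.Perm.decomposeFin.symm ((0 : Fin (a+1)), e)) = b + 1} = stirling1 a b := by
    rw [stirling1_eq_card]
    apply Nat.card_congr
    exact Equiv.subtypeEquivRight (fun e => by rw [cyc_decomposeFin]; simp)
  have hs : ∀ i : Fin a, Nat.card {e : Equiv.Perm (Fin a) //
      cyc (Equiv.Perm.decomposeFin.symm ((i.succ : Fin (a+1)), e)) = b + 1}
        = stirling1 a (b + 1) := by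
    intro i
    rw [stirling1_eq_card]
    apply Nat.card_congr
    exact Equiv.subtypeEquivRight (fun e => by
      rw [cyc_decomposeFin, if_neg (Fin.succ_ne_zero i), Nat.add_zero])
  simp only [Nat.card_eq_fintype_card] at *
  rw [h0]
  have : ∀ i : Fin a, Fintype.card {e : Equiv.Perm (Fin a) //
      cyc (Equiv.Perm.decomposeFin.symm ((i.succ : Fin (a+1)), e)) = b + 1}
        = stirling1 a (b+1) := fun i => hs i
  rw [Finset.sum_congr rfl (fun i _ => this i), Finset.sum_const, Finset.card_univ,
    Fintype.card_fin, smul_eq_mul]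

def St : ℕ → ℕ → ℕ
  | 0, 0 => 1
  | 0, _ + 1 => 0
  | _ + 1, 0 => 0
  | a + 1, b + 1 => St a b + a * St a (b + 1)

lemma stirling1_eq_St (a b : ℕ) : stirling1 a b = St a b := by
  induction a generalizing b with
  | zero =>
    rcases b with _ | b
    · rw [stirling1_zero]; rfl
    · rw [stirling1_zero]; rfl
  | succ a ih =>
    rcases b with _ | b
    · rw [stirling1_succ_zero]; rfl
    · rw [stirling1_succ, ih, ih]; rfl

lemma St_eq_zero_of_lt {a b : ℕ} (h : a < b) : St a b = 0 := by
  induction a generalizing b with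
  | zero =>
    rcases b with _ | b
    · exact absurd h (by omega)
    · rfl
  | succ a ih =>
    rcases b with _ | b
    · omega
    · show St a b + a * St a (b + 1) = 0
      rw [ih (by omega), ih (by omega)]
      simp

lemma St_succ_zero (a : ℕ) : St (a + 1) 0 = 0 := rfl

lemma St_zero_of_pos {a : ℕ} (h : 1 ≤ a) : St a 0 = 0 := by
  rcases a with _ | a
  · omega
  · rfl



lemma St_mul_self_zero (a : ℕ) : a * St a 0 = 0 := by
  rcases a with _ | a
  · rfl
  · show (a+1) * St (a+1) 0 = 0; rw [show St (a+1) 0 = 0 from rfl, mul_zero]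

lemma rising_poly (a : ℕ) :
    ∏ i ∈ Finset.range a, ((X : Polynomial ℤ) + C (i : ℤ))
      = ∑ b ∈ Finset.range (a + 1), C ((St a b : ℕ) : ℤ) * X ^ b := by
  induction a with
  | zero => simp [St]
  | succ a ih =>
    rw [Finset.prod_range_succ, ih, mul_add, Finset.sum_mul, Finset.sum_mul]
    have h1 : ∑ b ∈ Finset.range (a + 1), C ((St a b : ℕ) : ℤ) * X ^ b * C ((a : ℕ) : ℤ)
        = ∑ b ∈ Finset.range (a + 1), C ((a * St a (b + 1) : ℕ) : ℤ) * X ^ (b + 1) := by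
      have e1 : ∀ b, C ((St a b : ℕ) : ℤ) * X ^ b * C ((a : ℕ) : ℤ)
          = C ((a * St a b : ℕ) : ℤ) * X ^ b := by
        intro b; simp only [Nat.cast_mul, C_mul]; ring
      rw [Finset.sum_congr rfl (fun b _ => e1 b)]
      rw [Finset.sum_range_succ' (fun b => C ((a * St a b : ℕ) : ℤ) * X ^ b) a]
      rw [Finset.sum_range_succ (fun b => C ((a * St a (b + 1) : ℕ) : ℤ) * X ^ (b + 1)) a]
      rw [St_mul_self_zero, St_eq_zero_of_lt (Nat.lt_succ_self a), mul_zero]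
      simp
    have h2 : ∑ b ∈ Finset.range (a + 1), C ((St a b : ℕ) : ℤ) * X ^ b * X
        = ∑ b ∈ Finset.range (a + 1), C ((St a b : ℕ) : ℤ) * X ^ (b + 1) := by
      apply Finset.sum_congr rfl; intro b _; rw [mul_assoc, ← pow_succ]
    rw [h1, h2, ← Finset.sum_add_distrib]
    rw [Finset.sum_range_succ' (fun b => C ((St (a+1) b : ℕ) : ℤ) * X ^ b) (a + 1)]
    rw [show St (a + 1) 0 = 0 from rfl]
    have e2 : ∀ b, C ((St a b : ℕ) : ℤ) * X ^ (b+1) + C ((a * St a (b + 1) : ℕ) : ℤ) * X ^ (b + 1)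
        = C ((St (a+1) (b+1) : ℕ) : ℤ) * X ^ (b+1) := by
      intro b
      rw [show St (a+1) (b+1) = St a b + a * St a (b+1) from rfl]
      simp only [Nat.cast_add, Nat.cast_mul, C_add, C_mul]; ring
    rw [Finset.sum_congr rfl (fun b _ => e2 b)]
    simp

lemma falling_poly (a : ℕ) :
    ∏ i ∈ Finset.range a, ((X : Polynomial ℤ) - C (i : ℤ))
      = ∑ b ∈ Finset.range (a + 1), C ((-1 : ℤ) ^ (a + b) * ((St a b : ℕ) : ℤ)) * X ^ b := by
  induction a with
  | zero => simp [St]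
  | succ a ih =>
    rw [Finset.prod_range_succ, ih, mul_sub, Finset.sum_mul, Finset.sum_mul]
    have h1 : ∑ b ∈ Finset.range (a + 1),
          C ((-1:ℤ) ^ (a + b) * ((St a b : ℕ) : ℤ)) * X ^ b * C ((a : ℕ) : ℤ)
        = ∑ b ∈ Finset.range (a + 1),
          C ((-1:ℤ) ^ (a + b + 1) * ((a * St a (b+1) : ℕ) : ℤ)) * X ^ (b + 1) := by
      have e1 : ∀ b, C ((-1:ℤ) ^ (a + b) * ((St a b : ℕ) : ℤ)) * X ^ b * C ((a : ℕ) : ℤ)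
          = C ((-1:ℤ) ^ (a + b) * ((a * St a b : ℕ) : ℤ)) * X ^ b := by
        intro b; simp only [Nat.cast_mul, C_mul]; ring
      rw [Finset.sum_congr rfl (fun b _ => e1 b)]
      rw [Finset.sum_range_succ'
        (fun b => C ((-1:ℤ) ^ (a + b) * ((a * St a b : ℕ) : ℤ)) * X ^ b) a]
      rw [Finset.sum_range_succ
        (fun b => C ((-1:ℤ) ^ (a + b + 1) * ((a * St a (b+1) : ℕ) : ℤ)) * X ^ (b + 1)) a]
      rw [St_mul_self_zero, St_eq_zero_of_lt (Nat.lt_succ_self a)]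
      simp only [Nat.cast_zero, mul_zero, zero_mul, C_0, map_zero, Nat.cast_ofNat,
        MulZeroClass.mul_zero, MulZeroClass.zero_mul, add_zero, pow_zero]
      simp only [Nat.cast_mul, C_mul, mul_zero, add_zero, zero_add]
      refine Finset.sum_congr rfl fun x _ => by rw [← add_assoc]
    have h2 : ∑ b ∈ Finset.range (a + 1),
          C ((-1:ℤ) ^ (a + b) * ((St a b : ℕ) : ℤ)) * X ^ b * X
        = ∑ b ∈ Finset.range (a + 1),
          C ((-1:ℤ) ^ (a + b) * ((St a b : ℕ) : ℤ)) * X ^ (b + 1) := by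
      apply Finset.sum_congr rfl; intro b _; rw [mul_assoc, ← pow_succ]
    rw [h1, h2, ← Finset.sum_sub_distrib]
    rw [Finset.sum_range_succ'
      (fun b => C ((-1:ℤ) ^ (a + 1 + b) * ((St (a+1) b : ℕ) : ℤ)) * X ^ b) (a + 1)]
    rw [show St (a + 1) 0 = 0 from rfl]
    have e2 : ∀ b, C ((-1:ℤ)^(a+b) * ((St a b : ℕ) : ℤ)) * X ^ (b+1)
          - C ((-1:ℤ)^(a+b+1) * ((a * St a (b+1) : ℕ) : ℤ)) * X ^ (b+1)
        = C ((-1:ℤ)^(a+1+(b+1)) * ((St (a+1) (b+1) : ℕ) : ℤ)) * X ^ (b+1) := by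
      intro b
      rw [show St (a+1) (b+1) = St a b + a * St a (b+1) from rfl]
      have h5 : (-1:ℤ)^(a+1+(b+1)) = (-1:ℤ)^(a+b) := by
        rw [show a+1+(b+1) = (a+b)+2 by omega, pow_add]; norm_num
      have hneg : C ((-1:ℤ)^(a+b+1) * ((a * St a (b+1) : ℕ):ℤ))
          = - C ((-1:ℤ)^(a+b) * ((a * St a (b+1) : ℕ):ℤ)) := by
        rw [pow_succ, show ((-1:ℤ)^(a+b) * -1) * ((a * St a (b+1) : ℕ):ℤ)
          = -((-1:ℤ)^(a+b) * ((a * St a (b+1) : ℕ):ℤ)) by ring]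
        exact map_neg C _
      rw [hneg, h5]
      simp only [Nat.cast_add, Nat.cast_mul, C_add, C_mul]; ring
    rw [Finset.sum_congr rfl (fun b _ => e2 b)]
    simp

lemma coeff_sum_CX (c : ℕ → ℤ) (N k : ℕ) :
    (∑ b ∈ Finset.range N, C (c b) * X ^ b).coeff k = if k < N then c k else 0 := by
  rw [Polynomial.finset_sum_coeff]
  simp only [Polynomial.coeff_C_mul, Polynomial.coeff_X_pow, mul_ite, mul_one, mul_zero]
  rw [Finset.sum_ite_eq (Finset.range N) k c]
  simp

end AuxStirling

/-- the `(n-1-m)`-th elementary symmetric function of the integers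
`1-j, 2-j, …, n-1-j` expressed via unsigned Stirling numbers of the first kind. -/
theorem stmt_13 (n m j : ℕ) (hn : 1 ≤ n) (hm : m ≤ n - 1) (hj : j ≤ n - 1) :
    ∑ s ∈ (Finset.Icc ((1 : ℤ) - (j : ℤ)) ((n : ℤ) - 1 - (j : ℤ))).powersetCard (n - 1 - m),
        ∏ x ∈ s, x
      = ∑ i ∈ Finset.range (n - m),
          (-1 : ℤ) ^ i * stirlingZ (j : ℤ) ((j : ℤ) - (i : ℤ)) *
            stirlingZ ((n : ℤ) - (j : ℤ)) ((m : ℤ) + 1 + (i : ℤ) - (j : ℤ)) := by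
  classical
  have hj1 : j + 1 ≤ n := by omega
  have hm1 : m + 1 ≤ n := by omega
  have hcard : (Finset.Icc ((1:ℤ) - (j:ℤ)) ((n:ℤ) - 1 - (j:ℤ))).card = n - 1 := by
    rw [Int.card_Icc]
    have h2 : (n:ℤ) - 1 - (j:ℤ) + 1 - (1 - (j:ℤ)) = ((n - 1 : ℕ) : ℤ) := by push_cast; omega
    rw [h2, Int.toNat_natCast]
  have hstep1 : (∑ s ∈ (Finset.Icc ((1:ℤ) - (j:ℤ)) ((n:ℤ) - 1 - (j:ℤ))).powersetCard (n - 1 - m),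
        ∏ x ∈ s, x)
      = (∏ x ∈ Finset.Icc ((1:ℤ) - (j:ℤ)) ((n:ℤ) - 1 - (j:ℤ)), (X + C x)).coeff m := by
    rw [Finset.prod_X_add_C_coeff _ (fun x => x) (le_trans (by omega) hcard.ge)]
    rw [hcard]
  set F : Polynomial ℤ := ∏ l ∈ Finset.range j, (X - C (l:ℤ)) with hF
  set R : Polynomial ℤ := ∏ x ∈ Finset.Ioc (0:ℤ) ((n:ℤ) - 1 - (j:ℤ)), (X + C x) with hR
  have hsplit : ∏ x ∈ Finset.Icc ((1:ℤ) - (j:ℤ)) ((n:ℤ) - 1 - (j:ℤ)), (X + C x) = F * R := by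
    have hunion : Finset.Icc ((1:ℤ) - (j:ℤ)) ((n:ℤ) - 1 - (j:ℤ))
        = Finset.Icc ((1:ℤ) - (j:ℤ)) 0 ∪ Finset.Ioc (0:ℤ) ((n:ℤ) - 1 - (j:ℤ)) := by
      ext x
      simp only [Finset.mem_Icc, Finset.mem_union, Finset.mem_Ioc]
      omega
    have hdisj : Disjoint (Finset.Icc ((1:ℤ) - (j:ℤ)) 0)
        (Finset.Ioc (0:ℤ) ((n:ℤ) - 1 - (j:ℤ))) := by
      rw [Finset.disjoint_left]
      intro x hx hx'
      simp only [Finset.mem_Icc] at hx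
      simp only [Finset.mem_Ioc] at hx'
      omega
    rw [hunion, Finset.prod_union hdisj]
    congr 1
    refine Finset.prod_nbij' (fun x => (-x).toNat) (fun l => -(l:ℤ)) ?_ ?_ ?_ ?_ ?_
    · intro x hx
      simp only [Finset.mem_Icc] at hx
      simp only [Finset.mem_range]
      omega
    · intro l hl
      simp only [Finset.mem_range] at hl
      simp only [Finset.mem_Icc]
      omega
    · intro x hx
      simp only [Finset.mem_Icc] at hx
      show -(((-x).toNat : ℕ) : ℤ) = x
      omega
    · intro l hl
      simp only [Finset.mem_range] at hl
      show (-(-(l:ℤ))).toNat = l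
      omega
    · intro x hx
      simp only [Finset.mem_Icc] at hx
      show X + C x = X - C (((-x).toNat : ℕ) : ℤ)
      have hx' : ((((-x).toNat : ℕ)) : ℤ) = -x := by omega
      rw [hx']
      rw [map_neg, sub_neg_eq_add]
  have hFc : ∀ u, F.coeff u = (-1:ℤ)^(j+u) * ((St j u : ℕ) : ℤ) := by
    intro u
    rw [hF, falling_poly, coeff_sum_CX]
    by_cases h : u < j + 1
    · rw [if_pos h]
    · rw [if_neg h, St_eq_zero_of_lt (by omega)]
      simp
  have hRc : ∀ v, R.coeff v = ((St (n-j) (v+1) : ℕ) : ℤ) := by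
    have hXR : X * R = ∏ x ∈ Finset.Icc (0:ℤ) ((n:ℤ) - 1 - (j:ℤ)), (X + C x) := by
      have hins : Finset.Icc (0:ℤ) ((n:ℤ) - 1 - (j:ℤ))
          = insert (0:ℤ) (Finset.Ioc (0:ℤ) ((n:ℤ) - 1 - (j:ℤ))) := by
        ext x
        simp only [Finset.mem_Icc, Finset.mem_insert, Finset.mem_Ioc]
        omega
      rw [hins, Finset.prod_insert (by simp), hR]
      simp
    have hcast : ∏ x ∈ Finset.Icc (0:ℤ) ((n:ℤ) - 1 - (j:ℤ)), (X + C x)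
        = ∏ l ∈ Finset.range (n - j), (X + C (l:ℤ)) := by
      refine Finset.prod_nbij' (fun x => x.toNat) (fun l => (l:ℤ)) ?_ ?_ ?_ ?_ ?_
      · intro x hx
        simp only [Finset.mem_Icc] at hx
        simp only [Finset.mem_range]
        omega
      · intro l hl
        simp only [Finset.mem_range] at hl
        simp only [Finset.mem_Icc]
        omega
      · intro x hx
        simp only [Finset.mem_Icc] at hx
        show ((x.toNat : ℕ) : ℤ) = x
        omega
      · intro l hl
        simp only [Finset.mem_range] at hl
        show ((l:ℤ)).toNat = l
        omega
      · intro x hx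
        simp only [Finset.mem_Icc] at hx
        show X + C x = X + C ((x.toNat : ℕ) : ℤ)
        have hx' : ((x.toNat : ℕ) : ℤ) = x := by omega
        rw [hx']
    intro v
    have hv := congrArg (fun p => Polynomial.coeff p (v+1)) hXR
    simp only [Polynomial.coeff_X_mul] at hv
    rw [hv, hcast, rising_poly, coeff_sum_CX]
    by_cases h : v + 1 < (n - j) + 1
    · rw [if_pos h]
    · rw [if_neg h, St_eq_zero_of_lt (by omega)]
      simp
  set g : ℕ → ℤ := fun u =>
    (-1:ℤ)^(j+u) * ((St j u : ℕ) : ℤ) * ((St (n-j) (m+1-u) : ℕ) : ℤ) with hg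
  have hmul : (F * R).coeff m = ∑ u ∈ Finset.range (m+1), g u := by
    rw [Polynomial.coeff_mul, Finset.Nat.sum_antidiagonal_eq_sum_range_succ_mk]
    refine Finset.sum_congr rfl (fun u hu => ?_)
    simp only [Finset.mem_range] at hu
    rw [hFc, hRc, hg]
    have : m - u + 1 = m + 1 - u := by omega
    rw [this]
  have hnj1 : 1 ≤ n - j := by omega
  have hg_van_m : ∀ u, m < u → g u = 0 := by
    intro u hu
    simp only [hg]
    rw [show m + 1 - u = 0 by omega, St_zero_of_pos hnj1]
    simp
  have hg_van_j : ∀ u, j < u → g u = 0 := by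
    intro u hu
    simp only [hg]
    rw [St_eq_zero_of_lt hu]
    simp
  have hsum1 : ∑ u ∈ Finset.range (m+1), g u = ∑ u ∈ Finset.range (j+1), g u := by
    have e1 : ∑ u ∈ Finset.range (m+1), g u = ∑ u ∈ Finset.range (m+j+1), g u := by
      refine Finset.sum_subset ?_ ?_
      · intro x hx; simp only [Finset.mem_range] at *; omega
      · intro x _ hnx
        simp only [Finset.mem_range] at hnx
        exact hg_van_m x (by omega)
    have e2 : ∑ u ∈ Finset.range (j+1), g u = ∑ u ∈ Finset.range (m+j+1), g u := by
      refine Finset.sum_subset ?_ ?_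
      · intro x hx; simp only [Finset.mem_range] at *; omega
      · intro x _ hnx
        simp only [Finset.mem_range] at hnx
        exact hg_van_j x (by omega)
    rw [e1, e2]
  have hreflect : ∑ u ∈ Finset.range (j+1), g u = ∑ i ∈ Finset.range (j+1), g (j - i) := by
    rw [← Finset.sum_range_reflect g (j+1)]
    refine Finset.sum_congr rfl (fun i _ => ?_)
    rw [Nat.add_sub_cancel]
  set h : ℕ → ℤ := fun i => (-1:ℤ)^i * stirlingZ (j:ℤ) ((j:ℤ) - (i:ℤ))
    * stirlingZ ((n:ℤ) - (j:ℤ)) ((m:ℤ) + 1 + (i:ℤ) - (j:ℤ)) with hh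
  have hgh : ∀ i ∈ Finset.range (j+1), g (j - i) = h i := by
    intro i hi
    simp only [Finset.mem_range] at hi
    have hij : i ≤ j := by omega
    simp only [hg, hh, stirlingZ]
    have hsign : (-1:ℤ)^(j+(j-i)) = (-1:ℤ)^i := by
      rw [show j + (j - i) = i + 2*(j-i) by omega, pow_add, pow_mul]
      norm_num
    rw [hsign]
    have hc1 : (0:ℤ) ≤ (j:ℤ) ∧ (0:ℤ) ≤ (j:ℤ) - (i:ℤ) := ⟨by positivity, by omega⟩
    rw [if_pos hc1]
    have ht1 : ((j:ℤ)).toNat = j := by omega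
    have ht2 : ((j:ℤ) - (i:ℤ)).toNat = j - i := by omega
    rw [ht1, ht2, stirling1_eq_St]
    by_cases hc2 : (0:ℤ) ≤ (m:ℤ) + 1 + (i:ℤ) - (j:ℤ)
    · rw [if_pos ⟨by omega, hc2⟩]
      have ht3 : ((n:ℤ) - (j:ℤ)).toNat = n - j := by omega
      have ht4 : ((m:ℤ) + 1 + (i:ℤ) - (j:ℤ)).toNat = m + 1 - (j - i) := by omega
      rw [ht3, ht4, stirling1_eq_St]
    · rw [if_neg (by tauto)]
      rw [show m + 1 - (j - i) = 0 by omega, St_zero_of_pos hnj1]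
      simp
  have hh_van_j : ∀ i, j < i → h i = 0 := by
    intro i hi
    simp only [hh, stirlingZ]
    rw [if_neg (by push_cast; omega)]
    simp
  have hh_van_nm : ∀ i, n - m ≤ i → h i = 0 := by
    intro i hi
    have hz : stirlingZ ((n:ℤ) - (j:ℤ)) ((m:ℤ) + 1 + (i:ℤ) - (j:ℤ)) = 0 := by
      rw [stirlingZ]
      by_cases hc2 : (0:ℤ) ≤ (m:ℤ) + 1 + (i:ℤ) - (j:ℤ)
      · rw [if_pos ⟨by omega, hc2⟩]
        have ht3 : ((n:ℤ) - (j:ℤ)).toNat = n - j := by omega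
        have ht4 : n - j < ((m:ℤ) + 1 + (i:ℤ) - (j:ℤ)).toNat := by omega
        rw [ht3, stirling1_eq_St, St_eq_zero_of_lt ht4]
        simp
      · rw [if_neg (fun hcc => hc2 hcc.2)]
    simp only [hh, hz, mul_zero]
  have hsum2 : ∑ i ∈ Finset.range (j+1), h i = ∑ i ∈ Finset.range (n-m), h i := by
    have e1 : ∑ i ∈ Finset.range (j+1), h i = ∑ i ∈ Finset.range (n+j+1), h i := by
      refine Finset.sum_subset ?_ ?_
      · intro x hx; simp only [Finset.mem_range] at *; omega
      · intro x _ hnx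
        simp only [Finset.mem_range] at hnx
        exact hh_van_j x (by omega)
    have e2 : ∑ i ∈ Finset.range (n-m), h i = ∑ i ∈ Finset.range (n+j+1), h i := by
      refine Finset.sum_subset ?_ ?_
      · intro x hx; simp only [Finset.mem_range] at *; omega
      · intro x _ hnx
        simp only [Finset.mem_range] at hnx
        exact hh_van_nm x (by omega)
    rw [e1, e2]
  calc (∑ s ∈ (Finset.Icc ((1:ℤ) - (j:ℤ)) ((n:ℤ) - 1 - (j:ℤ))).powersetCard (n - 1 - m),
        ∏ x ∈ s, x)
      = (F * R).coeff m := by rw [hstep1, hsplit]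
    _ = ∑ u ∈ Finset.range (m+1), g u := hmul
    _ = ∑ i ∈ Finset.range (j+1), g (j - i) := by rw [hsum1, hreflect]
    _ = ∑ i ∈ Finset.range (j+1), h i := Finset.sum_congr rfl hgh
    _ = ∑ i ∈ Finset.range (n-m), h i := hsum2
end
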